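/- arXiv:1411.3618 — 7 statements merged into one kernel-verified Lean document; each statement's English description precedes it below -/
import Mathlib

section
/- Suppose φ satisfies the Kolmogorov forward equation (KFE) on Ω for all t > 0, together with the diagonal boundary condition (DBC) and the corner condition φ(S₀,S₀,t) = 0. Then for all 0 < K < B with B > S₀ and all T > 0, the up-and-out call price C satisfies the forward equation ∂²C/∂B∂T (K,B,T) + (r(T) − q(T)) K ∂²C/∂K∂B (K,B,T) = ½ σ²(K,B,T) K² ∂³C/∂K²∂B (K,B,T) − q(T) ∂C/∂B (K,B,T) − ½ d/dB [ (B − K) B² σ²(B,B,T) (∂³C/∂K²∂B)(K,B,T)|_{K=B} ]. -/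
open MeasureTheory Real Filter

/-- Discount factor `D(T) = exp(-∫₀ᵀ r(u) du)`. -/
noncomputable def disc (r : ℝ → ℝ) (T : ℝ) : ℝ := Real.exp (-(∫ u in (0:ℝ)..T, r u))

/-- Up-and-out call price
`C(K,B,T) = D(T) ∫_{max(K,S₀)}^B ∫_K^y (x-K) φ(x,y,T) dx dy`. -/
noncomputable def upOutCall (S₀ : ℝ) (r : ℝ → ℝ) (φ : ℝ → ℝ → ℝ → ℝ) (K B T : ℝ) : ℝ :=
  disc r T * ∫ y in (max K S₀)..B, ∫ x in K..y, (x - K) * φ x y T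

section
open intervalIntegral Set Metric Topology

namespace BarrierAux

/-- FTC wrapper: derivative in the upper limit, continuous integrand. -/
lemma ftc_right {f : ℝ → ℝ} (hf : Continuous f) (a b : ℝ) :
    HasDerivAt (fun u => ∫ x in a..u, f x) (f b) b :=
  intervalIntegral.integral_hasDerivAt_right (hf.intervalIntegrable _ _)
    hf.stronglyMeasurable.stronglyMeasurableAtFilter hf.continuousAt

/-- FTC wrapper: derivative in the lower limit, continuous integrand. -/
lemma ftc_left {f : ℝ → ℝ} (hf : Continuous f) (a b : ℝ) :
    HasDerivAt (fun u => ∫ x in u..b, f x) (-f a) a :=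
  intervalIntegral.integral_hasDerivAt_left (hf.intervalIntegrable _ _)
    hf.stronglyMeasurable.stronglyMeasurableAtFilter hf.continuousAt

/-- Differentiation under the interval integral sign, continuous data version.
`f u s` : `u` integration variable, `s` parameter. -/
lemma duis {f f' : ℝ → ℝ → ℝ} {a c s₀ : ℝ}
    (hf : Continuous fun p : ℝ × ℝ => f p.1 p.2)
    (hf' : Continuous fun p : ℝ × ℝ => f' p.1 p.2)
    (hd : ∀ u s, HasDerivAt (fun s' => f u s') (f' u s) s) :
    HasDerivAt (fun s => ∫ u in a..c, f u s) (∫ u in a..c, f' u s₀) s₀ := by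
  obtain ⟨M, hM⟩ : ∃ M, ∀ p ∈ (uIcc a c) ×ˢ (Icc (s₀ - 1) (s₀ + 1)),
      ‖(fun p : ℝ × ℝ => f' p.1 p.2) p‖ ≤ M :=
    (isCompact_uIcc.prod isCompact_Icc).exists_bound_of_continuousOn hf'.continuousOn
  have key := intervalIntegral.hasDerivAt_integral_of_dominated_loc_of_deriv_le
    (F := fun s u => f u s) (F' := fun s u => f' u s) (x₀ := s₀) (bound := fun _ => M)
    (a := a) (b := c) (μ := volume) (Metric.ball_mem_nhds s₀ one_pos)
    (Eventually.of_forall fun s =>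
      ((hf.comp (continuous_id.prodMk continuous_const)).aestronglyMeasurable).restrict)
    ((hf.comp (continuous_id.prodMk continuous_const)).intervalIntegrable _ _)
    ((hf'.comp (continuous_id.prodMk continuous_const)).aestronglyMeasurable).restrict
    (Eventually.of_forall fun u hu s hs => by
      refine hM (u, s) ⟨uIoc_subset_uIcc hu, ?_⟩
      have := mem_ball_iff_norm.1 hs
      constructor <;> [linarith [neg_le_of_abs_le this.le, abs_le.1 (le_of_lt this) |>.1];
        linarith [abs_le.1 (le_of_lt this) |>.2]])
    (intervalIntegrable_const)
    (Eventually.of_forall fun u _ s _ => hd u s)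
  exact key.2

end BarrierAux

namespace BarrierAux


lemma abs_sub_le_of_uIoc {B b u : ℝ} (hu : u ∈ Set.uIoc B b) : |u - B| ≤ |b - B| := by
  rcases Set.mem_uIoc.1 hu with ⟨h1, h2⟩ | ⟨h1, h2⟩
  · rw [abs_of_pos (by linarith : (0:ℝ) < u - B), abs_of_pos (by linarith : (0:ℝ) < b - B)]
    linarith
  · rw [abs_of_nonpos (by linarith : u - B ≤ (0:ℝ)), abs_of_neg (by linarith : b - B < (0:ℝ))]
    linarith

/-- Derivative of `b ↦ ∫_{x₀}^{b} m u b du` when both the limit and the parameter move. -/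
lemma movlim {m m' : ℝ → ℝ → ℝ} {x₀ B : ℝ}
    (hm : Continuous fun p : ℝ × ℝ => m p.1 p.2)
    (hm' : Continuous fun p : ℝ × ℝ => m' p.1 p.2)
    (hd : ∀ u s, HasDerivAt (fun s' => m u s') (m' u s) s) :
    HasDerivAt (fun b => ∫ u in x₀..b, m u b) (m B B + ∫ u in x₀..B, m' u B) B := by
  have hsl : ∀ b, Continuous fun u => m u b := fun b =>
    hm.comp (continuous_id.prodMk continuous_const)
  have hsplit : (fun b => ∫ u in x₀..b, m u b)
      = fun b => (∫ u in B..b, m u b) + ∫ u in x₀..B, m u b := by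
    funext b
    rw [add_comm, intervalIntegral.integral_add_adjacent_intervals
      ((hsl b).intervalIntegrable _ _) ((hsl b).intervalIntegrable _ _)]
  rw [hsplit]
  have h2 : HasDerivAt (fun b => ∫ u in x₀..B, m u b) (∫ u in x₀..B, m' u B) B :=
    duis hm hm' hd
  have h1 : HasDerivAt (fun b => ∫ u in B..b, m u b) (m B B) B := by
    rw [hasDerivAt_iff_isLittleO]
    rw [Asymptotics.isLittleO_iff]
    intro c hc
    obtain ⟨δ, hδ, hball⟩ := Metric.continuousAt_iff.1 (hm.continuousAt (x := (B, B))) c hc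
    filter_upwards [Metric.ball_mem_nhds B hδ] with b hb
    have hcb : ∀ u ∈ Set.uIoc B b, ‖m u b - m B B‖ ≤ c := by
      intro u hu
      have h1 : |u - B| ≤ |b - B| := abs_sub_le_of_uIoc hu
      have hdist : dist ((u, b) : ℝ × ℝ) (B, B) < δ := by
        rw [Prod.dist_eq]
        simp only [Real.dist_eq]
        exact max_lt (lt_of_le_of_lt h1 (by simpa [Real.dist_eq] using hb))
          (by simpa [Real.dist_eq] using hb)
      have := hball hdist
      simp only [Real.dist_eq] at this
      exact le_of_lt (by simpa [Real.norm_eq_abs] using this)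
    calc ‖(∫ u in B..b, m u b) - (∫ u in B..B, m u B) - (b - B) • m B B‖
        = ‖∫ u in B..b, (m u b - m B B)‖ := by
          rw [intervalIntegral.integral_same, sub_zero,
            intervalIntegral.integral_sub ((hsl b).intervalIntegrable _ _)
              intervalIntegrable_const, intervalIntegral.integral_const]
      _ ≤ c * |b - B| := intervalIntegral.norm_integral_le_of_norm_le_const hcb
      _ = c * ‖b - B‖ := by rw [Real.norm_eq_abs]
  exact h1.add h2

/-- Derivative of the cut-off term `k' ↦ ∫_{S₀}^{max k' S₀} F k' y dy`, for a
continuous two-variable function vanishing on the diagonal. -/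
lemma maxcut {F F' : ℝ → ℝ → ℝ} {S₀ k : ℝ}
    (hF : Continuous fun p : ℝ × ℝ => F p.1 p.2)
    (hF' : Continuous fun p : ℝ × ℝ => F' p.1 p.2)
    (hd : ∀ y k', HasDerivAt (fun k'' => F k'' y) (F' k' y) k')
    (hdiag : ∀ k', F k' k' = 0) :
    HasDerivAt (fun k' => ∫ y in S₀..max k' S₀, F k' y) (∫ y in S₀..max k S₀, F' k y) k := by
  have hsl : ∀ b, Continuous fun y => F b y := fun b =>
    hF.comp (continuous_const.prodMk continuous_id)
  rcases lt_trichotomy k S₀ with hk | hk | hk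
  · rw [max_eq_right hk.le, intervalIntegral.integral_same]
    refine (hasDerivAt_const k (0:ℝ)).congr_of_eventuallyEq ?_
    filter_upwards [Iio_mem_nhds hk] with k' hk'
    rw [max_eq_right (le_of_lt hk'), intervalIntegral.integral_same]
  · subst hk
    rw [max_self, intervalIntegral.integral_same]
    rw [hasDerivAt_iff_isLittleO, Asymptotics.isLittleO_iff]
    intro c hc
    have h0 : F k k = 0 := hdiag k
    obtain ⟨δ, hδ, hball⟩ := Metric.continuousAt_iff.1 (hF.continuousAt (x := (k, k))) c hc
    filter_upwards [Metric.ball_mem_nhds k hδ] with k' hk'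
    simp only [max_self, intervalIntegral.integral_same, sub_zero, smul_zero, sub_zero]
    rcases le_or_gt k' k with h | h
    · rw [max_eq_right h, intervalIntegral.integral_same]
      simp only [norm_zero]
      positivity
    · rw [max_eq_left h.le]
      have hcb : ∀ y ∈ Set.uIoc k k', ‖F k' y‖ ≤ c := by
        intro y hy
        have h1 : |y - k| ≤ |k' - k| := abs_sub_le_of_uIoc hy
        have hdist : dist ((k', y) : ℝ × ℝ) (k, k) < δ := by
          rw [Prod.dist_eq]
          simp only [Real.dist_eq]
          exact max_lt (by simpa [Real.dist_eq] using hk')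
            (lt_of_le_of_lt h1 (by simpa [Real.dist_eq] using hk'))
        have := hball hdist
        simp only [Real.dist_eq, h0, sub_zero] at this
        exact le_of_lt (by simpa [Real.norm_eq_abs] using this)
      calc ‖∫ y in k..k', F k' y‖ ≤ c * |k' - k| :=
            intervalIntegral.norm_integral_le_of_norm_le_const hcb
        _ = c * ‖k' - k‖ := by rw [Real.norm_eq_abs]
  · have hswap : Continuous fun p : ℝ × ℝ => F p.2 p.1 := hF.comp continuous_swap
    have hswap' : Continuous fun p : ℝ × ℝ => F' p.2 p.1 := hF'.comp continuous_swap
    have hml0 := movlim (m := fun u s => F s u) (m' := fun u s => F' s u) (x₀ := S₀) (B := k)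
      hswap hswap' (fun u s => hd u s)
    have hml : HasDerivAt (fun b => ∫ u in S₀..b, F b u) (∫ u in S₀..k, F' k u) k := by
      simpa [hdiag k] using hml0
    rw [max_eq_left hk.le]
    refine hml.congr_of_eventuallyEq ?_
    filter_upwards [Ioi_mem_nhds hk] with k' hk'
    rw [max_eq_left (le_of_lt hk')]

end BarrierAux

namespace BarrierAux

lemma hasDerivAt_slice1 {Φ : ℝ × ℝ × ℝ → ℝ} {x y t : ℝ} (h : DifferentiableAt ℝ Φ (x, y, t)) :
    HasDerivAt (fun x' => Φ (x', y, t)) (fderiv ℝ Φ (x, y, t) (1, 0, 0)) x :=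
  h.hasFDerivAt.comp_hasDerivAt x ((hasDerivAt_id x).prodMk (hasDerivAt_const x (y, t)))

lemma hasDerivAt_slice2 {Φ : ℝ × ℝ × ℝ → ℝ} {x y t : ℝ} (h : DifferentiableAt ℝ Φ (x, y, t)) :
    HasDerivAt (fun y' => Φ (x, y', t)) (fderiv ℝ Φ (x, y, t) (0, 1, 0)) y :=
  h.hasFDerivAt.comp_hasDerivAt y
    ((hasDerivAt_const y x).prodMk ((hasDerivAt_id y).prodMk (hasDerivAt_const y t)))

lemma hasDerivAt_slice3 {Φ : ℝ × ℝ × ℝ → ℝ} {x y t : ℝ} (h : DifferentiableAt ℝ Φ (x, y, t)) :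
    HasDerivAt (fun t' => Φ (x, y, t')) (fderiv ℝ Φ (x, y, t) (0, 0, 1)) t :=
  h.hasFDerivAt.comp_hasDerivAt t
    ((hasDerivAt_const t x).prodMk ((hasDerivAt_const t y).prodMk (hasDerivAt_id t)))

end BarrierAux

namespace BarrierAux

/-- First-order directional partial of a three-variable function. -/
noncomputable def pd1 (φ : ℝ → ℝ → ℝ → ℝ) (v : ℝ × ℝ × ℝ) (p : ℝ × ℝ × ℝ) : ℝ :=
  fderiv ℝ (fun p : ℝ × ℝ × ℝ => φ p.1 p.2.1 p.2.2) p v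

/-- Second-order directional partial. -/
noncomputable def pd2 (φ : ℝ → ℝ → ℝ → ℝ) (v w : ℝ × ℝ × ℝ) (p : ℝ × ℝ × ℝ) : ℝ :=
  fderiv ℝ (pd1 φ v) p w

section Reg

variable {φ : ℝ → ℝ → ℝ → ℝ}
  (hφ : ContDiff ℝ 2 fun p : ℝ × ℝ × ℝ => φ p.1 p.2.1 p.2.2)

include hφ

lemma pd1_contDiff (v : ℝ × ℝ × ℝ) : ContDiff ℝ 1 (pd1 φ v) :=
  (hφ.fderiv_right (m := 1) le_rfl).clm_apply contDiff_const

lemma pd1_cont (v : ℝ × ℝ × ℝ) : Continuous (pd1 φ v) :=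
  ((pd1_contDiff hφ v).continuous)

lemma pd2_cont (v w : ℝ × ℝ × ℝ) : Continuous (pd2 φ v w) :=
  ((pd1_contDiff hφ v).continuous_fderiv one_ne_zero).clm_apply continuous_const

lemma hd_phi_x (x y t : ℝ) : HasDerivAt (fun x' => φ x' y t) (pd1 φ (1, 0, 0) (x, y, t)) x :=
  hasDerivAt_slice1 ((hφ.differentiable (by norm_num)) _)

lemma hd_phi_y (x y t : ℝ) : HasDerivAt (fun y' => φ x y' t) (pd1 φ (0, 1, 0) (x, y, t)) y :=
  hasDerivAt_slice2 ((hφ.differentiable (by norm_num)) _)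

lemma hd_phi_t (x y t : ℝ) : HasDerivAt (fun t' => φ x y t') (pd1 φ (0, 0, 1) (x, y, t)) t :=
  hasDerivAt_slice3 ((hφ.differentiable (by norm_num)) _)

lemma hd_pd1_y (v : ℝ × ℝ × ℝ) (x y t : ℝ) :
    HasDerivAt (fun y' => pd1 φ v (x, y', t)) (pd2 φ v (0, 1, 0) (x, y, t)) y :=
  hasDerivAt_slice2 (((pd1_contDiff hφ v).differentiable one_ne_zero) _)

lemma phi_cont : Continuous fun p : ℝ × ℝ × ℝ => φ p.1 p.2.1 p.2.2 := hφ.continuous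

end Reg

/-- Continuity of a composition with a three-variable continuous function. -/
lemma comp3 {g : ℝ × ℝ × ℝ → ℝ} (hg : Continuous g) {X : Type*} [TopologicalSpace X]
    {a b c : X → ℝ} (ha : Continuous a) (hb : Continuous b) (hc : Continuous c) :
    Continuous fun x => g (a x, b x, c x) :=
  hg.comp (ha.prodMk (hb.prodMk hc))

end BarrierAux

namespace BarrierAux

noncomputable def A2 (φ : ℝ → ℝ → ℝ → ℝ) (T k y : ℝ) : ℝ := ∫ x in k..y, (x - k) * φ x y T

noncomputable def P0 (φ : ℝ → ℝ → ℝ → ℝ) (T k y : ℝ) : ℝ := ∫ x in k..y, φ x y T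

section KDeriv
set_option maxHeartbeats 1000000

variable {φ : ℝ → ℝ → ℝ → ℝ} {T : ℝ}
  (hφc : Continuous fun p : ℝ × ℝ × ℝ => φ p.1 p.2.1 p.2.2)

include hφc

lemma csl (y : ℝ) : Continuous fun x => φ x y T :=
  comp3 hφc continuous_id continuous_const continuous_const

lemma csl2 (y : ℝ) : Continuous fun x => x * φ x y T :=
  continuous_id.mul (csl hφc y)

lemma csl3 (k y : ℝ) : Continuous fun x => (x - k) * φ x y T :=
  (continuous_id.sub continuous_const).mul (csl hφc y)

lemma cP0 : Continuous fun p : ℝ × ℝ => P0 φ T p.1 p.2 := by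
  have hsplit : (fun p : ℝ × ℝ => P0 φ T p.1 p.2)
      = fun p => (∫ x in (0:ℝ)..p.2, φ x p.2 T) - ∫ x in (0:ℝ)..p.1, φ x p.2 T := by
    funext p
    exact (intervalIntegral.integral_interval_sub_left
      ((csl hφc p.2).intervalIntegrable _ _) ((csl hφc p.2).intervalIntegrable _ _)).symm
  rw [hsplit]
  have hu : Continuous (Function.uncurry fun (p : ℝ × ℝ) x => φ x p.2 T) :=
    comp3 hφc continuous_snd (continuous_fst.snd) continuous_const
  exact (intervalIntegral.continuous_parametric_intervalIntegral_of_continuous hu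
      continuous_snd).sub
    (intervalIntegral.continuous_parametric_intervalIntegral_of_continuous hu continuous_fst)

lemma cA2 : Continuous fun p : ℝ × ℝ => A2 φ T p.1 p.2 := by
  have hsplit : (fun p : ℝ × ℝ => A2 φ T p.1 p.2)
      = fun p => (∫ x in (0:ℝ)..p.2, (x - p.1) * φ x p.2 T)
          - ∫ x in (0:ℝ)..p.1, (x - p.1) * φ x p.2 T := by
    funext p
    exact (intervalIntegral.integral_interval_sub_left
      ((csl3 hφc p.1 p.2).intervalIntegrable _ _)
      ((csl3 hφc p.1 p.2).intervalIntegrable _ _)).symm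
  rw [hsplit]
  have hu : Continuous (Function.uncurry fun (p : ℝ × ℝ) x => (x - p.1) * φ x p.2 T) :=
    (continuous_snd.sub continuous_fst.fst).mul
      (comp3 hφc continuous_snd (continuous_fst.snd) continuous_const)
  exact (intervalIntegral.continuous_parametric_intervalIntegral_of_continuous hu
      continuous_snd).sub
    (intervalIntegral.continuous_parametric_intervalIntegral_of_continuous hu continuous_fst)

lemma hdA2 (y k0 : ℝ) :
    HasDerivAt (fun k' => A2 φ T k' y) (-P0 φ T k0 y) k0 := by
  have h1 : HasDerivAt (fun k' => ∫ x in k'..y, x * φ x y T) (-(k0 * φ k0 y T)) k0 :=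
    ftc_left (csl2 hφc y) k0 y
  have h0 : HasDerivAt (fun k' => ∫ x in k'..y, φ x y T) (-(φ k0 y T)) k0 :=
    ftc_left (csl hφc y) k0 y
  have h2 : HasDerivAt (fun k' => k' * ∫ x in k'..y, φ x y T)
      (1 * (∫ x in k0..y, φ x y T) + k0 * -(φ k0 y T)) k0 := (hasDerivAt_id k0).mul h0
  have h3 : HasDerivAt (fun k' => (∫ x in k'..y, x * φ x y T) - k' * ∫ x in k'..y, φ x y T) _ k0 :=
    h1.sub h2
  have hfe : (fun k' => (∫ x in k'..y, x * φ x y T) - k' * ∫ x in k'..y, φ x y T)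
      = fun k' => A2 φ T k' y := by
    funext k'
    rw [A2, ← intervalIntegral.integral_const_mul,
      ← intervalIntegral.integral_sub ((csl2 hφc y).intervalIntegrable _ _)
        ((show Continuous fun x => k' * φ x y T from continuous_const.mul (csl hφc y)).intervalIntegrable _ _)]
    exact intervalIntegral.integral_congr fun x _ => by ring
  rw [hfe] at h3
  convert h3 using 1
  rw [P0]
  ring

lemma hdP0 (y k0 : ℝ) : HasDerivAt (fun k' => P0 φ T k' y) (-(φ k0 y T)) k0 :=
  ftc_left (csl hφc y) k0 y

/-- First `K`-derivative of the up-and-out call. -/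
lemma derivK (S₀ : ℝ) (r : ℝ → ℝ) (k B' : ℝ) :
    HasDerivAt (fun k' => upOutCall S₀ r φ k' B' T)
      (-(disc r T) * ∫ y in (max k S₀)..B', P0 φ T k y) k := by
  have hyA2 : ∀ k', Continuous fun y => A2 φ T k' y := fun k' => by
    simpa [Function.comp_def] using (cA2 hφc).comp (Continuous.prodMk_right (Y := ℝ) k')
  have cA2s : Continuous fun p : ℝ × ℝ => A2 φ T p.2 p.1 := by
    simpa [Function.comp_def] using (cA2 hφc).comp (continuous_swap (X := ℝ) (Y := ℝ))
  have cP0s : Continuous fun p : ℝ × ℝ => P0 φ T p.2 p.1 := by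
    simpa [Function.comp_def] using (cP0 hφc).comp (continuous_swap (X := ℝ) (Y := ℝ))
  have cP0y : Continuous fun y => P0 φ T k y := by
    simpa [Function.comp_def] using (cP0 hφc).comp (Continuous.prodMk_right (Y := ℝ) k)
  have hval : (fun k' => upOutCall S₀ r φ k' B' T)
      = fun k' => disc r T * ((∫ y in S₀..B', A2 φ T k' y)
          - ∫ y in S₀..max k' S₀, A2 φ T k' y) := by
    funext k'
    rw [upOutCall, intervalIntegral.integral_interval_sub_left
      ((hyA2 k').intervalIntegrable _ _) ((hyA2 k').intervalIntegrable _ _)]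
    rfl
  rw [hval]
  have part1 : HasDerivAt (fun k' => ∫ y in S₀..B', A2 φ T k' y)
      (∫ y in S₀..B', -P0 φ T k y) k :=
    duis cA2s cP0s.neg (fun u s => hdA2 hφc u s)
  have part2 : HasDerivAt (fun k' => ∫ y in S₀..max k' S₀, A2 φ T k' y)
      (∫ y in S₀..max k S₀, -P0 φ T k y) k :=
    maxcut (cA2 hφc) (cP0 hφc).neg (fun y k' => hdA2 hφc y k')
      (fun k' => intervalIntegral.integral_same)
  have h3 := (part1.sub part2).const_mul (disc r T)
  refine h3.congr_deriv (Eq.symm ?_)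
  rw [intervalIntegral.integral_neg, intervalIntegral.integral_neg,
    ← intervalIntegral.integral_interval_sub_left
      (cP0y.intervalIntegrable _ _) (cP0y.intervalIntegrable _ _)]
  ring

/-- Second `K`-derivative of the up-and-out call (as derivative of the first). -/
lemma derivKK (S₀ : ℝ) (r : ℝ → ℝ) (k B' : ℝ) :
    HasDerivAt (fun k' => -(disc r T) * ∫ y in (max k' S₀)..B', P0 φ T k' y)
      (disc r T * ∫ y in (max k S₀)..B', φ k y T) k := by
  have hyP0 : ∀ k', Continuous fun y => P0 φ T k' y := fun k' => by
    simpa [Function.comp_def] using (cP0 hφc).comp (Continuous.prodMk_right (Y := ℝ) k')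
  have cP0s : Continuous fun p : ℝ × ℝ => P0 φ T p.2 p.1 := by
    simpa [Function.comp_def] using (cP0 hφc).comp (continuous_swap (X := ℝ) (Y := ℝ))
  have hval : (fun k' => -(disc r T) * ∫ y in (max k' S₀)..B', P0 φ T k' y)
      = fun k' => -(disc r T) * ((∫ y in S₀..B', P0 φ T k' y)
          - ∫ y in S₀..max k' S₀, P0 φ T k' y) := by
    funext k'
    rw [intervalIntegral.integral_interval_sub_left
      ((hyP0 k').intervalIntegrable _ _) ((hyP0 k').intervalIntegrable _ _)]
  rw [hval]
  have cφswap : Continuous fun p : ℝ × ℝ => φ p.1 p.2 T :=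
    comp3 hφc continuous_fst continuous_snd continuous_const
  have part1 : HasDerivAt (fun k' => ∫ y in S₀..B', P0 φ T k' y)
      (∫ y in S₀..B', -(φ k y T)) k :=
    duis cP0s (by exact
        (cφswap.comp (continuous_swap (X := ℝ) (Y := ℝ))).neg : Continuous fun p : ℝ × ℝ => -(φ p.2 p.1 T))
      (fun u s => hdP0 hφc u s)
  have part2 : HasDerivAt (fun k' => ∫ y in S₀..max k' S₀, P0 φ T k' y)
      (∫ y in S₀..max k S₀, -(φ k y T)) k :=
    maxcut (cP0 hφc) cφswap.neg (fun y k' => hdP0 hφc y k')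
      (fun k' => intervalIntegral.integral_same)
  have h3 := (part1.sub part2).const_mul (-(disc r T))
  refine h3.congr_deriv (Eq.symm ?_)
  have cyφ : Continuous fun y => φ k y T :=
    comp3 hφc continuous_const continuous_id continuous_const
  rw [intervalIntegral.integral_neg, intervalIntegral.integral_neg,
    ← intervalIntegral.integral_interval_sub_left
      (cyφ.intervalIntegrable _ _) (cyφ.intervalIntegrable _ _)]
  ring

end KDeriv

end BarrierAux

namespace BarrierAux

lemma contDiff_deriv1 {f : ℝ → ℝ} (hf : ContDiff ℝ 2 f) : ContDiff ℝ 1 (deriv f) := by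
  have h := (hf.fderiv_right (m := 1) le_rfl).clm_apply (contDiff_const (c := (1:ℝ)))
  have he : deriv f = fun x => fderiv ℝ f x 1 := funext fun x => (fderiv_apply_one_eq_deriv).symm
  rw [he]; exact h

/-- Abstract core: differentiability of the diagonal `b ↦ G b b` for a function
satisfying `∂ₓ²G = 2W` below the diagonal, with `W` jointly `C⁰` and `C¹` in `y`. -/
lemma diag_general {G W Wy : ℝ → ℝ → ℝ} {S₀ B : ℝ}
    (hS₀ : 0 < S₀) (hSB : S₀ < B)
    (hGx : ∀ y, ContDiff ℝ 2 fun x => G x y)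
    (hGy : ∀ x, ContDiff ℝ 1 fun y => G x y)
    (hW : Continuous fun p : ℝ × ℝ => W p.1 p.2)
    (hWy : Continuous fun p : ℝ × ℝ => Wy p.1 p.2)
    (hWd : ∀ u y, HasDerivAt (fun y' => W u y') (Wy u y) y)
    (hKFE : ∀ u y, 0 < u → u < y → S₀ < y → deriv (deriv (fun x => G x y)) u = 2 * W u y) :
    HasDerivAt (fun b => G b b)
      (deriv (fun x => G x B) B + deriv (fun y => G B y) B) B := by
  set x₀ : ℝ := S₀ / 2 with hx₀
  set x₁ : ℝ := S₀ with hx₁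
  have hx₀pos : 0 < x₀ := by positivity
  have hx₀S : x₀ < S₀ := by rw [hx₀]; linarith
  have hx01 : x₀ < x₁ := by rw [hx₀, hx₁]; linarith
  -- continuity of W slices
  have cWy1 : ∀ y : ℝ, Continuous fun u => W u y := fun y => by
    simpa [Function.comp_def] using hW.comp ((continuous_id : Continuous (id : ℝ → ℝ)).prodMk continuous_const)
  have cWyy1 : ∀ y : ℝ, Continuous fun u => Wy u y := fun y => by
    simpa [Function.comp_def] using hWy.comp ((continuous_id : Continuous (id : ℝ → ℝ)).prodMk continuous_const)
  -- a.e. replacement of the second derivative by 2W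
  have hae : ∀ y b, S₀ < y → x₀ ≤ b → b ≤ y →
      (∫ u in x₀..b, deriv (deriv (fun x => G x y)) u) = ∫ u in x₀..b, 2 * W u y := by
    intro y b hy hxb hby
    apply intervalIntegral.integral_congr_ae
    have hy' : ∀ᵐ (u : ℝ) ∂volume, u ≠ y := by
      rw [MeasureTheory.ae_iff]
      have : {u : ℝ | ¬u ≠ y} = {y} := by ext u; simp
      rw [this]
      exact Real.volume_singleton
    filter_upwards [hy'] with u hu hmem
    rcases Set.mem_uIoc.1 hmem with ⟨h1, h2⟩ | ⟨h1, h2⟩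
    · exact hKFE u y (by linarith) (lt_of_le_of_ne (by linarith) hu) hy
    · exact absurd (h2.trans_lt (lt_of_le_of_lt hxb h1)) (lt_irrefl u)
  -- first-order Taylor/FTC formula for the x-derivative
  have hqx : ∀ y b, S₀ < y → x₀ ≤ b → b ≤ y →
      deriv (fun x => G x y) b = deriv (fun x => G x y) x₀ + ∫ u in x₀..b, 2 * W u y := by
    intro y b hy hxb hby
    have hftc : (∫ u in x₀..b, deriv (deriv (fun x => G x y)) u)
        = deriv (fun x => G x y) b - deriv (fun x => G x y) x₀ :=
      intervalIntegral.integral_deriv_eq_sub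
        (fun u _ => ((contDiff_deriv1 (hGx y)).differentiable one_ne_zero) u)
        (((contDiff_deriv1 (hGx y)).continuous_deriv le_rfl).intervalIntegrable _ _)
    rw [hae y b hy hxb hby] at hftc
    linarith
  -- second-order Taylor formula with integral remainder
  have hTay : ∀ y b, S₀ < y → x₀ ≤ b → b ≤ y →
      G b y = G x₀ y + (b - x₀) * deriv (fun x => G x y) x₀
        + ∫ u in x₀..b, (b - u) * (2 * W u y) := by
    intro y b hy hxb hby
    have key : ∀ z ∈ Icc x₀ b, G z y
        = G x₀ y + (z - x₀) * deriv (fun x => G x y) x₀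
          + ∫ u in x₀..z, (z - u) * (2 * W u y) := by
      apply eq_of_has_deriv_right_eq (f' := fun s => deriv (fun x => G x y) s)
      · intro s hs
        exact ((((hGx y).differentiable two_ne_zero) s).hasDerivAt).hasDerivWithinAt
      · intro s hs
        have hmov : HasDerivAt (fun b' => ∫ u in x₀..b', (b' - u) * (2 * W u y))
            ((s - s) * (2 * W s y) + ∫ u in x₀..s, 2 * W u y) s := by
          apply movlim (m := fun u s' => (s' - u) * (2 * W u y))
            (m' := fun u s' => 2 * W u y)
          · exact (continuous_snd.sub continuous_fst).mul
              (continuous_const.mul ((cWy1 y).comp continuous_fst))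
          · exact continuous_const.mul ((cWy1 y).comp continuous_fst)
          · intro u s'
            simpa using ((hasDerivAt_id s').sub_const u).mul_const (2 * W u y)
        have hsum := ((hasDerivAt_const s (G x₀ y)).add
          (((hasDerivAt_id s).sub_const x₀).mul_const
            (deriv (fun x => G x y) x₀))).add hmov
        have : (0 + 1 * deriv (fun x => G x y) x₀)
            + ((s - s) * (2 * W s y) + ∫ u in x₀..s, 2 * W u y)
            = deriv (fun x => G x y) s := by
          rw [hqx y s hy hs.1 (le_trans hs.2.le hby)]; ring
        rw [this] at hsum
        exact hsum.hasDerivWithinAt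
      · exact (hGx y).continuous.continuousOn
      · apply ContinuousOn.add
        · apply ContinuousOn.add continuousOn_const
          exact ((continuous_id.sub continuous_const).mul continuous_const).continuousOn
        · apply Continuous.continuousOn
          have hu : Continuous (Function.uncurry fun (s : ℝ) (u : ℝ)
              => (s - u) * (2 * W u y)) :=
            (continuous_fst.sub continuous_snd).mul
              (continuous_const.mul ((cWy1 y).comp continuous_snd))
          exact intervalIntegral.continuous_parametric_intervalIntegral_of_continuous
            hu continuous_id
      · simp
    have := key b (right_mem_Icc.2 hxb)
    exact this
  -- two-point formula for the x-derivative at x₀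
  have hGx0 : ∀ y, S₀ < y → deriv (fun x => G x y) x₀
      = (G x₁ y - G x₀ y - ∫ u in x₀..x₁, (x₁ - u) * (2 * W u y)) / (x₁ - x₀) := by
    intro y hy
    have h := hTay y x₁ hy (by linarith) (by linarith)
    rw [eq_div_iff (by linarith : x₁ - x₀ ≠ 0)]
    linarith
  have dGy : ∀ x, HasDerivAt (fun y => G x y) (deriv (fun y => G x y) B) B :=
    fun x => (((hGy x).differentiable one_ne_zero) B).hasDerivAt
  have dΘ : HasDerivAt (fun y => ∫ u in x₀..x₁, (x₁ - u) * (2 * W u y))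
      (∫ u in x₀..x₁, (x₁ - u) * (2 * Wy u B)) B := by
    apply duis (f := fun u y => (x₁ - u) * (2 * W u y))
      (f' := fun u y => (x₁ - u) * (2 * Wy u y))
    · exact (continuous_const.sub continuous_fst).mul (continuous_const.mul hW)
    · exact (continuous_const.sub continuous_fst).mul (continuous_const.mul hWy)
    · intro u s; exact ((hWd u s).const_mul 2).const_mul (x₁ - u)
  set GxDer : ℝ := (deriv (fun y => G x₁ y) B - deriv (fun y => G x₀ y) B
      - ∫ u in x₀..x₁, (x₁ - u) * (2 * Wy u B)) / (x₁ - x₀) with hGxDer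
  have dGx0 : HasDerivAt (fun y => deriv (fun x => G x y) x₀) GxDer B := by
    have h := (((dGy x₁).sub (dGy x₀)).sub dΘ).div_const (x₁ - x₀)
    refine h.congr_of_eventuallyEq ?_
    filter_upwards [Ioi_mem_nhds hSB] with y hy
    exact hGx0 y hy
  have dΛ : HasDerivAt (fun y => ∫ u in x₀..y, (y - u) * (2 * W u y))
      ((B - B) * (2 * W B B)
        + ∫ u in x₀..B, (1 * (2 * W u B) + (B - u) * (2 * Wy u B))) B := by
    apply movlim (m := fun u s => (s - u) * (2 * W u s))
      (m' := fun u s => 1 * (2 * W u s) + (s - u) * (2 * Wy u s))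
    · exact (continuous_snd.sub continuous_fst).mul (continuous_const.mul hW)
    · exact (continuous_const.mul (continuous_const.mul hW)).add
        ((continuous_snd.sub continuous_fst).mul (continuous_const.mul hWy))
    · intro u s; exact ((hasDerivAt_id s).sub_const u).mul ((hWd u s).const_mul 2)
  have hfun : (fun y => G y y) =ᶠ[𝓝 B]
      fun y => G x₀ y + (y - x₀) * deriv (fun x => G x y) x₀
        + ∫ u in x₀..y, (y - u) * (2 * W u y) := by
    filter_upwards [Ioi_mem_nhds hSB] with y hy
    have hy' : S₀ < y := hy
    exact hTay y y hy' (by linarith) le_rfl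
  have dh := ((dGy x₀).add (((hasDerivAt_id B).sub_const x₀).mul dGx0)).add dΛ
  have hDiag0 := dh.congr_of_eventuallyEq hfun
  have e1 : deriv (fun x => G x B) B
      = deriv (fun x => G x B) x₀ + ∫ u in x₀..B, 2 * W u B :=
    hqx B B hSB (by linarith) le_rfl
  have dβ : HasDerivAt (fun y => G x₀ y + (B - x₀) * deriv (fun x => G x y) x₀
      + ∫ u in x₀..B, (B - u) * (2 * W u y))
      (deriv (fun y => G x₀ y) B + (B - x₀) * GxDer
        + ∫ u in x₀..B, (B - u) * (2 * Wy u B)) B := by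
    refine ((dGy x₀).add (dGx0.const_mul (B - x₀))).add ?_
    apply duis (f := fun u y => (B - u) * (2 * W u y))
      (f' := fun u y => (B - u) * (2 * Wy u y))
    · exact (continuous_const.sub continuous_fst).mul (continuous_const.mul hW)
    · exact (continuous_const.sub continuous_fst).mul (continuous_const.mul hWy)
    · intro u s; exact ((hWd u s).const_mul 2).const_mul (B - u)
  have e2 : deriv (fun y => G B y) B = deriv (fun y => G x₀ y) B + (B - x₀) * GxDer
      + ∫ u in x₀..B, (B - u) * (2 * Wy u B) := by
    have h1 : HasDerivWithinAt (fun y => G B y) (deriv (fun y => G B y) B) (Ici B) B :=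
      (dGy B).hasDerivWithinAt
    have heq : ∀ y ∈ Ici B, G B y
        = G x₀ y + (B - x₀) * deriv (fun x => G x y) x₀
          + ∫ u in x₀..B, (B - u) * (2 * W u y) := by
      intro y hy
      exact hTay y B (lt_of_lt_of_le hSB hy) (by linarith) hy
    have h2 : HasDerivWithinAt (fun y => G B y)
        (deriv (fun y => G x₀ y) B + (B - x₀) * GxDer
          + ∫ u in x₀..B, (B - u) * (2 * Wy u B)) (Ici B) B :=
      (dβ.hasDerivWithinAt).congr heq (heq B self_mem_Ici)
    exact UniqueDiffWithinAt.eq_deriv _ ((uniqueDiffOn_Ici B) B self_mem_Ici) h1 h2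
  have esplit : (∫ u in x₀..B, (1 * (2 * W u B) + (B - u) * (2 * Wy u B)))
      = (∫ u in x₀..B, 2 * W u B) + ∫ u in x₀..B, (B - u) * (2 * Wy u B) := by
    have hfe : (fun u => 1 * (2 * W u B) + (B - u) * (2 * Wy u B))
        = fun u => 2 * W u B + (B - u) * (2 * Wy u B) := by funext u; ring
    have i1 : IntervalIntegrable (fun u => 2 * W u B) volume x₀ B :=
      (continuous_const.mul (cWy1 B)).intervalIntegrable _ _
    have i2 : IntervalIntegrable (fun u => (B - u) * (2 * Wy u B)) volume x₀ B :=
      ((continuous_const.sub continuous_id).mul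
        (continuous_const.mul (cWyy1 B))).intervalIntegrable _ _
    rw [hfe, intervalIntegral.integral_add i1 i2]
  refine hDiag0.congr_deriv ?_
  rw [e1, e2, esplit]
  simp only [id_eq]
  ring

end BarrierAux


end

open BarrierAux

/-- Forward equation for up-and-out barrier call prices (Theorem 2.3 of the paper):
if the density `φ` satisfies the Kolmogorov forward equation on
`Ω = {(x,y) : 0 < x < y, S₀ < y}`, the diagonal boundary condition, and the
corner condition `φ(S₀,S₀,t) = 0`, then for all `0 < K < B`, `B > S₀`, `T > 0`,
`∂²C/∂B∂T + (r-q) K ∂²C/∂K∂B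
  = ½ σ²(K,B,T) K² ∂³C/∂K²∂B - q ∂C/∂B
    - ½ d/dB [ (B-K) B² σ²(B,B,T) (∂³C/∂K²∂B)|_{K=B} ]`. -/
theorem stmt_0 (S₀ : ℝ) (hS₀ : 0 < S₀)
    (r q : ℝ → ℝ) (hr : Continuous r) (hq : Continuous q)
    (σ φ : ℝ → ℝ → ℝ → ℝ)
    -- regularity of σ: bounded, C² in x, C¹ in y, continuous in t
    (hσbd : ∃ M : ℝ, ∀ x y t, |σ x y t| ≤ M)
    (hσx : ∀ y t, ContDiff ℝ 2 fun x => σ x y t)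
    (hσy : ∀ x t, ContDiff ℝ 1 fun y => σ x y t)
    (hσt : ∀ x y, Continuous fun t => σ x y t)
    -- regularity of φ: C² with bounded derivatives
    (hφ : ContDiff ℝ 2 fun p : ℝ × ℝ × ℝ => φ p.1 p.2.1 p.2.2)
    (hφbd : ∃ M : ℝ, ∀ p : ℝ × ℝ × ℝ,
      ‖fderiv ℝ (fun p : ℝ × ℝ × ℝ => φ p.1 p.2.1 p.2.2) p‖ ≤ M)
    -- Kolmogorov forward equation on Ω, t > 0
    (hKFE : ∀ x y t : ℝ, 0 < x → x < y → S₀ < y → 0 < t →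
      deriv (fun t' => φ x y t') t
        + (r t - q t) * deriv (fun x' => x' * φ x' y t) x
        - (1/2) * deriv (deriv (fun x' => (σ x' y t)^2 * x'^2 * φ x' y t)) x = 0)
    -- diagonal boundary condition at x = y > S₀, t > 0
    (hDBC : ∀ y t : ℝ, S₀ < y → 0 < t →
      deriv (fun x' => (σ x' y t)^2 * x'^2 * φ x' y t) y
        + (1/2) * deriv (fun y' => (σ y y' t)^2 * y^2 * φ y y' t) y
        = (r t - q t) * y * φ y y t)
    -- corner condition
    (hcorner : ∀ t : ℝ, 0 < t → φ S₀ S₀ t = 0) :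
    ∀ K B T : ℝ, 0 < K → K < B → S₀ < B → 0 < T →
      deriv (fun T' => deriv (fun B' => upOutCall S₀ r φ K B' T') B) T
        + (r T - q T) * K * deriv (fun B' => deriv (fun K' => upOutCall S₀ r φ K' B' T) K) B
      = (1/2) * (σ K B T)^2 * K^2
            * deriv (fun B' => deriv (deriv (fun K' => upOutCall S₀ r φ K' B' T)) K) B
        - q T * deriv (fun B' => upOutCall S₀ r φ K B' T) B
        - (1/2) * deriv (fun b =>
            (b - K) * b^2 * (σ b b T)^2
              * deriv (fun B' => deriv (deriv (fun K' => upOutCall S₀ r φ K' B' T)) b) b) B := by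
  intro K B T hK hKB hSB hT
  have hφc : Continuous fun p : ℝ × ℝ × ℝ => φ p.1 p.2.1 p.2.2 := hφ.continuous
  -- derivative of the discount factor
  have hdisc : HasDerivAt (fun T' => disc r T') (disc r T * -(r T)) T := by
    have h0 : HasDerivAt (fun T' => ∫ u in (0:ℝ)..T', r u) (r T) T := ftc_right hr 0 T
    exact h0.neg.exp
  -- (1) derivative in the barrier B, for every time
  have hB1 : ∀ T' b, HasDerivAt (fun b' => upOutCall S₀ r φ K b' T')
      (disc r T' * ∫ x in K..b, (x - K) * φ x b T') b := by
    intro T' b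
    have hu : Continuous (Function.uncurry fun (y : ℝ) (x : ℝ) => (x - K) * φ x y T') :=
      (continuous_snd.sub continuous_const).mul
        (comp3 hφc continuous_snd continuous_fst continuous_const)
    have cF : Continuous fun y => ∫ x in K..y, (x - K) * φ x y T' :=
      intervalIntegral.continuous_parametric_intervalIntegral_of_continuous hu continuous_id
    exact (ftc_right cF (max K S₀) b).const_mul (disc r T')
  -- abbreviations (atoms of the final linear algebra)
  set JB : ℝ := ∫ x in K..B, (x - K) * φ x B T with hJB
  set I0 : ℝ := ∫ x in K..B, φ x B T with hI0
  set IT : ℝ := ∫ x in K..B, (x - K) * pd1 φ (0, 0, 1) (x, B, T) with hITdef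
  set GxBB : ℝ := deriv (fun x' => (σ x' B T)^2 * x'^2 * φ x' B T) B with hGxBB
  set GyBB : ℝ := deriv (fun y' => (σ B y' T)^2 * B^2 * φ B y' T) B with hGyBB
  -- (2) the ∂²C/∂B∂T term
  have hA : deriv (fun T' => deriv (fun B' => upOutCall S₀ r φ K B' T') B) T
      = (disc r T * -(r T)) * JB + disc r T * IT := by
    have hrw : (fun T' => deriv (fun B' => upOutCall S₀ r φ K B' T') B)
        = fun T' => disc r T' * ∫ x in K..B, (x - K) * φ x B T' :=
      funext fun T' => (hB1 T' B).deriv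
    rw [hrw]
    have hJd : HasDerivAt (fun T' => ∫ x in K..B, (x - K) * φ x B T') IT T := by
      apply duis (f := fun x t => (x - K) * φ x B t)
        (f' := fun x t => (x - K) * pd1 φ (0, 0, 1) (x, B, t))
      · exact (continuous_fst.sub continuous_const).mul
          (comp3 hφc continuous_fst continuous_const continuous_snd)
      · exact (continuous_fst.sub continuous_const).mul
          (comp3 (pd1_cont hφ (0, 0, 1)) continuous_fst continuous_const continuous_snd)
      · intro x t; exact (hd_phi_t hφ x B t).const_mul (x - K)
    exact (hdisc.mul hJd).deriv
  -- (3) the ∂²C/∂K∂B term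
  have cP0Ky : Continuous fun y => P0 φ T K y := by
    simpa [Function.comp_def] using (cP0 hφc).comp (Continuous.prodMk_right (Y := ℝ) K)
  have hP : deriv (fun B' => deriv (fun K' => upOutCall S₀ r φ K' B' T) K) B
      = -(disc r T) * I0 := by
    have hrw : (fun B' => deriv (fun K' => upOutCall S₀ r φ K' B' T) K)
        = fun B' => -(disc r T) * ∫ y in (max K S₀)..B', P0 φ T K y :=
      funext fun B' => (derivK hφc S₀ r K B').deriv
    rw [hrw]
    have := ((ftc_right cP0Ky (max K S₀) B).const_mul (-(disc r T))).deriv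
    rw [this]
    rw [hI0, P0]
  -- (4) the ∂³C/∂K²∂B term
  have hK2fun : ∀ b B', deriv (deriv (fun K' => upOutCall S₀ r φ K' B' T)) b
      = disc r T * ∫ y in (max b S₀)..B', φ b y T := by
    intro b B'
    have h1 : deriv (fun K' => upOutCall S₀ r φ K' B' T)
        = fun kk => -(disc r T) * ∫ y in (max kk S₀)..B', P0 φ T kk y :=
      funext fun kk => (derivK hφc S₀ r kk B').deriv
    rw [h1]
    exact (derivKK hφc S₀ r b B').deriv
  have hQ : deriv (fun B' => deriv (deriv (fun K' => upOutCall S₀ r φ K' B' T)) K) B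
      = disc r T * φ K B T := by
    have hrw : (fun B' => deriv (deriv (fun K' => upOutCall S₀ r φ K' B' T)) K)
        = fun B' => disc r T * ∫ y in (max K S₀)..B', φ K y T :=
      funext fun B' => hK2fun K B'
    rw [hrw]
    have cφKy : Continuous fun y => φ K y T :=
      comp3 hφc continuous_const continuous_id continuous_const
    exact ((ftc_right cφKy (max K S₀) B).const_mul (disc r T)).deriv
  -- (5) the ∂C/∂B term
  have hR : deriv (fun B' => upOutCall S₀ r φ K B' T) B = disc r T * JB := (hB1 T B).deriv
  -- (6) the diagonal third-derivative function
  have hQb : ∀ b, deriv (fun B' => deriv (deriv (fun K' => upOutCall S₀ r φ K' B' T)) b) b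
      = disc r T * φ b b T := by
    intro b
    have hrw : (fun B' => deriv (deriv (fun K' => upOutCall S₀ r φ K' B' T)) b)
        = fun B' => disc r T * ∫ y in (max b S₀)..B', φ b y T :=
      funext fun B' => hK2fun b B'
    rw [hrw]
    have cφby : Continuous fun y => φ b y T :=
      comp3 hφc continuous_const continuous_id continuous_const
    exact ((ftc_right cφby (max b S₀) b).const_mul (disc r T)).deriv
  -- (7) diagonal differentiability from the KFE
  have hKFE' : ∀ u y, 0 < u → u < y → S₀ < y →
      deriv (deriv (fun x => (σ x y T)^2 * x^2 * φ x y T)) u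
        = 2 * (pd1 φ (0, 0, 1) (u, y, T)
            + (r T - q T) * (φ u y T + u * pd1 φ (1, 0, 0) (u, y, T))) := by
    intro u y hu huy hSy
    have h := hKFE u y T hu huy hSy hT
    have e1 : deriv (fun t' => φ u y t') T = pd1 φ (0, 0, 1) (u, y, T) :=
      (hd_phi_t hφ u y T).deriv
    have e2 : deriv (fun x' => x' * φ x' y T) u
        = 1 * φ u y T + u * pd1 φ (1, 0, 0) (u, y, T) :=
      ((hasDerivAt_id u).mul (hd_phi_x hφ u y T)).deriv
    rw [e1, e2] at h
    linarith
  have hdiag : HasDerivAt (fun b => (σ b b T)^2 * b^2 * φ b b T) (GxBB + GyBB) B := by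
    apply diag_general (S₀ := S₀) (G := fun x y => (σ x y T)^2 * x^2 * φ x y T)
      (W := fun u y => pd1 φ (0, 0, 1) (u, y, T)
        + (r T - q T) * (φ u y T + u * pd1 φ (1, 0, 0) (u, y, T)))
      (Wy := fun u y => pd2 φ (0, 0, 1) (0, 1, 0) (u, y, T)
        + (r T - q T) * (pd1 φ (0, 1, 0) (u, y, T)
            + u * pd2 φ (1, 0, 0) (0, 1, 0) (u, y, T)))
      hS₀ hSB
    · intro y
      exact (((hσx y T).pow 2).mul (contDiff_id.pow 2)).mul
        (hφ.comp ((contDiff_id).prodMk (contDiff_const (c := (y, T)))))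
    · intro x
      exact (((hσy x T).pow 2).mul contDiff_const).mul
        ((hφ.of_le one_le_two).comp
          ((contDiff_const (c := x)).prodMk ((contDiff_id).prodMk (contDiff_const (c := T)))))
    · exact (comp3 (pd1_cont hφ (0, 0, 1)) continuous_fst continuous_snd continuous_const).add
        (continuous_const.mul
          ((comp3 hφc continuous_fst continuous_snd continuous_const).add
            (continuous_fst.mul (comp3 (pd1_cont hφ (1, 0, 0)) continuous_fst continuous_snd
              continuous_const))))
    · exact (comp3 (pd2_cont hφ (0, 0, 1) (0, 1, 0)) continuous_fst continuous_snd
          continuous_const).add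
        (continuous_const.mul
          ((comp3 (pd1_cont hφ (0, 1, 0)) continuous_fst continuous_snd continuous_const).add
            (continuous_fst.mul (comp3 (pd2_cont hφ (1, 0, 0) (0, 1, 0)) continuous_fst
              continuous_snd continuous_const))))
    · intro u y
      exact (hd_pd1_y hφ (0, 0, 1) u y T).add
        (((hd_phi_y hφ u y T).add ((hd_pd1_y hφ (1, 0, 0) u y T).const_mul u)).const_mul
          (r T - q T))
    · exact hKFE'
  -- (8) rewrite of the diagonal boundary term
  have hS : deriv (fun b => (b - K) * b^2 * (σ b b T)^2
        * deriv (fun B' => deriv (deriv (fun K' => upOutCall S₀ r φ K' B' T)) b) b) B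
      = disc r T * ((σ B B T)^2 * B^2 * φ B B T + (B - K) * (GxBB + GyBB)) := by
    have hrw : (fun b => (b - K) * b^2 * (σ b b T)^2
          * deriv (fun B' => deriv (deriv (fun K' => upOutCall S₀ r φ K' B' T)) b) b)
        = fun b => (b - K) * (disc r T * ((σ b b T)^2 * b^2 * φ b b T)) := by
      funext b
      rw [hQb b]
      ring
    rw [hrw]
    have hd2 : HasDerivAt (fun b => (b - K) * (disc r T * ((σ b b T)^2 * b^2 * φ b b T)))
        (1 * (disc r T * ((σ B B T)^2 * B^2 * φ B B T))
          + (B - K) * (disc r T * (GxBB + GyBB))) B :=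
      ((hasDerivAt_id B).sub_const K).mul (hdiag.const_mul (disc r T))
    rw [hd2.deriv]
    ring
  -- (9) integration by parts at y = B
  have hIT : IT = (1/2) * ((B - K) * GxBB
        - ((σ B B T)^2 * B^2 * φ B B T - (σ K B T)^2 * K^2 * φ K B T))
      - (r T - q T) * ((B - K) * (B * φ B B T) - (JB + K * I0)) := by
    have hg2 : ContDiff ℝ 2 fun x' => (σ x' B T)^2 * x'^2 * φ x' B T :=
      (((hσx B T).pow 2).mul (contDiff_id.pow 2)).mul
        (hφ.comp ((contDiff_id).prodMk (contDiff_const (c := (B, T)))))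
    have cdd : Continuous (deriv (deriv (fun x' => (σ x' B T)^2 * x'^2 * φ x' B T))) :=
      (contDiff_deriv1 hg2).continuous_deriv le_rfl
    have cφB : Continuous fun x => φ x B T :=
      comp3 hφc continuous_id continuous_const continuous_const
    have cφx : Continuous fun x => pd1 φ (1, 0, 0) (x, B, T) :=
      comp3 (pd1_cont hφ (1, 0, 0)) continuous_id continuous_const continuous_const
    have cv2 : Continuous fun x => 1 * φ x B T + x * pd1 φ (1, 0, 0) (x, B, T) :=
      (continuous_const.mul cφB).add (continuous_id.mul cφx)
    have h1 : IT = ∫ x in K..B, (x - K) * ((1/2)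
          * deriv (deriv (fun x' => (σ x' B T)^2 * x'^2 * φ x' B T)) x
        - (r T - q T) * (1 * φ x B T + x * pd1 φ (1, 0, 0) (x, B, T))) := by
      rw [hITdef]
      apply intervalIntegral.integral_congr_ae
      have hB' : ∀ᵐ (u : ℝ) ∂volume, u ≠ B := by
        rw [MeasureTheory.ae_iff]
        have : {u : ℝ | ¬u ≠ B} = {B} := by ext u; simp
        rw [this]
        exact Real.volume_singleton
      filter_upwards [hB'] with x hx hmem
      rcases Set.mem_uIoc.1 hmem with ⟨hx1, hx2⟩ | ⟨hx1, hx2⟩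
      · have hdd := hKFE' x B (by linarith) (lt_of_le_of_ne hx2 hx) hSB
        have : pd1 φ (0, 0, 1) (x, B, T) = (1/2)
              * deriv (deriv (fun x' => (σ x' B T)^2 * x'^2 * φ x' B T)) x
            - (r T - q T) * (1 * φ x B T + x * pd1 φ (1, 0, 0) (x, B, T)) := by
          linarith
        rw [this]
      · exact absurd (hx2.trans_lt (lt_of_lt_of_le hKB hx1.le)) (lt_irrefl x)
    have h2 : (∫ x in K..B, (x - K) * ((1/2)
          * deriv (deriv (fun x' => (σ x' B T)^2 * x'^2 * φ x' B T)) x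
        - (r T - q T) * (1 * φ x B T + x * pd1 φ (1, 0, 0) (x, B, T))))
        = (1/2) * (∫ x in K..B,
            (x - K) * deriv (deriv (fun x' => (σ x' B T)^2 * x'^2 * φ x' B T)) x)
          - (r T - q T) * ∫ x in K..B,
              (x - K) * (1 * φ x B T + x * pd1 φ (1, 0, 0) (x, B, T)) := by
      have i1 : IntervalIntegrable (fun x => (1/2)
            * ((x - K) * deriv (deriv (fun x' => (σ x' B T)^2 * x'^2 * φ x' B T)) x))
          volume K B :=
        (continuous_const.mul ((continuous_id.sub continuous_const).mul cdd)).intervalIntegrable _ _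
      have i2 : IntervalIntegrable (fun x => (r T - q T)
            * ((x - K) * (1 * φ x B T + x * pd1 φ (1, 0, 0) (x, B, T)))) volume K B :=
        (continuous_const.mul ((continuous_id.sub continuous_const).mul cv2)).intervalIntegrable _ _
      rw [← intervalIntegral.integral_const_mul, ← intervalIntegral.integral_const_mul,
        ← intervalIntegral.integral_sub i1 i2]
      exact intervalIntegral.integral_congr fun x _ => by ring
    have h3 : (∫ x in K..B,
          (x - K) * deriv (deriv (fun x' => (σ x' B T)^2 * x'^2 * φ x' B T)) x)
        = (B - K) * deriv (fun x' => (σ x' B T)^2 * x'^2 * φ x' B T) B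
          - (K - K) * deriv (fun x' => (σ x' B T)^2 * x'^2 * φ x' B T) K
          - ∫ x in K..B, 1 * deriv (fun x' => (σ x' B T)^2 * x'^2 * φ x' B T) x :=
      intervalIntegral.integral_mul_deriv_eq_deriv_mul
        (fun x _ => (hasDerivAt_id x).sub_const K)
        (fun x _ => (((contDiff_deriv1 hg2).differentiable one_ne_zero) x).hasDerivAt)
        intervalIntegrable_const (cdd.intervalIntegrable _ _)
    have h4 : (∫ x in K..B, 1 * deriv (fun x' => (σ x' B T)^2 * x'^2 * φ x' B T) x)
        = (σ B B T)^2 * B^2 * φ B B T - (σ K B T)^2 * K^2 * φ K B T := by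
      have : (fun x => 1 * deriv (fun x' => (σ x' B T)^2 * x'^2 * φ x' B T) x)
          = fun x => deriv (fun x' => (σ x' B T)^2 * x'^2 * φ x' B T) x := by
        funext x; ring
      rw [this]
      exact intervalIntegral.integral_deriv_eq_sub
        (fun x _ => (hg2.differentiable two_ne_zero) x)
        ((hg2.continuous_deriv one_le_two).intervalIntegrable _ _)
    have h5 : (∫ x in K..B, (x - K) * (1 * φ x B T + x * pd1 φ (1, 0, 0) (x, B, T)))
        = (B - K) * (B * φ B B T) - (K - K) * (K * φ K B T)
          - ∫ x in K..B, 1 * (x * φ x B T) :=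
      intervalIntegral.integral_mul_deriv_eq_deriv_mul
        (fun x _ => (hasDerivAt_id x).sub_const K)
        (fun x _ => (hasDerivAt_id x).mul (hd_phi_x hφ x B T))
        intervalIntegrable_const (cv2.intervalIntegrable _ _)
    have h6 : (∫ x in K..B, 1 * (x * φ x B T)) = JB + K * I0 := by
      have hfe : (fun x => 1 * (x * φ x B T))
          = fun x => (x - K) * φ x B T + K * φ x B T := by funext x; ring
      have i1 : IntervalIntegrable (fun x => (x - K) * φ x B T) volume K B :=
        ((continuous_id.sub continuous_const).mul cφB).intervalIntegrable _ _
      have i2 : IntervalIntegrable (fun x => K * φ x B T) volume K B :=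
        (continuous_const.mul cφB).intervalIntegrable _ _
      rw [hfe, intervalIntegral.integral_add i1 i2, intervalIntegral.integral_const_mul,
        ← hJB, ← hI0]
    rw [h1, h2, h3, h4, h5, h6, ← hGxBB]
    ring
  -- final assembly
  rw [hA, hP, hQ, hR, hS]
  have hdbc := hDBC B T hSB hT
  rw [← hGxBB, ← hGyBB] at hdbc
  linear_combination (disc r T) * hIT + (disc r T) * (B - K) * hdbc
end

section
/- For all 0 < K < B with B > S₀ and all T ≥ 0, the mixed second derivative of the up-and-out call price satisfies ∂²C/∂K∂B (K,B,T) = − D(T) ∫_K^B φ(x,B,T) dx. -/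
open MeasureTheory Real Filter

section Aux

variable {ψ : ℝ → ℝ → ℝ} (hψ : Continuous fun p : ℝ × ℝ => ψ p.1 p.2)

/-- membership of a uIoc interval gives an abs bound -/
lemma aux_abs_mem {a b x : ℝ} (h : x ∈ Set.uIoc a b) : |x| ≤ max |a| |b| := by
  rcases le_total a b with hab | hab
  · rw [Set.uIoc_of_le hab] at h
    rw [abs_le]
    constructor
    · linarith [h.1.le, neg_abs_le a, le_max_left |a| |b|]
    · exact le_trans h.2 (le_trans (le_abs_self b) (le_max_right _ _))
  · rw [Set.uIoc_of_ge hab] at h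
    rw [abs_le]
    constructor
    · linarith [h.1.le, neg_abs_le b, le_max_right |a| |b|]
    · exact le_trans h.2 (le_trans (le_abs_self a) (le_max_left _ _))

/-- dist to endpoint bound within uIoc -/
lemma aux_dist_mem {a b x : ℝ} (h : x ∈ Set.uIoc a b) : |x - a| ≤ |b - a| := by
  rcases le_total a b with hab | hab
  · rw [Set.uIoc_of_le hab] at h
    rw [abs_of_nonneg (by linarith [h.1.le]), abs_of_nonneg (by linarith)]
    linarith [h.2]
  · rw [Set.uIoc_of_ge hab] at h
    rw [abs_of_nonpos (by linarith [h.2]), abs_of_nonpos (by linarith)]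
    linarith [h.1.le]

include hψ in
lemma aux_cont_x (y : ℝ) : Continuous fun x => ψ x y :=
  hψ.comp (continuous_id.prodMk continuous_const)

include hψ in
/-- continuity in `y` of `Ψ k y = ∫ x in k..y, ψ x y`. -/
lemma aux_cont_Psi (k : ℝ) : Continuous fun y => ∫ x in k..y, ψ x y := by
  exact intervalIntegral.continuous_parametric_intervalIntegral_of_continuous
    (f := fun y x => ψ x y) (μ := volume)
    (by exact hψ.comp (continuous_snd.prodMk continuous_fst)) continuous_id

include hψ in
/-- continuity in `y` of `F k y = ∫ x in k..y, (x - k) * ψ x y`. -/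
lemma aux_cont_F (k : ℝ) : Continuous fun y => ∫ x in k..y, (x - k) * ψ x y := by
  exact intervalIntegral.continuous_parametric_intervalIntegral_of_continuous
    (f := fun y x => (x - k) * ψ x y) (μ := volume)
    (by exact ((continuous_snd.sub continuous_const).mul
      (hψ.comp (continuous_snd.prodMk continuous_fst)))) continuous_id

include hψ in
/-- a bound for ψ on a square -/
lemma aux_bound (R : ℝ) : ∃ M : ℝ, 0 ≤ M ∧ ∀ x y : ℝ, |x| ≤ R → |y| ≤ R → |ψ x y| ≤ M := by
  obtain ⟨C, hC⟩ := (IsCompact.exists_bound_of_continuousOn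
    ((isCompact_Icc (a := -R) (b := R)).prod (isCompact_Icc (a := -R) (b := R)))
    hψ.continuousOn)
  refine ⟨max C 0, le_max_right _ _, fun x y hx hy => ?_⟩
  have := hC (x, y) ⟨abs_le.mp hx, abs_le.mp hy⟩
  exact le_trans this (le_max_left _ _)

omit hψ in
/-- bound on `Ψ` -/
lemma aux_Psi_bound {M R : ℝ} (hM : ∀ x y : ℝ, |x| ≤ R → |y| ≤ R → |ψ x y| ≤ M)
    {k y : ℝ} (hk : |k| ≤ R) (hy : |y| ≤ R) :
    |∫ x in k..y, ψ x y| ≤ M * |y - k| := by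
  have := intervalIntegral.norm_integral_le_of_norm_le_const (C := M)
    (f := fun x => ψ x y) (a := k) (b := y) (fun x hx => by
      have hxR : |x| ≤ R := le_trans (aux_abs_mem hx) (max_le hk hy)
      exact hM x y hxR hy)
  simpa [Real.norm_eq_abs] using this

omit hψ in
/-- quadratic bound on `F` -/
lemma aux_F_bound {M R : ℝ} (hM : ∀ x y : ℝ, |x| ≤ R → |y| ≤ R → |ψ x y| ≤ M)
    (hM0 : 0 ≤ M) {k y : ℝ} (hk : |k| ≤ R) (hy : |y| ≤ R) :
    |∫ x in k..y, (x - k) * ψ x y| ≤ M * |y - k| ^ 2 := by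
  have := intervalIntegral.norm_integral_le_of_norm_le_const (C := M * |y - k|)
    (f := fun x => (x - k) * ψ x y) (a := k) (b := y) (fun x hx => by
      have hxR : |x| ≤ R := le_trans (aux_abs_mem hx) (max_le hk hy)
      have h1 : |x - k| ≤ |y - k| := aux_dist_mem hx
      have h2 : |ψ x y| ≤ M := hM x y hxR hy
      calc ‖(x - k) * ψ x y‖ = |x - k| * |ψ x y| := abs_mul _ _
        _ ≤ |y - k| * M := by
            apply mul_le_mul h1 h2 (abs_nonneg _)
            exact abs_nonneg _
        _ = M * |y - k| := mul_comm _ _)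
  calc |∫ x in k..y, (x - k) * ψ x y| ≤ M * |y - k| * |y - k| := by
        simpa [Real.norm_eq_abs] using this
    _ = M * |y - k| ^ 2 := by ring

include hψ in
/-- Lemma A: derivative in `k` of `F k y`. -/
lemma aux_lemA (k y : ℝ) :
    HasDerivAt (fun k' => ∫ x in k'..y, (x - k') * ψ x y)
      (-(∫ x in k..y, ψ x y)) k := by
  have hcψ : Continuous fun x => ψ x y := aux_cont_x hψ y
  have hcxψ : Continuous fun x => x * ψ x y := continuous_id.mul hcψ
  have h1 : HasDerivAt (fun k' => ∫ x in k'..y, x * ψ x y) (-(k * ψ k y)) k :=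
    intervalIntegral.integral_hasDerivAt_left (hcxψ.intervalIntegrable _ _)
      (hcxψ.stronglyMeasurableAtFilter _ _) hcxψ.continuousAt
  have h2 : HasDerivAt (fun k' => ∫ x in k'..y, ψ x y) (-(ψ k y)) k :=
    intervalIntegral.integral_hasDerivAt_left (hcψ.intervalIntegrable _ _)
      (hcψ.stronglyMeasurableAtFilter _ _) hcψ.continuousAt
  have h3 := (hasDerivAt_id k).mul h2
  have h4 := h1.sub h3
  have heq : (fun k' => ∫ x in k'..y, (x - k') * ψ x y)
      = fun k' => (∫ x in k'..y, x * ψ x y) - k' * ∫ x in k'..y, ψ x y := by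
    funext k'
    rw [← intervalIntegral.integral_const_mul,
      ← intervalIntegral.integral_sub (g := fun x => k' * ψ x y) (hcxψ.intervalIntegrable _ _)
        ((continuous_const.mul hcψ).intervalIntegrable _ _)]
    congr 1
    funext x
    ring
  rw [heq]
  have h5 : HasDerivAt (fun k' => (∫ x in k'..y, x * ψ x y) - k' * ∫ x in k'..y, ψ x y)
      (-(k * ψ k y) - ((1 * ∫ x in k..y, ψ x y) + k * -ψ k y)) k := h4
  convert h5 using 1
  ring

include hψ in
/-- Lemma B: derivative under the integral sign (fixed endpoints). -/
lemma aux_lemB (c d k : ℝ) :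
    HasDerivAt (fun k' => ∫ y in c..d, ∫ x in k'..y, (x - k') * ψ x y)
      (∫ y in c..d, -(∫ x in k..y, ψ x y)) k := by
  set R : ℝ := max (|k| + 1) (max |c| |d|) with hR
  obtain ⟨M, hM0, hM⟩ := aux_bound hψ R
  have key := intervalIntegral.hasDerivAt_integral_of_dominated_loc_of_deriv_le
    (F := fun k' y => ∫ x in k'..y, (x - k') * ψ x y)
    (F' := fun k' y => -(∫ x in k'..y, ψ x y))
    (x₀ := k) (a := c) (b := d) (μ := volume)
    (bound := fun _ => M * (2 * R))
    (s := Metric.ball k 1) (Metric.ball_mem_nhds k one_pos)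
    (Eventually.of_forall fun k' => ((aux_cont_F hψ k').aestronglyMeasurable).restrict)
    ((aux_cont_F hψ k).intervalIntegrable _ _)
    (((aux_cont_Psi hψ k).neg).aestronglyMeasurable.restrict)
    (Eventually.of_forall fun y hy k' hk' => by
      have hyR : |y| ≤ R := le_trans (aux_abs_mem hy) (le_max_right _ _)
      have hk'R : |k'| ≤ R := by
        have : |k' - k| < 1 := by simpa [Real.dist_eq] using Metric.mem_ball.mp hk'
        have : |k'| ≤ |k| + 1 := by
          calc |k'| = |k + (k' - k)| := by ring_nf
            _ ≤ |k| + |k' - k| := abs_add_le _ _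
            _ ≤ |k| + 1 := by linarith
        exact le_trans this (le_max_left _ _)
      calc ‖-(∫ x in k'..y, ψ x y)‖ = |∫ x in k'..y, ψ x y| := by
            rw [norm_neg]; rfl
        _ ≤ M * |y - k'| := aux_Psi_bound hM hk'R hyR
        _ ≤ M * (2 * R) := by
            apply mul_le_mul_of_nonneg_left _ hM0
            calc |y - k'| ≤ |y| + |k'| := abs_sub _ _
              _ ≤ R + R := add_le_add hyR hk'R
              _ = 2 * R := by ring)
    (intervalIntegrable_const)
    (Eventually.of_forall fun y _ k' _ => aux_lemA hψ k' y)
  exact key.2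

/-- Squeeze: quadratic bound near a point gives zero derivative. -/
lemma aux_sq_deriv {f : ℝ → ℝ} {k C : ℝ} (hC : 0 ≤ C) (hf0 : f k = 0)
    (h : ∀ k', |k' - k| ≤ 1 → |f k'| ≤ C * (k' - k) ^ 2) : HasDerivAt f 0 k := by
  rw [hasDerivAt_iff_isLittleO]
  simp only [hf0, sub_zero, smul_zero]
  rw [Asymptotics.isLittleO_iff]
  intro c hc
  have hδ : (0 : ℝ) < min 1 (c / (C + 1)) := by positivity
  filter_upwards [Metric.ball_mem_nhds k hδ] with x hx
  have hd : |x - k| < min 1 (c / (C + 1)) := by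
    simpa [Real.dist_eq] using Metric.mem_ball.mp hx
  have hd1 : |x - k| ≤ 1 := le_of_lt (lt_of_lt_of_le hd (min_le_left _ _))
  have hd2 : |x - k| ≤ c / (C + 1) := le_of_lt (lt_of_lt_of_le hd (min_le_right _ _))
  have hb := h x hd1
  rw [Real.norm_eq_abs, Real.norm_eq_abs]
  calc |f x| ≤ C * (x - k) ^ 2 := hb
    _ = C * |x - k| * |x - k| := by rw [← sq_abs (x - k)]; ring
    _ ≤ C * (c / (C + 1)) * |x - k| := by
        apply mul_le_mul_of_nonneg_right _ (abs_nonneg _)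
        exact mul_le_mul_of_nonneg_left hd2 hC
    _ ≤ c * |x - k| := by
        apply mul_le_mul_of_nonneg_right _ (abs_nonneg _)
        rw [div_eq_mul_inv]
        have h1 : C * (c * (C + 1)⁻¹) = c * (C / (C + 1)) := by ring
        rw [h1]
        have : C / (C + 1) ≤ 1 := by
          rw [div_le_one (by linarith)]; linarith
        calc c * (C / (C + 1)) ≤ c * 1 := by
              exact mul_le_mul_of_nonneg_left this (le_of_lt hc)
          _ = c := mul_one c
  
include hψ in
lemma aux_lemQ (k : ℝ) :
    HasDerivAt (fun k' => ∫ y in k..k', ∫ x in k'..y, (x - k') * ψ x y) 0 k := by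
  set R : ℝ := |k| + 1 with hR
  obtain ⟨M, hM0, hM⟩ := aux_bound hψ R
  apply aux_sq_deriv (C := 4 * M) (by positivity)
  · simp
  · intro k' hk'
    have hk'R : |k'| ≤ R := by
      calc |k'| = |k + (k' - k)| := by ring_nf
        _ ≤ |k| + |k' - k| := abs_add_le _ _
        _ ≤ |k| + 1 := by linarith
    have hkR : |k| ≤ R := by rw [hR]; linarith [abs_nonneg k]
    have hb : ∀ y ∈ Set.uIoc k k', |∫ x in k'..y, (x - k') * ψ x y|
        ≤ 4 * M * (k' - k) ^ 2 := by
      intro y hy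
      have hyR : |y| ≤ R := le_trans (aux_abs_mem hy) (max_le hkR hk'R)
      have h1 : |y - k'| ≤ 2 * |k' - k| := by
        have := aux_dist_mem hy
        calc |y - k'| ≤ |y - k| + |k - k'| := abs_sub_le _ _ _
          _ ≤ |k' - k| + |k - k'| := by linarith [this]
          _ = 2 * |k' - k| := by rw [abs_sub_comm k k']; ring
      calc |∫ x in k'..y, (x - k') * ψ x y| ≤ M * |y - k'| ^ 2 :=
            aux_F_bound hM hM0 hk'R hyR
        _ ≤ M * (2 * |k' - k|) ^ 2 := by
            apply mul_le_mul_of_nonneg_left _ hM0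
            exact pow_le_pow_left₀ (abs_nonneg _) h1 2
        _ = 4 * M * (k' - k) ^ 2 := by rw [← sq_abs (k' - k)]; ring
    have := intervalIntegral.norm_integral_le_of_norm_le_const
      (C := 4 * M * (k' - k) ^ 2)
      (f := fun y => ∫ x in k'..y, (x - k') * ψ x y) (a := k) (b := k')
      (fun y hy => by simpa [Real.norm_eq_abs] using hb y hy)
    calc |∫ y in k..k', ∫ x in k'..y, (x - k') * ψ x y|
        ≤ 4 * M * (k' - k) ^ 2 * |k' - k| := by
          simpa [Real.norm_eq_abs] using this
      _ ≤ 4 * M * (k' - k) ^ 2 * 1 := by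
          apply mul_le_mul_of_nonneg_left hk' (by positivity)
      _ = 4 * M * (k' - k) ^ 2 := mul_one _

include hψ in
/-- Lemma J: derivative of `k' ↦ ∫ y in a..k', F k' y`. -/
lemma aux_lemJ (a k : ℝ) :
    HasDerivAt (fun k' => ∫ y in a..k', ∫ x in k'..y, (x - k') * ψ x y)
      (∫ y in a..k, -(∫ x in k..y, ψ x y)) k := by
  have heq : (fun k' => ∫ y in a..k', ∫ x in k'..y, (x - k') * ψ x y)
      = fun k' => (∫ y in a..k, ∫ x in k'..y, (x - k') * ψ x y)
        + ∫ y in k..k', ∫ x in k'..y, (x - k') * ψ x y := by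
    funext k'
    rw [intervalIntegral.integral_add_adjacent_intervals
      ((aux_cont_F hψ k').intervalIntegrable _ _)
      ((aux_cont_F hψ k').intervalIntegrable _ _)]
  rw [heq]
  have := (aux_lemB hψ a k k).add (aux_lemQ hψ k)
  simpa [Pi.add_def] using this

include hψ in
/-- Lemma G: derivative of `k' ↦ ∫ y in a..max k' a, F k' y`. -/
lemma aux_lemG (a k : ℝ) :
    HasDerivAt (fun k' => ∫ y in a..max k' a, ∫ x in k'..y, (x - k') * ψ x y)
      (∫ y in a..max k a, -(∫ x in k..y, ψ x y)) k := by
  rcases lt_trichotomy k a with hka | hka | hka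
  · -- k < a : locally constant 0
    have hev : (fun k' => ∫ y in a..max k' a, ∫ x in k'..y, (x - k') * ψ x y)
        =ᶠ[nhds k] fun _ => (0 : ℝ) := by
      filter_upwards [Iio_mem_nhds hka] with k' hk'
      rw [max_eq_right (le_of_lt hk'), intervalIntegral.integral_same]
    rw [max_eq_right (le_of_lt hka), intervalIntegral.integral_same]
    exact (hasDerivAt_const k (0 : ℝ)).congr_of_eventuallyEq hev
  · -- k = a : squeeze
    subst hka
    rw [max_self, intervalIntegral.integral_same]
    set R : ℝ := |k| + 1 with hR
    obtain ⟨M, hM0, hM⟩ := aux_bound hψ R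
    apply aux_sq_deriv (C := M) hM0
    · simp
    · intro k' hk'
      have hk'R : |k'| ≤ R := by
        calc |k'| = |k + (k' - k)| := by ring_nf
          _ ≤ |k| + |k' - k| := abs_add_le _ _
          _ ≤ |k| + 1 := by linarith
      have hkR : |k| ≤ R := by rw [hR]; linarith [abs_nonneg k]
      rcases le_total k' k with h | h
      · rw [max_eq_right h, intervalIntegral.integral_same]
        simp [abs_nonneg]
        positivity
      · rw [max_eq_left h]
        have hb : ∀ y ∈ Set.uIoc k k', |∫ x in k'..y, (x - k') * ψ x y|
            ≤ M * (k' - k) ^ 2 := by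
          intro y hy
          have hyR : |y| ≤ R := le_trans (aux_abs_mem hy) (max_le hkR hk'R)
          rw [Set.uIoc_of_le h] at hy
          have h1 : |y - k'| ≤ |k' - k| := by
            rw [abs_of_nonpos (by linarith [hy.2]), abs_of_nonneg (by linarith)]
            linarith [hy.1]
          calc |∫ x in k'..y, (x - k') * ψ x y| ≤ M * |y - k'| ^ 2 :=
                aux_F_bound hM hM0 hk'R hyR
            _ ≤ M * |k' - k| ^ 2 := by
                apply mul_le_mul_of_nonneg_left _ hM0
                exact pow_le_pow_left₀ (abs_nonneg _) h1 2
            _ = M * (k' - k) ^ 2 := by rw [sq_abs]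
        have := intervalIntegral.norm_integral_le_of_norm_le_const
          (C := M * (k' - k) ^ 2)
          (f := fun y => ∫ x in k'..y, (x - k') * ψ x y) (a := k) (b := k')
          (fun y hy => by simpa [Real.norm_eq_abs] using hb y hy)
        calc |∫ y in k..k', ∫ x in k'..y, (x - k') * ψ x y|
            ≤ M * (k' - k) ^ 2 * |k' - k| := by
              simpa [Real.norm_eq_abs] using this
          _ ≤ M * (k' - k) ^ 2 * 1 := by
              apply mul_le_mul_of_nonneg_left hk' (by positivity)
          _ = M * (k' - k) ^ 2 := mul_one _
  · -- a < k : agrees with aux_lemJ near k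
    have hev : (fun k' => ∫ y in a..k', ∫ x in k'..y, (x - k') * ψ x y)
        =ᶠ[nhds k] fun k' => ∫ y in a..max k' a, ∫ x in k'..y, (x - k') * ψ x y := by
      filter_upwards [Ioi_mem_nhds hka] with k' hk'
      rw [max_eq_left (le_of_lt hk')]
    rw [max_eq_left (le_of_lt hka)]
    exact (aux_lemJ hψ a k).congr_of_eventuallyEq hev.symm

end Aux

/-- For all `0 < K < B` with `B > S₀` and all `T ≥ 0`,
`∂²C/∂K∂B (K,B,T) = - D(T) ∫_K^B φ(x,B,T) dx`. -/
theorem stmt_1 (S₀ : ℝ) (hS₀ : 0 < S₀) (r : ℝ → ℝ) (hr : Continuous r)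
    (φ : ℝ → ℝ → ℝ → ℝ)
    (hφcont : ∀ t : ℝ, Continuous fun p : ℝ × ℝ => φ p.1 p.2 t)
    (hφbd : ∀ s : Set (ℝ × ℝ × ℝ), IsCompact s → ∃ M : ℝ, ∀ p ∈ s, |φ p.1 p.2.1 p.2.2| ≤ M) :
    ∀ K B T : ℝ, 0 < K → K < B → S₀ < B → 0 ≤ T →
      deriv (fun B' => deriv (fun K' => upOutCall S₀ r φ K' B' T) K) B
        = -(disc r T) * ∫ x in K..B, φ x B T := by
  intro K B T hK hKB hSB hT
  have hψ : Continuous fun p : ℝ × ℝ => φ p.1 p.2 T := hφcont T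
  -- Step 1: inner derivative formula, valid for every B'
  have step1 : ∀ B' : ℝ, deriv (fun K' => upOutCall S₀ r φ K' B' T) K
      = disc r T * ∫ y in (max K S₀)..B', -(∫ x in K..y, φ x y T) := by
    intro B'
    have hsplit : (fun K' => ∫ y in (max K' S₀)..B', ∫ x in K'..y, (x - K') * φ x y T)
        = fun K' => (∫ y in S₀..B', ∫ x in K'..y, (x - K') * φ x y T)
          - ∫ y in S₀..max K' S₀, ∫ x in K'..y, (x - K') * φ x y T := by
      funext K'
      have := intervalIntegral.integral_add_adjacent_intervals (μ := volume)
        (a := S₀) (b := max K' S₀) (c := B')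
        ((aux_cont_F (ψ := fun x y => φ x y T) hψ K').intervalIntegrable _ _)
        ((aux_cont_F (ψ := fun x y => φ x y T) hψ K').intervalIntegrable _ _)
      linarith [this]
    have hH : HasDerivAt (fun K' => ∫ y in (max K' S₀)..B', ∫ x in K'..y, (x - K') * φ x y T)
        (∫ y in (max K S₀)..B', -(∫ x in K..y, φ x y T)) K := by
      rw [hsplit]
      have h1 := aux_lemB (ψ := fun x y => φ x y T) hψ S₀ B' K
      have h2 := aux_lemG (ψ := fun x y => φ x y T) hψ S₀ K
      have h3 := h1.sub h2
      have hval : (∫ y in S₀..B', -(∫ x in K..y, φ x y T))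
          - (∫ y in S₀..max K S₀, -(∫ x in K..y, φ x y T))
          = ∫ y in (max K S₀)..B', -(∫ x in K..y, φ x y T) := by
        have := intervalIntegral.integral_add_adjacent_intervals (μ := volume)
          (a := S₀) (b := max K S₀) (c := B')
          (f := fun y => -(∫ x in K..y, φ x y T))
          (((aux_cont_Psi (ψ := fun x y => φ x y T) hψ K).neg).intervalIntegrable _ _)
          (((aux_cont_Psi (ψ := fun x y => φ x y T) hψ K).neg).intervalIntegrable _ _)
        linarith [this]
      rw [← hval]
      exact h3
    have : HasDerivAt (fun K' => upOutCall S₀ r φ K' B' T)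
        (disc r T * ∫ y in (max K S₀)..B', -(∫ x in K..y, φ x y T)) K := by
      unfold upOutCall
      exact hH.const_mul (disc r T)
    exact this.deriv
  -- Step 2: outer derivative via FTC
  have heqfun : (fun B' => deriv (fun K' => upOutCall S₀ r φ K' B' T) K)
      = fun B' => disc r T * ∫ y in (max K S₀)..B', -(∫ x in K..y, φ x y T) :=
    funext step1
  rw [heqfun]
  have hcont : Continuous fun y => -(∫ x in K..y, φ x y T) := (aux_cont_Psi (ψ := fun x y => φ x y T) hψ K).neg
  have hftc : HasDerivAt (fun B' => ∫ y in (max K S₀)..B', -(∫ x in K..y, φ x y T))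
      (-(∫ x in K..B, φ x B T)) B :=
    intervalIntegral.integral_hasDerivAt_right (hcont.intervalIntegrable _ _)
      (hcont.stronglyMeasurableAtFilter _ _) hcont.continuousAt
  have := (hftc.const_mul (disc r T)).deriv
  rw [this]
  ring
end

section
/- For all 0 < K < B with B > S₀ and all T ≥ 0, the third mixed derivative of the up-and-out call price satisfies ∂³C/∂K²∂B (K,B,T) = D(T) φ(K,B,T). -/
open MeasureTheory Real Filter intervalIntegral Set Asymptotics Topology

-- continuity of parametric interval integral with both endpoints given by the parameter
theorem cont_of_cont {g : ℝ × ℝ → ℝ → ℝ}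
    (hg : Continuous fun q : (ℝ × ℝ) × ℝ => g q.1 q.2) :
    Continuous fun p : ℝ × ℝ => ∫ x in p.1..p.2, g p x := by
  have hint : ∀ (p : ℝ × ℝ) (u v : ℝ), IntervalIntegrable (g p) volume u v := fun p u v =>
    (hg.comp (continuous_const.prodMk continuous_id)).intervalIntegrable u v
  have h1 : (fun p : ℝ × ℝ => ∫ x in p.1..p.2, g p x)
      = fun p : ℝ × ℝ => (∫ x in (0:ℝ)..p.2, g p x) - ∫ x in (0:ℝ)..p.1, g p x := by
    funext p
    exact (integral_interval_sub_left (hint p 0 p.2) (hint p 0 p.1)).symm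
  rw [h1]
  exact (continuous_parametric_intervalIntegral_of_continuous hg continuous_snd).sub
    (continuous_parametric_intervalIntegral_of_continuous hg continuous_fst)

-- a bound |∫_{p.1}^{p.2} g p| ≤ M |p.2 - p.1| on compact sets
theorem van_of_cont {g : ℝ × ℝ → ℝ → ℝ}
    (hg : Continuous fun q : (ℝ × ℝ) × ℝ => g q.1 q.2) :
    ∀ s : Set (ℝ × ℝ), IsCompact s → ∃ M : ℝ, ∀ p ∈ s,
      |∫ x in p.1..p.2, g p x| ≤ M * |p.2 - p.1| := by
  intro s hs
  obtain ⟨A, hA⟩ := hs.isBounded.subset_closedBall 0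
  obtain ⟨M, hM⟩ := ((isCompact_closedBall (0 : ℝ × ℝ) A).prod
    (isCompact_Icc (a := -A) (b := A))).exists_bound_of_continuousOn hg.continuousOn
  refine ⟨M, fun p hp => ?_⟩
  have h1 : |p.1| ≤ A := by
    have := hA hp; rw [Metric.mem_closedBall, dist_zero_right] at this
    exact le_trans (norm_fst_le p) this
  have h2 : |p.2| ≤ A := by
    have := hA hp; rw [Metric.mem_closedBall, dist_zero_right] at this
    exact le_trans (norm_snd_le p) this
  have := intervalIntegral.norm_integral_le_of_norm_le_const (a := p.1) (b := p.2)
    (C := M) (f := g p) (fun x hx => by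
      have hx' : x ∈ Set.Icc (-A) A :=
        uIcc_subset_Icc (by simpa [abs_le] using h1) (by simpa [abs_le] using h2)
          (uIoc_subset_uIcc hx)
      exact hM (p, x) ⟨hA hp, hx'⟩)
  simpa [Real.norm_eq_abs] using this

theorem cont_left {F : ℝ → ℝ → ℝ} (hF : Continuous fun p : ℝ × ℝ => F p.1 p.2) (t : ℝ) :
    Continuous fun y => F t y := hF.comp (continuous_const.prodMk continuous_id)

-- differentiation under the integral sign, fixed limits
theorem paramDeriv {F F' : ℝ → ℝ → ℝ}
    (hF : Continuous fun p : ℝ × ℝ => F p.1 p.2)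
    (hF' : Continuous fun p : ℝ × ℝ => F' p.1 p.2)
    (hd : ∀ y t : ℝ, HasDerivAt (fun t => F t y) (F' t y) t)
    (a b t₀ : ℝ) :
    HasDerivAt (fun t => ∫ y in a..b, F t y) (∫ y in a..b, F' t₀ y) t₀ := by
  obtain ⟨M, hM⟩ := ((isCompact_closedBall t₀ 1).prod
    (isCompact_uIcc (a := a) (b := b))).exists_bound_of_continuousOn hF'.continuousOn
  refine (intervalIntegral.hasDerivAt_integral_of_dominated_loc_of_deriv_le
      (F := F) (F' := F') (bound := fun _ => M) (Metric.ball_mem_nhds t₀ one_pos) ?_ ?_ ?_ ?_ ?_ ?_).2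
  · exact Eventually.of_forall fun t => (cont_left hF t).aestronglyMeasurable
  · exact (cont_left hF t₀).intervalIntegrable _ _
  · exact (cont_left hF' t₀).aestronglyMeasurable
  · refine ae_of_all _ fun y hy t ht => ?_
    exact hM (t, y) ⟨Metric.ball_subset_closedBall ht, uIoc_subset_uIcc hy⟩
  · exact intervalIntegrable_const
  · exact ae_of_all _ fun y _ t _ => hd y t

theorem mem_uIcc_abs {a b y : ℝ} (h : y ∈ Set.uIcc a b) : |y - a| ≤ |b - a| := by
  rw [Set.mem_uIcc] at h
  rw [abs_le]
  rcases h with ⟨h1, h2⟩ | ⟨h1, h2⟩ <;>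
    exact ⟨by nlinarith [neg_abs_le (b - a), le_abs_self (b - a), abs_nonneg (b - a)],
      by nlinarith [neg_abs_le (b - a), le_abs_self (b - a), abs_nonneg (b - a)]⟩

theorem hasDerivAt_of_sq_bound {R : ℝ → ℝ} {t₀ C : ℝ} (h0 : R t₀ = 0)
    (hb : ∀ᶠ t in 𝓝 t₀, |R t| ≤ C * (t - t₀) ^ 2) : HasDerivAt R 0 t₀ := by
  rw [hasDerivAt_iff_isLittleO]
  have h2 : (fun t : ℝ => t - t₀) =o[𝓝 t₀] (fun _ => (1 : ℝ)) := by
    rw [Asymptotics.isLittleO_one_iff]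
    simpa using (continuous_id.tendsto t₀).sub (tendsto_const_nhds (x := t₀))
  have h1 : (fun t : ℝ => (t - t₀) ^ 2) =o[𝓝 t₀] fun t => t - t₀ := by
    have := h2.mul_isBigO (Asymptotics.isBigO_refl (fun t : ℝ => t - t₀) (𝓝 t₀))
    simpa [pow_two] using this
  have h3 : R =O[𝓝 t₀] fun t => (t - t₀) ^ 2 := by
    rw [Asymptotics.isBigO_iff]
    refine ⟨C, ?_⟩
    filter_upwards [hb] with t ht
    simpa [Real.norm_eq_abs, abs_of_nonneg (sq_nonneg (t - t₀))] using ht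
  simpa [h0] using h3.trans_isLittleO h1
theorem maxDeriv {F F' : ℝ → ℝ → ℝ}
    (hF : Continuous fun p : ℝ × ℝ => F p.1 p.2)
    (hF' : Continuous fun p : ℝ × ℝ => F' p.1 p.2)
    (hd : ∀ y t : ℝ, HasDerivAt (fun t => F t y) (F' t y) t)
    (hvan : ∀ s : Set (ℝ × ℝ), IsCompact s → ∃ M : ℝ, ∀ p ∈ s,
      |F p.1 p.2| ≤ M * |p.2 - p.1|)
    (c t₀ : ℝ) :
    HasDerivAt (fun t => ∫ y in c..max t c, F t y)
      (∫ y in c..max t₀ c, F' t₀ y) t₀ := by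
  have hint : ∀ (t u v : ℝ), IntervalIntegrable (fun y => F t y) volume u v :=
    fun t u v => (cont_left hF t).intervalIntegrable u v
  have eq1 : ∀ t, ∫ y in c..max t c, F t y
      = (∫ y in c..max t₀ c, F t y) + ∫ y in max t₀ c..max t c, F t y :=
    fun t => (integral_add_adjacent_intervals (hint t _ _) (hint t _ _)).symm
  have d1 : HasDerivAt (fun t => ∫ y in c..max t₀ c, F t y)
      (∫ y in c..max t₀ c, F' t₀ y) t₀ := paramDeriv hF hF' hd _ _ _
  have d2 : HasDerivAt (fun t => ∫ y in max t₀ c..max t c, F t y) 0 t₀ := by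
    rcases lt_or_ge t₀ c with h | h
    · have hev : (fun t => ∫ y in max t₀ c..max t c, F t y) =ᶠ[𝓝 t₀] fun _ => (0 : ℝ) := by
        filter_upwards [eventually_lt_nhds h] with t ht
        rw [max_eq_right ht.le, max_eq_right h.le, intervalIntegral.integral_same]
      exact (hasDerivAt_const t₀ (0 : ℝ)).congr_of_eventuallyEq hev
    · obtain ⟨M, hM⟩ := hvan (Set.Icc (t₀ - 1) (t₀ + 1) ×ˢ Set.Icc (t₀ - 1) (t₀ + 1))
        (isCompact_Icc.prod isCompact_Icc)
      apply hasDerivAt_of_sq_bound (C := 2 * |M|)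
      · rw [max_eq_left h, intervalIntegral.integral_same]
      · have hball : Metric.closedBall t₀ 1 ∈ 𝓝 t₀ := Metric.closedBall_mem_nhds t₀ one_pos
        filter_upwards [hball] with t ht
        rw [Metric.mem_closedBall, Real.dist_eq] at ht
        rw [max_eq_left h]
        have hmax : |max t c - t₀| ≤ |t - t₀| := by
          have := abs_max_sub_max_le_abs t t₀ c
          rwa [max_eq_left h] at this
        have key : ∀ y ∈ Set.uIoc t₀ (max t c), ‖F t y‖ ≤ |M| * (2 * |t - t₀|) := by
          intro y hy
          have hy' : |y - t₀| ≤ |t - t₀| := le_trans (mem_uIcc_abs (uIoc_subset_uIcc hy)) hmax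
          have hts : (t, y) ∈ Set.Icc (t₀ - 1) (t₀ + 1) ×ˢ Set.Icc (t₀ - 1) (t₀ + 1) := by
            constructor
            · simp only [Set.mem_Icc]; rw [abs_le] at ht; constructor <;> linarith [ht.1, ht.2]
            · simp only [Set.mem_Icc]
              have : |y - t₀| ≤ 1 := le_trans hy' ht
              rw [abs_le] at this; constructor <;> linarith [this.1, this.2]
          have h1 := hM (t, y) hts
          have h2 : |y - t| ≤ 2 * |t - t₀| := by
            have := abs_sub_abs_le_abs_sub y t
            calc |y - t| ≤ |y - t₀| + |t₀ - t| := abs_sub_le y t₀ t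
              _ ≤ |t - t₀| + |t - t₀| := by rw [abs_sub_comm t₀ t]; linarith
              _ = 2 * |t - t₀| := by ring
          calc ‖F t y‖ = |F t y| := rfl
            _ ≤ M * |y - t| := h1
            _ ≤ |M| * |y - t| := by
                have := le_abs_self M; nlinarith [abs_nonneg (y - t)]
            _ ≤ |M| * (2 * |t - t₀|) := by
                have := abs_nonneg M; nlinarith
        have := intervalIntegral.norm_integral_le_of_norm_le_const key
        calc |∫ y in t₀..max t c, F t y| ≤ |M| * (2 * |t - t₀|) * |max t c - t₀| := this
          _ ≤ |M| * (2 * |t - t₀|) * |t - t₀| := by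
              exact mul_le_mul_of_nonneg_left hmax (by positivity)
          _ = 2 * |M| * (t - t₀) ^ 2 := by rw [← sq_abs]; ring
  have hsum := d1.add d2
  rw [add_zero] at hsum
  exact hsum.congr_of_eventuallyEq (Eventually.of_forall eq1)

theorem keyDeriv {F F' : ℝ → ℝ → ℝ}
    (hF : Continuous fun p : ℝ × ℝ => F p.1 p.2)
    (hF' : Continuous fun p : ℝ × ℝ => F' p.1 p.2)
    (hd : ∀ y t : ℝ, HasDerivAt (fun t => F t y) (F' t y) t)
    (hvan : ∀ s : Set (ℝ × ℝ), IsCompact s → ∃ M : ℝ, ∀ p ∈ s,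
      |F p.1 p.2| ≤ M * |p.2 - p.1|)
    (c b t₀ : ℝ) :
    HasDerivAt (fun t => ∫ y in max t c..b, F t y)
      (∫ y in max t₀ c..b, F' t₀ y) t₀ := by
  have hint : ∀ (G : ℝ → ℝ → ℝ), (Continuous fun p : ℝ × ℝ => G p.1 p.2) →
      ∀ (t u v : ℝ), IntervalIntegrable (fun y => G t y) volume u v :=
    fun G hG t u v => (cont_left hG t).intervalIntegrable u v
  have eq1 : ∀ t, ∫ y in max t c..b, F t y
      = (∫ y in c..b, F t y) - ∫ y in c..max t c, F t y :=
    fun t => (integral_interval_sub_left (hint F hF t _ _) (hint F hF t _ _)).symm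
  have d1 := paramDeriv hF hF' hd c b t₀
  have d2 := maxDeriv hF hF' hd hvan c t₀
  have hsum := d1.sub d2
  have := hsum.congr_of_eventuallyEq (Eventually.of_forall eq1)
  rwa [integral_interval_sub_left (hint F' hF' t₀ _ _) (hint F' hF' t₀ _ _)] at this

theorem derivPsi {f : ℝ → ℝ → ℝ} (hf : Continuous fun p : ℝ × ℝ => f p.1 p.2)
    (y t : ℝ) :
    HasDerivAt (fun t => ∫ x in t..y, (x - t) * f x y) (-(∫ x in t..y, f x y)) t := by
  have hcy : Continuous fun x => f x y := hf.comp (continuous_id.prodMk continuous_const)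
  have hc1 : Continuous fun x => x * f x y := continuous_id.mul hcy
  have h1 : HasDerivAt (fun t => ∫ x in t..y, x * f x y) (-(t * f t y)) t :=
    intervalIntegral.integral_hasDerivAt_left (hc1.intervalIntegrable _ _)
      (hc1.stronglyMeasurableAtFilter _ _) hc1.continuousAt
  have h2 : HasDerivAt (fun t => ∫ x in t..y, f x y) (-(f t y)) t :=
    intervalIntegral.integral_hasDerivAt_left (hcy.intervalIntegrable _ _)
      (hcy.stronglyMeasurableAtFilter _ _) hcy.continuousAt
  have h3 : HasDerivAt (fun t => t * ∫ x in t..y, f x y)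
      (1 * (∫ x in t..y, f x y) + t * -(f t y)) t := (hasDerivAt_id t).mul h2
  have h4 := h1.sub h3
  have heq : ∀ t, ∫ x in t..y, (x - t) * f x y
      = (∫ x in t..y, x * f x y) - t * ∫ x in t..y, f x y := by
    intro t
    rw [← intervalIntegral.integral_const_mul,
      ← intervalIntegral.integral_sub (hc1.intervalIntegrable _ _)
        (g := fun x => t * f x y) ((continuous_const.mul hcy).intervalIntegrable _ _)]
    congr 1; funext x; ring
  have h5 := h4.congr_of_eventuallyEq (Eventually.of_forall heq)
  exact h5.congr_deriv (by ring)
/-- For all `0 < K < B` with `B > S₀` and all `T ≥ 0`,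
`∂³C/∂K²∂B (K,B,T) = D(T) φ(K,B,T)`. -/
theorem stmt_2 (S₀ : ℝ) (hS₀ : 0 < S₀) (r : ℝ → ℝ) (hr : Continuous r)
    (φ : ℝ → ℝ → ℝ → ℝ)
    (hφdiff : ∀ t : ℝ, ContDiff ℝ 1 fun p : ℝ × ℝ => φ p.1 p.2 t)
    (hφbd : ∀ s : Set (ℝ × ℝ × ℝ), IsCompact s → ∃ M : ℝ, ∀ p ∈ s,
      |φ p.1 p.2.1 p.2.2| ≤ M ∧ ‖fderiv ℝ (fun q : ℝ × ℝ => φ q.1 q.2 p.2.2) (p.1, p.2.1)‖ ≤ M) :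
    ∀ K B T : ℝ, 0 < K → K < B → S₀ < B → 0 ≤ T →
      deriv (fun B' => deriv (deriv (fun K' => upOutCall S₀ r φ K' B' T)) K) B
        = disc r T * φ K B T := by
  intro K B T hK hKB hSB hT
  have hf : Continuous fun p : ℝ × ℝ => φ p.1 p.2 T := (hφdiff T).continuous
  have hgψ : Continuous fun q : (ℝ × ℝ) × ℝ => (q.2 - q.1.1) * φ q.2 q.1.2 T :=
    (continuous_snd.sub (continuous_fst.comp continuous_fst)).mul
      (hf.comp (continuous_snd.prodMk (continuous_snd.comp continuous_fst)))
  have hgh : Continuous fun q : (ℝ × ℝ) × ℝ => φ q.2 q.1.2 T :=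
    hf.comp (continuous_snd.prodMk (continuous_snd.comp continuous_fst))
  have hψcont : Continuous fun p : ℝ × ℝ => ∫ x in p.1..p.2, (x - p.1) * φ x p.2 T :=
    cont_of_cont (g := fun p x => (x - p.1) * φ x p.2 T) hgψ
  have hhcont : Continuous fun p : ℝ × ℝ => ∫ x in p.1..p.2, φ x p.2 T :=
    cont_of_cont (g := fun p x => φ x p.2 T) hgh
  have hvanψ := van_of_cont (g := fun p x => (x - p.1) * φ x p.2 T) hgψ
  have hvanh := van_of_cont (g := fun p x => φ x p.2 T) hgh
  have hdh : ∀ y t : ℝ, HasDerivAt (fun t => ∫ x in t..y, φ x y T) (-(φ t y T)) t := by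
    intro y t
    have hcy : Continuous fun x => φ x y T := hf.comp (continuous_id.prodMk continuous_const)
    exact intervalIntegral.integral_hasDerivAt_left (hcy.intervalIntegrable _ _)
      (hcy.stronglyMeasurableAtFilter _ _) hcy.continuousAt
  have key1 : ∀ B' t₀ : ℝ,
      HasDerivAt (fun t => ∫ y in max t S₀..B', ∫ x in t..y, (x - t) * φ x y T)
        (∫ y in max t₀ S₀..B', -(∫ x in t₀..y, φ x y T)) t₀ :=
    fun B' t₀ => keyDeriv (F := fun t y => ∫ x in t..y, (x - t) * φ x y T)
      (F' := fun t y => -(∫ x in t..y, φ x y T)) hψcont hhcont.neg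
      (fun y t => by exact derivPsi (f := fun x y => φ x y T) hf y t) hvanψ S₀ B' t₀
  have step1 : ∀ B' t₀ : ℝ, HasDerivAt (fun t => upOutCall S₀ r φ t B' T)
      (disc r T * ∫ y in max t₀ S₀..B', -(∫ x in t₀..y, φ x y T)) t₀ :=
    fun B' t₀ => (key1 B' t₀).const_mul (disc r T)
  have derivInner : ∀ B' : ℝ, deriv (fun t => upOutCall S₀ r φ t B' T)
      = fun t₀ => disc r T * ∫ y in max t₀ S₀..B', -(∫ x in t₀..y, φ x y T) :=
    fun B' => funext fun t₀ => (step1 B' t₀).deriv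
  have key2 : ∀ B' : ℝ,
      HasDerivAt (fun t => ∫ y in max t S₀..B', -(∫ x in t..y, φ x y T))
        (∫ y in max K S₀..B', φ K y T) K :=
    fun B' => keyDeriv (F := fun t y => -(∫ x in t..y, φ x y T))
      (F' := fun t y => φ t y T) hhcont.neg hf
      (fun y t => by simpa using (hdh y t).fun_neg)
      (fun s hs => (hvanh s hs).imp fun M hM p hp => by
        rw [abs_neg]; exact hM p hp) S₀ B' K
  have step2 : ∀ B' : ℝ,
      HasDerivAt (fun t₀ => disc r T * ∫ y in max t₀ S₀..B', -(∫ x in t₀..y, φ x y T))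
        (disc r T * ∫ y in max K S₀..B', φ K y T) K :=
    fun B' => (key2 B').const_mul (disc r T)
  have derivderiv : ∀ B' : ℝ, deriv (deriv (fun K' => upOutCall S₀ r φ K' B' T)) K
      = disc r T * ∫ y in max K S₀..B', φ K y T := by
    intro B'
    rw [derivInner B']
    exact (step2 B').deriv
  have hcK : Continuous fun y => φ K y T := hf.comp (continuous_const.prodMk continuous_id)
  have hfinal : HasDerivAt (fun B' => ∫ y in max K S₀..B', φ K y T) (φ K B T) B :=
    intervalIntegral.integral_hasDerivAt_right (hcK.intervalIntegrable _ _)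
      (hcK.stronglyMeasurableAtFilter _ _) hcK.continuousAt
  rw [show (fun B' => deriv (deriv (fun K' => upOutCall S₀ r φ K' B' T)) K)
      = fun B' => disc r T * ∫ y in max K S₀..B', φ K y T from funext derivderiv]
  exact (hfinal.const_mul (disc r T)).deriv
end

section
/- Suppose φ satisfies the diagonal boundary condition (DBC) for all B = y > S₀ and t > 0, and that the map (x,y) ↦ σ²(x,y,t) x² φ(x,y,t) is continuously differentiable. Then for every B > S₀ and t > 0: d/dB [ σ²(B,B,t) B² φ(B,B,t) ] = − [ ∂/∂x ( σ²(x,B,t) x² φ(x,B,t) ) ]_{x=B} + 2 μ(t) B φ(B,B,t). -/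
open MeasureTheory Real Filter

/-- If `φ` satisfies the diagonal boundary condition and `(x,y) ↦ σ²(x,y,t) x² φ(x,y,t)`
is continuously differentiable, then for every `B > S₀`, `t > 0`,
`d/dB [σ²(B,B,t) B² φ(B,B,t)]
  = - [∂/∂x (σ²(x,B,t) x² φ(x,B,t))]_{x=B} + 2 μ(t) B φ(B,B,t)`. -/
theorem stmt_3 (S₀ : ℝ) (hS₀ : 0 < S₀)
    (r q : ℝ → ℝ) (hr : Continuous r) (hq : Continuous q)
    (σ φ : ℝ → ℝ → ℝ → ℝ)
    (hσx : ∀ y t, ContDiff ℝ 2 fun x => σ x y t)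
    (hσy : ∀ x t, ContDiff ℝ 1 fun y => σ x y t)
    (hφ : ContDiff ℝ 2 fun p : ℝ × ℝ × ℝ => φ p.1 p.2.1 p.2.2)
    (hψ : ∀ t : ℝ, ContDiff ℝ 1 fun p : ℝ × ℝ => (σ p.1 p.2 t)^2 * p.1^2 * φ p.1 p.2 t)
    -- diagonal boundary condition at x = y > S₀, t > 0
    (hDBC : ∀ y t : ℝ, S₀ < y → 0 < t →
      deriv (fun x' => (σ x' y t)^2 * x'^2 * φ x' y t) y
        + (1/2) * deriv (fun y' => (σ y y' t)^2 * y^2 * φ y y' t) y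
        = (r t - q t) * y * φ y y t) :
    ∀ B t : ℝ, S₀ < B → 0 < t →
      deriv (fun b => (σ b b t)^2 * b^2 * φ b b t) B
        = - deriv (fun x => (σ x B t)^2 * x^2 * φ x B t) B
          + 2 * (r t - q t) * B * φ B B t := by
  intro B t hB ht
  set g : ℝ × ℝ → ℝ := fun p => (σ p.1 p.2 t)^2 * p.1^2 * φ p.1 p.2 t with hgdef
  have hG : HasFDerivAt g (fderiv ℝ g (B, B)) (B, B) :=
    (((hψ t).differentiable one_ne_zero) (B, B)).hasFDerivAt
  have hdiag : HasDerivAt (fun b : ℝ => (b, b)) ((1 : ℝ), (1 : ℝ)) B :=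
    HasDerivAt.prodMk (hasDerivAt_id B) (hasDerivAt_id B)
  have hxc : HasDerivAt (fun x : ℝ => (x, B)) ((1 : ℝ), (0 : ℝ)) B :=
    HasDerivAt.prodMk (hasDerivAt_id B) (hasDerivAt_const B B)
  have hyc : HasDerivAt (fun y : ℝ => (B, y)) ((0 : ℝ), (1 : ℝ)) B :=
    HasDerivAt.prodMk (hasDerivAt_const B B) (hasDerivAt_id B)
  have h1 := HasFDerivAt.comp_hasDerivAt (f := fun b : ℝ => (b, b)) B hG hdiag
  have h2 := HasFDerivAt.comp_hasDerivAt (f := fun x : ℝ => (x, B)) B hG hxc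
  have h3 := HasFDerivAt.comp_hasDerivAt (f := fun y : ℝ => (B, y)) B hG hyc
  have e1 : deriv (fun b => (σ b b t)^2 * b^2 * φ b b t) B
      = fderiv ℝ g (B, B) (1, 1) := h1.deriv
  have e2 : deriv (fun x => (σ x B t)^2 * x^2 * φ x B t) B
      = fderiv ℝ g (B, B) (1, 0) := h2.deriv
  have e3 : deriv (fun y => (σ B y t)^2 * B^2 * φ B y t) B
      = fderiv ℝ g (B, B) (0, 1) := h3.deriv
  have hsum : ((1 : ℝ), (1 : ℝ)) = ((1 : ℝ), (0 : ℝ)) + ((0 : ℝ), (1 : ℝ)) := by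
    simp [Prod.ext_iff]
  have hadd : fderiv ℝ g (B, B) (1, 1)
      = fderiv ℝ g (B, B) (1, 0) + fderiv ℝ g (B, B) (0, 1) := by
    rw [hsum, map_add]
  have hD := hDBC B t hB ht
  rw [e2, e3] at hD
  rw [e1, e2, hadd]
  linarith
end

section
/- Suppose φ satisfies the Kolmogorov forward equation (KFE) on Ω for all t > 0. Then for all 0 < K < B with B > S₀ and all T > 0: ∂²C/∂T∂B (K,B,T) = − r(T) ∂C/∂B (K,B,T) + μ(T) D(T) [ − B (B−K) φ(B,B,T) + ∫_K^B (x−K) φ(x,B,T) dx + K ∫_K^B φ(x,B,T) dx ] + ½ D(T) [ σ²(K,B,T) K² φ(K,B,T) − σ²(B,B,T) B² φ(B,B,T) ] + ½ D(T) (B−K) [ ∂/∂x ( σ²(x,B,T) x² φ(x,B,T) ) ]_{x=B}. -/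
open MeasureTheory Real Filter

set_option maxHeartbeats 1000000

/-- Intermediate identity in the proof of the forward equation: if `φ` satisfies the
Kolmogorov forward equation on `Ω` for all `t > 0`, then for all `0 < K < B`, `B > S₀`,
`T > 0`,
`∂²C/∂T∂B = - r(T) ∂C/∂B
  + μ(T) D(T) [ -B(B-K)φ(B,B,T) + ∫_K^B (x-K)φ dx + K ∫_K^B φ dx ]
  + ½ D(T) [σ²(K,B,T)K²φ(K,B,T) - σ²(B,B,T)B²φ(B,B,T)]
  + ½ D(T)(B-K) [∂/∂x(σ²(x,B,T)x²φ(x,B,T))]_{x=B}`. -/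
theorem stmt_5 (S₀ : ℝ) (hS₀ : 0 < S₀)
    (r q : ℝ → ℝ) (hr : Continuous r) (hq : Continuous q)
    (σ φ : ℝ → ℝ → ℝ → ℝ)
    (hσbd : ∃ M : ℝ, ∀ x y t, |σ x y t| ≤ M)
    (hσx : ∀ y t, ContDiff ℝ 2 fun x => σ x y t)
    (hσy : ∀ x t, ContDiff ℝ 1 fun y => σ x y t)
    (hσt : ∀ x y, Continuous fun t => σ x y t)
    (hφ : ContDiff ℝ 2 fun p : ℝ × ℝ × ℝ => φ p.1 p.2.1 p.2.2)
    (hφbd : ∃ M : ℝ, ∀ p : ℝ × ℝ × ℝ,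
      ‖fderiv ℝ (fun p : ℝ × ℝ × ℝ => φ p.1 p.2.1 p.2.2) p‖ ≤ M)
    -- Kolmogorov forward equation on Ω, t > 0
    (hKFE : ∀ x y t : ℝ, 0 < x → x < y → S₀ < y → 0 < t →
      deriv (fun t' => φ x y t') t
        + (r t - q t) * deriv (fun x' => x' * φ x' y t) x
        - (1/2) * deriv (deriv (fun x' => (σ x' y t)^2 * x'^2 * φ x' y t)) x = 0) :
    ∀ K B T : ℝ, 0 < K → K < B → S₀ < B → 0 < T →
      deriv (fun T' => deriv (fun B' => upOutCall S₀ r φ K B' T') B) T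
      = - r T * deriv (fun B' => upOutCall S₀ r φ K B' T) B
        + (r T - q T) * disc r T *
            (- B * (B - K) * φ B B T
              + (∫ x in K..B, (x - K) * φ x B T)
              + K * ∫ x in K..B, φ x B T)
        + (1/2) * disc r T *
            ((σ K B T)^2 * K^2 * φ K B T - (σ B B T)^2 * B^2 * φ B B T)
        + (1/2) * disc r T * (B - K)
            * deriv (fun x => (σ x B T)^2 * x^2 * φ x B T) B := by
  intro K B T hK hKB hSB hT
  obtain ⟨M₀, hM₀⟩ := hφbd
  set Φ : ℝ × ℝ × ℝ → ℝ := fun p => φ p.1 p.2.1 p.2.2 with hΦdef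
  set M : ℝ := max M₀ 0 with hMdef
  have hMnn : (0:ℝ) ≤ M := le_max_right _ _
  have hMle : ∀ p, ‖fderiv ℝ Φ p‖ ≤ M := fun p => (hM₀ p).trans (le_max_left _ _)
  have hΦc : Continuous Φ := hφ.continuous
  have hΦd : Differentiable ℝ Φ := hφ.differentiable (by norm_num)
  -- time derivative of φ at fixed (x, y)
  have hcurve : ∀ x y t : ℝ, HasDerivAt (fun t' => φ x y t')
      (fderiv ℝ Φ (x, y, t) ((0:ℝ), (0:ℝ), (1:ℝ))) t := by
    intro x y t
    have h1 : HasDerivAt (fun t' : ℝ => ((x, y, t') : ℝ × ℝ × ℝ))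
        (((0:ℝ), (0:ℝ), (1:ℝ)) : ℝ × ℝ × ℝ) t :=
      (hasDerivAt_const t x).prodMk ((hasDerivAt_const t y).prodMk (hasDerivAt_id t))
    exact (hΦd (x, y, t)).hasFDerivAt.comp_hasDerivAt t h1
  have hbd1 : ∀ x y t : ℝ, |fderiv ℝ Φ (x, y, t) ((0:ℝ), (0:ℝ), (1:ℝ))| ≤ M := by
    intro x y t
    calc |fderiv ℝ Φ (x, y, t) ((0:ℝ), (0:ℝ), (1:ℝ))|
        ≤ ‖fderiv ℝ Φ (x, y, t)‖ * ‖(((0:ℝ), (0:ℝ), (1:ℝ)) : ℝ × ℝ × ℝ)‖ :=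
          (fderiv ℝ Φ (x, y, t)).le_opNorm _
      _ = ‖fderiv ℝ Φ (x, y, t)‖ := by norm_num [Prod.norm_def]
      _ ≤ M := hMle _
  have hfdc : Continuous fun p : ℝ × ℝ × ℝ => fderiv ℝ Φ p (((0:ℝ), (0:ℝ), (1:ℝ)) : ℝ × ℝ × ℝ) :=
    (hφ.continuous_fderiv (by norm_num)).clm_apply continuous_const
  have hφx2 : ∀ y t : ℝ, ContDiff ℝ 2 fun x => φ x y t := by
    intro y t
    exact hφ.comp (contDiff_id.prodMk (contDiff_const (c := ((y, t) : ℝ × ℝ))))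
  -- continuity of the inner integral in the barrier variable
  have hc2 : ∀ s : ℝ, Continuous fun p : ℝ × ℝ => (p.2 - K) * φ p.2 p.1 s := by
    intro s
    exact (continuous_snd.sub continuous_const).mul
      (hΦc.comp (continuous_snd.prodMk (continuous_fst.prodMk continuous_const)))
  have hGc : ∀ s : ℝ, Continuous fun y => ∫ x in K..y, (x - K) * φ x y s := by
    intro s
    exact intervalIntegral.continuous_parametric_intervalIntegral_of_continuous
      (f := fun y x => (x - K) * φ x y s) (hc2 s) continuous_id
  -- Step A : derivative in the barrier
  have hstepA : ∀ s B' : ℝ, HasDerivAt (fun b => upOutCall S₀ r φ K b s)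
      (disc r s * ∫ x in K..B', (x - K) * φ x B' s) B' := by
    intro s B'
    have h1 : HasDerivAt (fun b => ∫ y in (max K S₀)..b, ∫ x in K..y, (x - K) * φ x y s)
        (∫ x in K..B', (x - K) * φ x B' s) B' :=
      intervalIntegral.integral_hasDerivAt_right
        ((hGc s).intervalIntegrable _ _)
        ((hGc s).stronglyMeasurableAtFilter _ _)
        (hGc s).continuousAt
    simpa [upOutCall] using h1.const_mul (disc r s)
  have hderivB : ∀ s : ℝ, deriv (fun b => upOutCall S₀ r φ K b s) B
      = disc r s * ∫ x in K..B, (x - K) * φ x B s := fun s => (hstepA s B).deriv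
  -- derivative of the discount factor
  have hdisc : HasDerivAt (disc r) (-r T * disc r T) T := by
    have h1 : HasDerivAt (fun s => ∫ u in (0:ℝ)..s, r u) (r T) T :=
      intervalIntegral.integral_hasDerivAt_right (hr.intervalIntegrable _ _)
        (hr.stronglyMeasurableAtFilter _ _) hr.continuousAt
    have h2 := (Real.hasDerivAt_exp (-(∫ u in (0:ℝ)..T, r u))).comp T h1.neg
    have h3 : HasDerivAt (disc r) (Real.exp (-(∫ u in (0:ℝ)..T, r u)) * -r T) T := h2
    have : Real.exp (-(∫ u in (0:ℝ)..T, r u)) * -r T = -r T * disc r T := by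
      rw [disc]; ring
    rwa [this] at h3
  -- differentiation under the integral sign in time
  have hcont_t : ∀ s : ℝ, Continuous fun x => (x - K) * φ x B s := fun s =>
    (continuous_id.sub continuous_const).mul
      (hΦc.comp (continuous_id.prodMk
        (continuous_const (y := ((B, s) : ℝ × ℝ)))))
  have hGt : HasDerivAt (fun s => ∫ x in K..B, (x - K) * φ x B s)
      (∫ x in K..B, (x - K) * fderiv ℝ Φ (x, B, T) ((0:ℝ), (0:ℝ), (1:ℝ))) T := by
    refine (intervalIntegral.hasDerivAt_integral_of_dominated_loc_of_deriv_le
      (F := fun s x => (x - K) * φ x B s)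
      (F' := fun s x => (x - K) * fderiv ℝ Φ (x, B, s) ((0:ℝ), (0:ℝ), (1:ℝ)))
      (bound := fun x => (|x| + |K|) * M)
      (Metric.ball_mem_nhds T one_pos)
      (Filter.Eventually.of_forall fun s => (hcont_t s).aestronglyMeasurable)
      ((hcont_t T).intervalIntegrable _ _)
      (((continuous_id.sub continuous_const).mul
        (hfdc.comp (continuous_id.prodMk continuous_const))).aestronglyMeasurable)
      (Filter.Eventually.of_forall fun x _ s _ => ?_)
      (((continuous_abs.add continuous_const).mul continuous_const).intervalIntegrable _ _)
      (Filter.Eventually.of_forall fun x _ s _ => (hcurve x B s).const_mul (x - K))).2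
    calc ‖(x - K) * fderiv ℝ Φ (x, B, s) ((0:ℝ), (0:ℝ), (1:ℝ))‖
        = |x - K| * |fderiv ℝ Φ (x, B, s) ((0:ℝ), (0:ℝ), (1:ℝ))| := by
          rw [Real.norm_eq_abs, abs_mul]
      _ ≤ (|x| + |K|) * M :=
          mul_le_mul (by have := abs_add_le x (-K); rwa [abs_neg, ← sub_eq_add_neg] at this) (hbd1 x B s) (abs_nonneg _)
            (by positivity)
  have hTop : HasDerivAt (fun s => disc r s * ∫ x in K..B, (x - K) * φ x B s)
      (-r T * disc r T * (∫ x in K..B, (x - K) * φ x B T)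
        + disc r T * ∫ x in K..B, (x - K) * fderiv ℝ Φ (x, B, T) ((0:ℝ), (0:ℝ), (1:ℝ))) T :=
    hdisc.mul hGt
  have hLHS : deriv (fun T' => deriv (fun B' => upOutCall S₀ r φ K B' T') B) T
      = -r T * disc r T * (∫ x in K..B, (x - K) * φ x B T)
        + disc r T * ∫ x in K..B, (x - K) * fderiv ℝ Φ (x, B, T) ((0:ℝ), (0:ℝ), (1:ℝ)) := by
    have h : (fun T' => deriv (fun B' => upOutCall S₀ r φ K B' T') B)
        = fun s => disc r s * ∫ x in K..B, (x - K) * φ x B s := funext fun s => hderivB s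
    rw [h]; exact hTop.deriv
  -- regularity of the space profiles
  set g : ℝ → ℝ := fun x => (σ x B T)^2 * x^2 * φ x B T with hgdef
  set A : ℝ → ℝ := fun x => x * φ x B T with hAdef
  have hgC : ContDiff ℝ 2 g := (((hσx B T).pow 2).mul (contDiff_id.pow 2)).mul (hφx2 B T)
  have hg2 : ContDiff ℝ (1 + 1) g := by rw [one_add_one_eq_two]; exact hgC
  have hg' : ContDiff ℝ 1 (deriv g) := (contDiff_succ_iff_deriv.mp hg2).2.2
  have hgd : Differentiable ℝ g := hgC.differentiable two_ne_zero
  have hg'd : Differentiable ℝ (deriv g) := hg'.differentiable one_ne_zero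
  have hg'c : Continuous (deriv g) := hg'.continuous
  have hg''c : Continuous (deriv (deriv g)) := hg'.continuous_deriv le_rfl
  have hAC : ContDiff ℝ 2 A := contDiff_id.mul (hφx2 B T)
  have hAd : Differentiable ℝ A := hAC.differentiable two_ne_zero
  have hA'c : Continuous (deriv A) := hAC.continuous_deriv one_le_two
  -- rewrite the time derivative using the KFE
  have hIeq : (∫ x in K..B, (x - K) * fderiv ℝ Φ (x, B, T) ((0:ℝ), (0:ℝ), (1:ℝ)))
      = ∫ x in K..B, ((1/2) * ((x - K) * deriv (deriv g) x)
          - (r T - q T) * ((x - K) * deriv A x)) := by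
    apply intervalIntegral.integral_congr_ae
    have hBne : ∀ᵐ x : ℝ ∂volume, x ≠ B := by
      simpa [ae_iff, Set.setOf_eq_eq_singleton] using measure_singleton (α := ℝ) B
    filter_upwards [hBne] with x hxB hxI
    rw [Set.uIoc_of_le hKB.le] at hxI
    have hx1 : K < x := hxI.1
    have hx2 : x < B := lt_of_le_of_ne hxI.2 hxB
    have hk := hKFE x B T (hK.trans hx1) hx2 hSB hT
    have hdt : deriv (fun t' => φ x B t') T
        = fderiv ℝ Φ (x, B, T) ((0:ℝ), (0:ℝ), (1:ℝ)) := (hcurve x B T).deriv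
    rw [hdt] at hk
    linear_combination (x - K) * hk
  -- integrability of the pieces
  have hint1 : IntervalIntegrable (fun x => (x - K) * deriv (deriv g) x) volume K B :=
    (((continuous_id.sub continuous_const).mul hg''c)).intervalIntegrable _ _
  have hint2 : IntervalIntegrable (fun x => (x - K) * deriv A x) volume K B :=
    (((continuous_id.sub continuous_const).mul hA'c)).intervalIntegrable _ _
  have hsplitI : (∫ x in K..B, ((1/2) * ((x - K) * deriv (deriv g) x)
          - (r T - q T) * ((x - K) * deriv A x)))
      = (1/2) * (∫ x in K..B, (x - K) * deriv (deriv g) x)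
        - (r T - q T) * (∫ x in K..B, (x - K) * deriv A x) := by
    rw [intervalIntegral.integral_sub (hint1.const_mul _) (hint2.const_mul _),
      intervalIntegral.integral_const_mul, intervalIntegral.integral_const_mul]
  -- integration by parts, drift term
  have hibp1 : (∫ x in K..B, (x - K) * deriv A x)
      = (B - K) * A B - ∫ x in K..B, A x := by
    have h := intervalIntegral.integral_mul_deriv_eq_deriv_mul (a := K) (b := B)
      (u := fun x => x - K) (v := A)
      (u' := fun _ => (1:ℝ)) (v' := fun x => deriv A x)
      (fun x _ => (hasDerivAt_id x).sub_const K)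
      (fun x _ => (hAd x).hasDerivAt)
      intervalIntegrable_const (hA'c.intervalIntegrable _ _)
    simpa using h
  -- integration by parts, diffusion term
  have hftc : (∫ x in K..B, deriv g x) = g B - g K :=
    intervalIntegral.integral_deriv_eq_sub (fun x _ => hgd x)
      (hg'c.intervalIntegrable _ _)
  have hibp2 : (∫ x in K..B, (x - K) * deriv (deriv g) x)
      = (B - K) * deriv g B - (g B - g K) := by
    have h := intervalIntegral.integral_mul_deriv_eq_deriv_mul (a := K) (b := B)
      (u := fun x => x - K) (v := deriv g)
      (u' := fun _ => (1:ℝ)) (v' := fun x => deriv (deriv g) x)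
      (fun x _ => (hasDerivAt_id x).sub_const K)
      (fun x _ => (hg'd x).hasDerivAt)
      intervalIntegrable_const (hg''c.intervalIntegrable _ _)
    simp only [one_mul, sub_self, zero_mul, sub_zero] at h
    rw [h, hftc]
  -- decompose ∫ A
  have hintφ1 : IntervalIntegrable (fun x => (x - K) * φ x B T) volume K B :=
    (hcont_t T).intervalIntegrable _ _
  have hφBTc : Continuous fun x => φ x B T :=
    hΦc.comp (continuous_id.prodMk (continuous_const (y := ((B, T) : ℝ × ℝ))))
  have hintφ2 : IntervalIntegrable (fun x => K * φ x B T) volume K B :=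
    (continuous_const.mul hφBTc).intervalIntegrable _ _
  have hsplitA : (∫ x in K..B, A x)
      = (∫ x in K..B, (x - K) * φ x B T) + K * ∫ x in K..B, φ x B T := by
    have h1 : (∫ x in K..B, A x)
        = ∫ x in K..B, ((x - K) * φ x B T + K * φ x B T) := by
      apply intervalIntegral.integral_congr
      intro x _
      show x * φ x B T = _
      ring
    rw [h1, intervalIntegral.integral_add hintφ1 hintφ2,
      intervalIntegral.integral_const_mul]
  -- final assembly
  have hAB : A B = B * φ B B T := rfl
  have hgB : g B = (σ B B T)^2 * B^2 * φ B B T := rfl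
  have hgK : g K = (σ K B T)^2 * K^2 * φ K B T := rfl
  rw [hLHS, hderivB T, hIeq, hsplitI, hibp1, hibp2, hsplitA, hAB, ← hgB, ← hgK]
  ring
end

section
/- Suppose φ satisfies the Kolmogorov forward equation (KFE) on Ω for all t > 0, the diagonal boundary condition (DBC), and φ(S₀,S₀,t) = 0 for all t > 0. Then for all B > S₀ and T > 0, the zero-strike forward (foreign no-touch) equation holds: ∂C̃/∂T (0,B,T) = − ½ σ²(B,B,T) B³ D(T) Q(T) φ(B,B,T), equivalently ∂C̃/∂T(0,B,T) = − ½ σ²(B,B,T) B³ (∂³C̃/∂K²∂B)(K,B,T)|_{K=B}. -/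
open MeasureTheory Real Filter Set Topology intervalIntegral

/-- Differentiation under the interval integral (fixed endpoints), with jointly
continuous integrand and derivative. -/
lemma aux_S1 {W dW : ℝ → ℝ → ℝ}
    (hW : Continuous fun p : ℝ × ℝ => W p.1 p.2)
    (hdW : Continuous fun p : ℝ × ℝ => dW p.1 p.2)
    (hd : ∀ s b, HasDerivAt (fun b' => W s b') (dW s b) b)
    (a c b : ℝ) :
    HasDerivAt (fun b' => ∫ s in a..c, W s b') (∫ s in a..c, dW s b) b := by
  obtain ⟨M, hM⟩ := ((isCompact_uIcc (a := a) (b := c)).prod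
    (isCompact_Icc (a := b - 1) (b := b + 1))).exists_bound_of_continuousOn hdW.continuousOn
  have hcW : ∀ b', Continuous fun s => W s b' := fun b' =>
    hW.comp (continuous_id.prodMk continuous_const)
  have hcdW : ∀ b', Continuous fun s => dW s b' := fun b' =>
    hdW.comp (continuous_id.prodMk continuous_const)
  have h := intervalIntegral.hasDerivAt_integral_of_dominated_loc_of_deriv_le
    (F := fun b' s => W s b') (F' := fun b' s => dW s b') (x₀ := b) (a := a) (b := c)
    (bound := fun _ => M) (s := Metric.ball b 1) (Metric.ball_mem_nhds b one_pos)
    (Filter.Eventually.of_forall fun b' => (hcW b').aestronglyMeasurable)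
    ((hcW b).intervalIntegrable a c)
    ((hcdW b).aestronglyMeasurable)
    ?_ (intervalIntegrable_const (μ := volume)) ?_
  · exact h.2
  · refine Filter.Eventually.of_forall fun s hs x hx => ?_
    refine hM (s, x) ⟨uIoc_subset_uIcc hs, ?_⟩
    have : |x - b| < 1 := by simpa [Real.dist_eq] using (Metric.mem_ball.mp hx)
    constructor <;> [linarith [abs_le.mp this.le |>.1]; linarith [abs_le.mp this.le |>.2]]
  · exact Filter.Eventually.of_forall fun s _ x _ => hd s x

/-- Differentiation of `b ↦ ∫ s in a..b, W s b`. -/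
lemma aux_diag {W dW : ℝ → ℝ → ℝ}
    (hW : Continuous fun p : ℝ × ℝ => W p.1 p.2)
    (hdW : Continuous fun p : ℝ × ℝ => dW p.1 p.2)
    (hd : ∀ s b, HasDerivAt (fun b' => W s b') (dW s b) b)
    (a y : ℝ) :
    HasDerivAt (fun b => ∫ s in a..b, W s b)
      ((∫ s in a..y, dW s y) + W y y) y := by
  have hcW : ∀ b', Continuous fun s => W s b' := fun b' =>
    hW.comp (continuous_id.prodMk continuous_const)
  have key : ∀ b, ∫ s in a..b, W s b = (∫ s in a..y, W s b) + ∫ s in y..b, W s b := fun b =>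
    (intervalIntegral.integral_add_adjacent_intervals
      ((hcW b).intervalIntegrable a y) ((hcW b).intervalIntegrable y b)).symm
  have h1 : HasDerivAt (fun b => ∫ s in a..y, W s b) (∫ s in a..y, dW s y) y :=
    aux_S1 hW hdW hd a y y
  have h2 : HasDerivAt (fun b => ∫ s in y..b, W s b) (W y y) y := by
    rw [hasDerivAt_iff_isLittleO, Asymptotics.isLittleO_iff]
    intro ε hε
    have hc : ContinuousAt (fun p : ℝ × ℝ => W p.1 p.2) (y, y) := hW.continuousAt
    rcases Metric.continuousAt_iff.mp hc ε hε with ⟨δ, hδ, hball⟩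
    have : ∀ᶠ b in 𝓝 y, |b - y| < δ := by
      filter_upwards [Metric.ball_mem_nhds y hδ] with b hb
      simpa [Real.dist_eq] using hb
    filter_upwards [this] with b hb
    have heq : (∫ s in y..b, W s b) - (∫ s in y..y, W s y) - (b - y) • W y y
        = ∫ s in y..b, (W s b - W y y) := by
      rw [intervalIntegral.integral_same, intervalIntegral.integral_sub
        ((hcW b).intervalIntegrable y b) (intervalIntegrable_const (μ := volume))]
      simp [smul_eq_mul, mul_comm]
    rw [heq]
    have hbound : ∀ s ∈ Set.uIoc y b, ‖W s b - W y y‖ ≤ ε := by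
      intro s hs
      have hs' : |s - y| ≤ |b - y| := abs_sub_left_of_mem_uIcc (uIoc_subset_uIcc hs)
      have : dist (s, b) (y, y) < δ := by
        rw [Prod.dist_eq]
        simp only [Real.dist_eq]
        exact max_lt (lt_of_le_of_lt hs' hb) hb
      exact (le_of_lt (by simpa [Real.dist_eq] using hball this))
    calc ‖∫ s in y..b, (W s b - W y y)‖ ≤ ε * |b - y| :=
          intervalIntegral.norm_integral_le_of_norm_le_const hbound
      _ = ε * ‖b - y‖ := by rw [Real.norm_eq_abs]
  exact (h1.add h2).congr_of_eventuallyEq (Filter.Eventually.of_forall fun b => key b)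

lemma aux_hd1 {f : ℝ × ℝ × ℝ → ℝ} {x y t : ℝ} (hf : DifferentiableAt ℝ f (x, y, t)) :
    HasDerivAt (fun x' => f (x', y, t)) (fderiv ℝ f (x, y, t) (1, 0, 0)) x := by
  have hc : HasDerivAt (fun x' : ℝ => ((x', y, t) : ℝ × ℝ × ℝ)) (1, 0, 0) x :=
    (hasDerivAt_id x).prodMk (hasDerivAt_const _ _)
  exact hf.hasFDerivAt.comp_hasDerivAt x hc

lemma aux_hd2 {f : ℝ × ℝ × ℝ → ℝ} {x y t : ℝ} (hf : DifferentiableAt ℝ f (x, y, t)) :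
    HasDerivAt (fun y' => f (x, y', t)) (fderiv ℝ f (x, y, t) (0, 1, 0)) y := by
  have hc : HasDerivAt (fun y' : ℝ => ((x, y', t) : ℝ × ℝ × ℝ)) (0, 1, 0) y :=
    (hasDerivAt_const _ _).prodMk ((hasDerivAt_id y).prodMk (hasDerivAt_const _ _))
  exact hf.hasFDerivAt.comp_hasDerivAt y hc

lemma aux_hd3 {f : ℝ × ℝ × ℝ → ℝ} {x y t : ℝ} (hf : DifferentiableAt ℝ f (x, y, t)) :
    HasDerivAt (fun t' => f (x, y, t')) (fderiv ℝ f (x, y, t) (0, 0, 1)) t := by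
  have hc : HasDerivAt (fun t' : ℝ => ((x, y, t') : ℝ × ℝ × ℝ)) (0, 0, 1) t :=
    (hasDerivAt_const _ _).prodMk ((hasDerivAt_const _ _).prodMk (hasDerivAt_id t))
  exact hf.hasFDerivAt.comp_hasDerivAt t hc

lemma aux_cont_partial {f : ℝ × ℝ × ℝ → ℝ} (hf : ContDiff ℝ 1 f) (v : ℝ × ℝ × ℝ) :
    Continuous fun p => fderiv ℝ f p v :=
  (hf.continuous_fderiv one_ne_zero).clm_apply continuous_const

lemma aux_contDiff_partial {f : ℝ × ℝ × ℝ → ℝ} (hf : ContDiff ℝ 2 f) (v : ℝ × ℝ × ℝ) :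
    ContDiff ℝ 1 fun p => fderiv ℝ f p v :=
  (hf.fderiv_right (by norm_num)).clm_apply contDiff_const


/-- `aux_S1` with flipped argument order: the first argument of `W` is the parameter. -/
lemma aux_S1' {W dW : ℝ → ℝ → ℝ}
    (hW : Continuous fun p : ℝ × ℝ => W p.1 p.2)
    (hdW : Continuous fun p : ℝ × ℝ => dW p.1 p.2)
    (hd : ∀ s b, HasDerivAt (fun b' => W b' s) (dW b s) b)
    (a c b : ℝ) :
    HasDerivAt (fun b' => ∫ s in a..c, W b' s) (∫ s in a..c, dW b s) b :=
  aux_S1 (W := fun s b => W b s) (dW := fun s b => dW b s)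
    (hW.comp (continuous_snd.prodMk continuous_fst))
    (hdW.comp (continuous_snd.prodMk continuous_fst))
    (fun s b => hd s b) a c b

/-- `aux_diag` with flipped argument order. -/
lemma aux_diag' {W dW : ℝ → ℝ → ℝ}
    (hW : Continuous fun p : ℝ × ℝ => W p.1 p.2)
    (hdW : Continuous fun p : ℝ × ℝ => dW p.1 p.2)
    (hd : ∀ s b, HasDerivAt (fun b' => W b' s) (dW b s) b)
    (a y : ℝ) :
    HasDerivAt (fun b => ∫ s in a..b, W b s)
      ((∫ s in a..y, dW y s) + W y y) y :=
  aux_diag (W := fun s b => W b s) (dW := fun s b => dW b s)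
    (hW.comp (continuous_snd.prodMk continuous_fst))
    (hdW.comp (continuous_snd.prodMk continuous_fst))
    (fun s b => hd s b) a y

/-- subtraction formula for interval integrals of continuous functions -/
lemma aux_isub {f : ℝ → ℝ} (hf : Continuous f) (c d : ℝ) :
    ∫ x in c..d, f x = (∫ x in (0:ℝ)..d, f x) - ∫ x in (0:ℝ)..c, f x := by
  rw [intervalIntegral.integral_interval_sub_left (hf.intervalIntegrable 0 d)
    (hf.intervalIntegrable 0 c)]

/-- Dividend capitalisation `Q(T) = exp(∫₀ᵀ q(u) du)`. -/
noncomputable def capQ (q : ℝ → ℝ) (T : ℝ) : ℝ := Real.exp (∫ u in (0:ℝ)..T, q u)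

/-- Capitalised up-and-out call price `C̃(K,B,T) = Q(T) C(K,B,T)`. -/
noncomputable def upOutCallTilde (S₀ : ℝ) (r q : ℝ → ℝ) (φ : ℝ → ℝ → ℝ → ℝ)
    (K B T : ℝ) : ℝ :=
  capQ q T * upOutCall S₀ r φ K B T

set_option maxHeartbeats 1000000 in
/-- Zero-strike (foreign no-touch) forward equation: under the KFE, the diagonal
boundary condition and the corner condition, for all `B > S₀`, `T > 0`,
`∂C̃/∂T (0,B,T) = - ½ σ²(B,B,T) B³ D(T) Q(T) φ(B,B,T)`, equivalently
`∂C̃/∂T (0,B,T) = - ½ σ²(B,B,T) B³ (∂³C̃/∂K²∂B)(K,B,T)|_{K=B}`. -/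
theorem stmt_6 (S₀ : ℝ) (hS₀ : 0 < S₀)
    (r q : ℝ → ℝ) (hr : Continuous r) (hq : Continuous q)
    (σ φ : ℝ → ℝ → ℝ → ℝ)
    (hσbd : ∃ M : ℝ, ∀ x y t, |σ x y t| ≤ M)
    (hσx : ∀ y t, ContDiff ℝ 2 fun x => σ x y t)
    (hσy : ∀ x t, ContDiff ℝ 1 fun y => σ x y t)
    (hσt : ∀ x y, Continuous fun t => σ x y t)
    (hφ : ContDiff ℝ 2 fun p : ℝ × ℝ × ℝ => φ p.1 p.2.1 p.2.2)
    (hφbd : ∃ M : ℝ, ∀ p : ℝ × ℝ × ℝ,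
      ‖fderiv ℝ (fun p : ℝ × ℝ × ℝ => φ p.1 p.2.1 p.2.2) p‖ ≤ M)
    -- Kolmogorov forward equation on Ω, t > 0
    (hKFE : ∀ x y t : ℝ, 0 < x → x < y → S₀ < y → 0 < t →
      deriv (fun t' => φ x y t') t
        + (r t - q t) * deriv (fun x' => x' * φ x' y t) x
        - (1/2) * deriv (deriv (fun x' => (σ x' y t)^2 * x'^2 * φ x' y t)) x = 0)
    -- diagonal boundary condition at x = y > S₀, t > 0
    (hDBC : ∀ y t : ℝ, S₀ < y → 0 < t →
      deriv (fun x' => (σ x' y t)^2 * x'^2 * φ x' y t) y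
        + (1/2) * deriv (fun y' => (σ y y' t)^2 * y^2 * φ y y' t) y
        = (r t - q t) * y * φ y y t)
    -- corner condition
    (hcorner : ∀ t : ℝ, 0 < t → φ S₀ S₀ t = 0) :
    ∀ B T : ℝ, S₀ < B → 0 < T →
      (deriv (fun T' => upOutCallTilde S₀ r q φ 0 B T') T
          = -(1/2) * (σ B B T)^2 * B^3 * (disc r T * capQ q T * φ B B T)) ∧
      (deriv (fun T' => upOutCallTilde S₀ r q φ 0 B T') T
          = -(1/2) * (σ B B T)^2 * B^3
              * deriv (fun B' =>
                  deriv (deriv (fun K' => upOutCallTilde S₀ r q φ K' B' T)) B) B) := by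
  intro B T hB hT
  have hφcont : Continuous fun p : ℝ × ℝ × ℝ => φ p.1 p.2.1 p.2.2 := hφ.continuous
  have hφT : Continuous fun p : ℝ × ℝ => φ p.1 p.2 T :=
    hφcont.comp (continuous_fst.prodMk (continuous_snd.prodMk continuous_const))
  -- ============ PART 1 ============
  have part1 : deriv (fun T' => upOutCallTilde S₀ r q φ 0 B T') T
      = -(1/2) * (σ B B T)^2 * B^3 * (disc r T * capQ q T * φ B B T) := by
    obtain ⟨M, hσM⟩ := hσbd
    have hΦ1 : ContDiff ℝ 1 fun p : ℝ × ℝ × ℝ => φ p.1 p.2.1 p.2.2 := hφ.of_le (by norm_num)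
    set phX : ℝ × ℝ × ℝ → ℝ :=
      fun p => fderiv ℝ (fun p : ℝ × ℝ × ℝ => φ p.1 p.2.1 p.2.2) p (1,0,0) with hphXdef
    set phY : ℝ × ℝ × ℝ → ℝ :=
      fun p => fderiv ℝ (fun p : ℝ × ℝ × ℝ => φ p.1 p.2.1 p.2.2) p (0,1,0) with hphYdef
    set phT : ℝ × ℝ × ℝ → ℝ :=
      fun p => fderiv ℝ (fun p : ℝ × ℝ × ℝ => φ p.1 p.2.1 p.2.2) p (0,0,1) with hphTdef
    set phXY : ℝ × ℝ × ℝ → ℝ := fun p => fderiv ℝ phX p (0,1,0) with hphXYdef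
    set phTY : ℝ × ℝ × ℝ → ℝ := fun p => fderiv ℝ phT p (0,1,0) with hphTYdef
    have hphX_C1 : ContDiff ℝ 1 phX := aux_contDiff_partial hφ _
    have hphT_C1 : ContDiff ℝ 1 phT := aux_contDiff_partial hφ _
    have hphX_cont : Continuous phX := hphX_C1.continuous
    have hphY_cont : Continuous phY := aux_cont_partial hΦ1 _
    have hphT_cont : Continuous phT := hphT_C1.continuous
    have hphXY_cont : Continuous phXY := aux_cont_partial hphX_C1 _
    have hphTY_cont : Continuous phTY := aux_cont_partial hphT_C1 _
    have hdx : ∀ x y t : ℝ, HasDerivAt (fun x' => φ x' y t) (phX (x,y,t)) x :=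
      fun x y t => aux_hd1 ((hΦ1.differentiable one_ne_zero) _)
    have hdy : ∀ x y t : ℝ, HasDerivAt (fun y' => φ x y' t) (phY (x,y,t)) y :=
      fun x y t => aux_hd2 ((hΦ1.differentiable one_ne_zero) _)
    have hdt : ∀ x y t : ℝ, HasDerivAt (fun t' => φ x y t') (phT (x,y,t)) t :=
      fun x y t => aux_hd3 ((hΦ1.differentiable one_ne_zero) _)
    have hdxy : ∀ x y t : ℝ, HasDerivAt (fun y' => phX (x,y',t)) (phXY (x,y,t)) y :=
      fun x y t => aux_hd2 ((hphX_C1.differentiable one_ne_zero) _)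
    have hdty : ∀ x y t : ℝ, HasDerivAt (fun y' => phT (x,y',t)) (phTY (x,y,t)) y :=
      fun x y t => aux_hd2 ((hphT_C1.differentiable one_ne_zero) _)
    have hderiv_t : ∀ x y t : ℝ, deriv (fun t' => φ x y t') t = phT (x,y,t) :=
      fun x y t => (hdt x y t).deriv
    have hxφ : ∀ x y t : ℝ, HasDerivAt (fun x' => x' * φ x' y t)
        (φ x y t + x * phX (x,y,t)) x := by
      intro x y t
      have h := (hasDerivAt_id x).fun_mul (hdx x y t)
      simpa using h
    have hderiv_xmul : ∀ x y t : ℝ, deriv (fun x' => x' * φ x' y t) x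
        = φ x y t + x * phX (x,y,t) := fun x y t => (hxφ x y t).deriv
    set μ : ℝ := r T - q T with hμdef
    set R : ℝ → ℝ → ℝ :=
      fun s b => 2 * phT (s,b,T) + 2 * μ * (φ s b T + s * phX (s,b,T)) with hRdef
    set dR : ℝ → ℝ → ℝ :=
      fun s b => 2 * phTY (s,b,T) + 2 * μ * (phY (s,b,T) + s * phXY (s,b,T)) with hdRdef
    have hemb : Continuous fun p : ℝ × ℝ => ((p.1, p.2, T) : ℝ × ℝ × ℝ) :=
      continuous_fst.prodMk (continuous_snd.prodMk continuous_const)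
    have hRc : Continuous fun p : ℝ × ℝ => R p.1 p.2 := by
      rw [hRdef]
      exact (continuous_const.mul (hphT_cont.comp hemb)).add
        (continuous_const.mul (hφT.add (continuous_fst.mul (hphX_cont.comp hemb))))
    have hdRc : Continuous fun p : ℝ × ℝ => dR p.1 p.2 := by
      rw [hdRdef]
      exact (continuous_const.mul (hphTY_cont.comp hemb)).add
        (continuous_const.mul ((hphY_cont.comp hemb).add
          (continuous_fst.mul (hphXY_cont.comp hemb))))
    have hRsc : ∀ y : ℝ, Continuous fun s => R s y := by
      intro y
      have h := hRc.comp (f := fun s : ℝ => (s, y)) (continuous_id.prodMk continuous_const)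
      simpa [Function.comp_def] using h
    have hdRsc : ∀ y : ℝ, Continuous fun s => dR s y := by
      intro y
      have h := hdRc.comp (f := fun s : ℝ => (s, y)) (continuous_id.prodMk continuous_const)
      simpa [Function.comp_def] using h
    have hRd : ∀ s b : ℝ, HasDerivAt (fun b' => R s b') (dR s b) b := by
      intro s b
      exact ((hdty s b T).const_mul 2).add
        (((hdy s b T).add ((hdxy s b T).const_mul s)).const_mul (2*μ))
    -- ===== the function g(x) = σ² x² φ and its structure =====
    have hφsliceC2 : ∀ y : ℝ, ContDiff ℝ 2 fun x => φ x y T := fun y =>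
      hφ.comp ((contDiff_id.prodMk (contDiff_const (c := ((y, T) : ℝ × ℝ)))))
    have hgC2 : ∀ y : ℝ, ContDiff ℝ 2 fun x => (σ x y T)^2 * x^2 * φ x y T := fun y =>
      (((hσx y T).pow 2).mul ((contDiff_id (𝕜 := ℝ)).pow 2)).mul (hφsliceC2 y)
    have hdg_cont : ∀ y : ℝ, Continuous (deriv fun x => (σ x y T)^2 * x^2 * φ x y T) :=
      fun y => (hgC2 y).continuous_deriv (by norm_num)
    have hgC1' : ∀ y : ℝ, ContDiff ℝ 1 (deriv fun x => (σ x y T)^2 * x^2 * φ x y T) := by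
      intro y
      have h2 : ContDiff ℝ ((1 : WithTop ℕ∞) + 1) fun x => (σ x y T)^2 * x^2 * φ x y T := by
        have := hgC2 y
        norm_num at this ⊢
        exact this
      exact (contDiff_succ_iff_deriv.mp h2).2.2
    have hg0 : ∀ y : ℝ, deriv (fun x => (σ x y T)^2 * x^2 * φ x y T) 0 = 0 := by
      intro y
      obtain ⟨C, hC⟩ := (isCompact_Icc (a := (-1:ℝ)) (b := 1)).exists_bound_of_continuousOn
        ((hφsliceC2 y).continuous.continuousOn)
      have hM0 : (0:ℝ) ≤ M := le_trans (abs_nonneg _) (hσM 0 0 0)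
      have hC0 : (0:ℝ) ≤ C := le_trans (norm_nonneg _) (hC 0 (by norm_num))
      have hden : (0:ℝ) < M^2 * C + 1 := by positivity
      have hlit : HasDerivAt (fun x => (σ x y T)^2 * x^2 * φ x y T) 0 0 := by
        rw [hasDerivAt_iff_isLittleO, Asymptotics.isLittleO_iff]
        intro ε hε
        have hδ : (0:ℝ) < min 1 (ε / (M^2 * C + 1)) := lt_min one_pos (div_pos hε hden)
        filter_upwards [Metric.ball_mem_nhds (0:ℝ) hδ] with x hx
        have hxd : |x| < min 1 (ε / (M^2 * C + 1)) := by
          simpa [Real.dist_eq] using Metric.mem_ball.mp hx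
        have hx1 : |x| < 1 := lt_of_lt_of_le hxd (min_le_left _ _)
        have hx2 : |x| ≤ ε / (M^2 * C + 1) := le_of_lt (lt_of_lt_of_le hxd (min_le_right _ _))
        have hφb : |φ x y T| ≤ C := by
          have := hC x (by constructor <;> [linarith [abs_le.mp hx1.le |>.1];
            linarith [abs_le.mp hx1.le |>.2]])
          simpa [Real.norm_eq_abs] using this
        have hσb : |σ x y T| ≤ M := hσM x y T
        simp only [sub_zero, smul_zero, Real.norm_eq_abs]
        have h00 : (σ (0:ℝ) y T)^2 * (0:ℝ)^2 * φ 0 y T = 0 := by ring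
        rw [h00, sub_zero]
        have e1 : |(σ x y T)^2 * x^2 * φ x y T| = |σ x y T|^2 * |x|^2 * |φ x y T| := by
          rw [abs_mul, abs_mul, abs_pow, abs_pow]
        rw [e1]
        have h3 : M^2 * C * |x| ≤ ε := by
          calc M^2 * C * |x| ≤ M^2 * C * (ε / (M^2 * C + 1)) := by
                apply mul_le_mul_of_nonneg_left hx2 (by positivity)
            _ = ε * ((M^2 * C) / (M^2 * C + 1)) := by ring
            _ ≤ ε * 1 := by
                apply mul_le_mul_of_nonneg_left _ hε.le
                rw [div_le_one hden]; linarith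
            _ = ε := mul_one ε
        have b1 : |σ x y T|^2 ≤ M^2 := pow_le_pow_left₀ (abs_nonneg _) hσb 2
        calc |σ x y T|^2 * |x|^2 * |φ x y T| ≤ M^2 * |x|^2 * C := by
              apply mul_le_mul _ hφb (abs_nonneg _) (by positivity)
              exact mul_le_mul_of_nonneg_right b1 (sq_nonneg _)
          _ = (M^2 * C * |x|) * |x| := by ring
          _ ≤ ε * |x| := mul_le_mul_of_nonneg_right h3 (abs_nonneg x)
      exact hlit.deriv
    -- second derivative of g equals R on the open interval, via the KFE
    have hdd : ∀ y, S₀ < y → ∀ s, 0 < s → s < y →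
        HasDerivAt (deriv fun x => (σ x y T)^2 * x^2 * φ x y T) (R s y) s := by
      intro y hy s hs0 hsy
      have h : HasDerivAt (deriv fun x => (σ x y T)^2 * x^2 * φ x y T)
          (deriv (deriv fun x => (σ x y T)^2 * x^2 * φ x y T) s) s :=
        (((hgC1' y).differentiable one_ne_zero) s).hasDerivAt
      have hval := hKFE s y T hs0 hsy hy hT
      rw [hderiv_t, hderiv_xmul] at hval
      have heq : deriv (deriv fun x => (σ x y T)^2 * x^2 * φ x y T) s = R s y := by
        rw [← hμdef] at hval
        simp only [hRdef]
        linear_combination (-2 : ℝ) * hval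
      rwa [heq] at h
    -- first derivative of g via FTC
    have hdgFTC : ∀ y, S₀ < y → ∀ x, 0 ≤ x → x ≤ y →
        deriv (fun x' => (σ x' y T)^2 * x'^2 * φ x' y T) x = ∫ s in (0:ℝ)..x, R s y := by
      intro y hy x hx0 hxy
      have h := intervalIntegral.integral_eq_sub_of_hasDeriv_right_of_le hx0
        ((hdg_cont y).continuousOn)
        (fun s hs => (hdd y hy s hs.1 (lt_of_lt_of_le hs.2 hxy)).hasDerivWithinAt)
        ((hRsc y).intervalIntegrable 0 x)
      rw [hg0 y, sub_zero] at h
      exact h.symm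
    -- integral representation of g itself
    have hgrep : ∀ y, S₀ < y → ∀ x, 0 ≤ x → x ≤ y →
        (σ x y T)^2 * x^2 * φ x y T = ∫ s in (0:ℝ)..x, (x - s) * R s y := by
      intro y hy x hx0 hxy
      have hprim : ∀ u : ℝ, HasDerivAt
          (fun u' => u' * (∫ s in (0:ℝ)..u', R s y) - ∫ s in (0:ℝ)..u', s * R s y)
          (∫ s in (0:ℝ)..u, R s y) u := by
        intro u
        have hFTC1 : HasDerivAt (fun u' => ∫ s in (0:ℝ)..u', R s y) (R u y) u :=
          intervalIntegral.integral_hasDerivAt_right ((hRsc y).intervalIntegrable 0 u)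
            ((hRsc y).stronglyMeasurableAtFilter volume (𝓝 u)) (hRsc y).continuousAt
        have hc2 : Continuous fun s => s * R s y := continuous_id'.mul (hRsc y)
        have hFTC2 : HasDerivAt (fun u' => ∫ s in (0:ℝ)..u', s * R s y) (u * R u y) u :=
          intervalIntegral.integral_hasDerivAt_right (hc2.intervalIntegrable 0 u)
            (hc2.stronglyMeasurableAtFilter volume (𝓝 u)) hc2.continuousAt
        have h := ((hasDerivAt_id u).fun_mul hFTC1).fun_sub hFTC2
        simpa using h
      have e1 : ∫ s in (0:ℝ)..x, deriv (fun x' => (σ x' y T)^2 * x'^2 * φ x' y T) s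
          = (σ x y T)^2 * x^2 * φ x y T - (σ (0:ℝ) y T)^2 * (0:ℝ)^2 * φ 0 y T :=
        intervalIntegral.integral_eq_sub_of_hasDerivAt
          (fun u _ => (((hgC2 y).differentiable (by norm_num)) u).hasDerivAt)
          ((hdg_cont y).intervalIntegrable 0 x)
      have e1' : ∫ s in (0:ℝ)..x, deriv (fun x' => (σ x' y T)^2 * x'^2 * φ x' y T) s
          = (σ x y T)^2 * x^2 * φ x y T := by
        rw [e1]; ring
      have e2 : ∫ s in (0:ℝ)..x, deriv (fun x' => (σ x' y T)^2 * x'^2 * φ x' y T) s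
          = ∫ s in (0:ℝ)..x, (∫ u in (0:ℝ)..s, R u y) := by
        apply intervalIntegral.integral_congr
        intro s hs
        rw [uIcc_of_le hx0] at hs
        exact hdgFTC y hy s hs.1 (le_trans hs.2 hxy)
      have hprim_cont : Continuous fun s => ∫ u in (0:ℝ)..s, R u y :=
        intervalIntegral.continuous_primitive (fun a b => (hRsc y).intervalIntegrable a b) 0
      have e3 : ∫ s in (0:ℝ)..x, (∫ u in (0:ℝ)..s, R u y)
          = (x * (∫ s in (0:ℝ)..x, R s y) - ∫ s in (0:ℝ)..x, s * R s y)
            - ((0:ℝ) * (∫ s in (0:ℝ)..(0:ℝ), R s y) - ∫ s in (0:ℝ)..(0:ℝ), s * R s y) :=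
        intervalIntegral.integral_eq_sub_of_hasDerivAt (fun u _ => hprim u)
          (hprim_cont.intervalIntegrable 0 x)
      have e4 : ∫ s in (0:ℝ)..x, (x - s) * R s y
          = x * (∫ s in (0:ℝ)..x, R s y) - ∫ s in (0:ℝ)..x, s * R s y := by
        have hcg : ∀ s ∈ uIcc (0:ℝ) x, (x - s) * R s y = x * R s y - s * R s y :=
          fun s _ => by ring
        rw [intervalIntegral.integral_congr hcg, intervalIntegral.integral_sub
          ((continuous_const.fun_mul (hRsc y)).intervalIntegrable 0 x)
          ((continuous_id'.fun_mul (hRsc y)).intervalIntegrable 0 x),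
          intervalIntegral.integral_const_mul]
      rw [← e1', e2, e3, e4]
      simp
    -- ===== diagonal quantities =====
    set Af : ℝ → ℝ := fun y => ∫ s in (0:ℝ)..y, R s y with hAfdef
    set Bf : ℝ → ℝ := fun y => ∫ s in (0:ℝ)..y, (y - s) * dR s y with hBfdef
    set Ψ : ℝ → ℝ := fun y => ∫ s in (0:ℝ)..y, (y - s) * R s y with hΨdef
    have hWdiag_cont : Continuous fun p : ℝ × ℝ => (p.2 - p.1) * R p.1 p.2 :=
      (continuous_snd.sub continuous_fst).mul hRc
    have hdWdiag_cont : Continuous fun p : ℝ × ℝ => R p.1 p.2 + (p.2 - p.1) * dR p.1 p.2 :=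
      hRc.add ((continuous_snd.sub continuous_fst).mul hdRc)
    have hWd : ∀ s b : ℝ, HasDerivAt (fun b' => (b' - s) * R s b')
        (R s b + (b - s) * dR s b) b := by
      intro s b
      have h := ((hasDerivAt_id b).sub_const s).fun_mul (hRd s b)
      simpa using h
    have hΨd : ∀ y : ℝ, HasDerivAt Ψ (Af y + Bf y) y := by
      intro y
      have h := aux_diag (W := fun s b => (b - s) * R s b)
        (dW := fun s b => R s b + (b - s) * dR s b) hWdiag_cont hdWdiag_cont hWd 0 y
      have hval : (∫ s in (0:ℝ)..y, (R s y + (y - s) * dR s y)) + (y - y) * R y y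
          = Af y + Bf y := by
        rw [intervalIntegral.integral_add ((hRsc y).intervalIntegrable 0 y)
          (((continuous_const.fun_sub continuous_id').fun_mul (hdRsc y)).intervalIntegrable 0 y)]
        simp [hAfdef, hBfdef]
      rw [hΨdef]
      exact hval ▸ h
    -- translation of the diagonal boundary condition
    have hqf : ∀ y, S₀ < y → deriv (fun y' => (σ y y' T)^2 * y^2 * φ y y' T) y = Bf y := by
      intro y hy
      have hy0 : (0:ℝ) ≤ y := le_of_lt (lt_trans hS₀ hy)
      have hWc : Continuous fun p : ℝ × ℝ => (y - p.1) * R p.1 p.2 :=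
        (continuous_const.sub continuous_fst).mul hRc
      have hdWc : Continuous fun p : ℝ × ℝ => (y - p.1) * dR p.1 p.2 :=
        (continuous_const.sub continuous_fst).mul hdRc
      have hd' : ∀ s b : ℝ, HasDerivAt (fun b' => (y - s) * R s b') ((y - s) * dR s b) b :=
        fun s b => (hRd s b).const_mul (y - s)
      have hΞd : HasDerivAt (fun b => ∫ s in (0:ℝ)..y, (y - s) * R s b)
          (∫ s in (0:ℝ)..y, (y - s) * dR s y) y :=
        aux_S1 (W := fun s b => (y - s) * R s b) (dW := fun s b => (y - s) * dR s b)
          hWc hdWc hd' 0 y y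
      have hEq : ∀ b ∈ Ici y, (σ y b T)^2 * y^2 * φ y b T
          = ∫ s in (0:ℝ)..y, (y - s) * R s b := by
        intro b hb
        exact hgrep b (lt_of_lt_of_le hy hb) y hy0 hb
      have hqfd : DifferentiableAt ℝ (fun y' => (σ y y' T)^2 * y^2 * φ y y' T) y := by
        have h1 : DifferentiableAt ℝ (fun y' => (σ y y' T)^2) y :=
          (((hσy y T).differentiable one_ne_zero) y).pow 2
        exact (h1.mul_const (y^2)).mul (hdy y y T).differentiableAt
      have h1 : HasDerivWithinAt (fun y' => (σ y y' T)^2 * y^2 * φ y y' T)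
          (deriv (fun y' => (σ y y' T)^2 * y^2 * φ y y' T) y) (Ici y) y :=
        hqfd.hasDerivAt.hasDerivWithinAt
      have h2 : HasDerivWithinAt (fun y' => (σ y y' T)^2 * y^2 * φ y y' T)
          (∫ s in (0:ℝ)..y, (y - s) * dR s y) (Ici y) y := by
        refine (hΞd.hasDerivWithinAt.congr ?_ ?_)
        · exact fun b hb => hEq b hb
        · exact hEq y self_mem_Ici
      have := (uniqueDiffOn_Ici y y self_mem_Ici).eq_deriv _ h1 h2
      rw [this, hBfdef]
    have hDBCy : ∀ y, S₀ < y → Af y + (1/2) * Bf y = μ * y * φ y y T := by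
      intro y hy
      have hy0 : (0:ℝ) ≤ y := le_of_lt (lt_trans hS₀ hy)
      have h := hDBC y T hy hT
      rw [hqf y hy, hdgFTC y hy y hy0 le_rfl, ← hμdef] at h
      rw [hAfdef]
      exact h
    -- derivative of k(y) = y * Ψ y
    have hkd : ∀ y : ℝ, HasDerivAt (fun y' => y' * Ψ y') (Ψ y + y * (Af y + Bf y)) y := by
      intro y
      have h := (hasDerivAt_id y).fun_mul (hΨd y)
      simpa using h
    -- continuity of Af, Bf, Ψ
    have hswap : Continuous fun q : ℝ × ℝ => ((q.2, q.1) : ℝ × ℝ) :=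
      continuous_snd.prodMk continuous_fst
    have hAf_cont : Continuous Af := by
      rw [hAfdef]
      apply continuous_parametric_intervalIntegral_of_continuous
        (f := fun (y : ℝ) (s : ℝ) => R s y) (μ := volume) ?_ continuous_id
      have h := hRc.comp hswap
      exact h
    have hBf_cont : Continuous Bf := by
      rw [hBfdef]
      apply continuous_parametric_intervalIntegral_of_continuous
        (f := fun (y : ℝ) (s : ℝ) => (y - s) * dR s y) (μ := volume) ?_ continuous_id
      have h : Continuous fun q : ℝ × ℝ => (q.1 - q.2) * dR q.2 q.1 :=
        (continuous_fst.sub continuous_snd).mul (hdRc.comp hswap)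
      exact h
    have hΨ_cont : Continuous Ψ := by
      rw [hΨdef]
      apply continuous_parametric_intervalIntegral_of_continuous
        (f := fun (y : ℝ) (s : ℝ) => (y - s) * R s y) (μ := volume) ?_ continuous_id
      have h : Continuous fun q : ℝ × ℝ => (q.1 - q.2) * R q.2 q.1 :=
        (continuous_fst.sub continuous_snd).mul (hRc.comp hswap)
      exact h
    -- fundamental theorem for k
    have hFTCk : ∫ y in S₀..B, (Ψ y + y * (Af y + Bf y)) = B * Ψ B - S₀ * Ψ S₀ :=
      intervalIntegral.integral_eq_sub_of_hasDerivAt (fun y _ => hkd y)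
        ((hΨ_cont.add (continuous_id'.mul (hAf_cont.add hBf_cont))).intervalIntegrable S₀ B)
    -- Ψ S₀ = 0 via the corner condition
    have hΨS₀ : Ψ S₀ = 0 := by
      have hΘc : Continuous fun b => ∫ s in (0:ℝ)..S₀, (S₀ - s) * R s b := by
        apply continuous_parametric_intervalIntegral_of_continuous
          (f := fun (b : ℝ) (s : ℝ) => (S₀ - s) * R s b) (μ := volume) ?_ continuous_const
        have h : Continuous fun q : ℝ × ℝ => (S₀ - q.2) * R q.2 q.1 :=
          (continuous_const.sub continuous_snd).mul (hRc.comp hswap)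
        exact h
      have hlim1 : Tendsto (fun b => ∫ s in (0:ℝ)..S₀, (S₀ - s) * R s b) (𝓝[>] S₀)
          (𝓝 (Ψ S₀)) := by
        have h := hΘc.continuousAt (x := S₀)
        rw [hΨdef]
        exact h.continuousWithinAt
      have hσS₀c : Continuous fun b => (σ S₀ b T)^2 * S₀^2 * φ S₀ b T := by
        have h1 : Continuous fun b => σ S₀ b T := (hσy S₀ T).continuous
        have h2 : Continuous fun b => φ S₀ b T := by fun_prop
        exact ((h1.pow 2).mul continuous_const).mul h2
      have hlim2 : Tendsto (fun b => ∫ s in (0:ℝ)..S₀, (S₀ - s) * R s b) (𝓝[>] S₀)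
          (𝓝 0) := by
        have hc : Tendsto (fun b => (σ S₀ b T)^2 * S₀^2 * φ S₀ b T) (𝓝[>] S₀)
            (𝓝 ((σ S₀ S₀ T)^2 * S₀^2 * φ S₀ S₀ T)) :=
          (hσS₀c.continuousAt).continuousWithinAt
        rw [hcorner T hT, mul_zero] at hc
        apply hc.congr'
        filter_upwards [self_mem_nhdsWithin] with b hb
        exact hgrep b hb S₀ hS₀.le (le_of_lt hb)
      exact tendsto_nhds_unique hlim1 hlim2
    have h0B : (0:ℝ) ≤ B := le_of_lt (lt_trans hS₀ hB)
    have hΨB : Ψ B = (σ B B T)^2 * B^2 * φ B B T := by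
      rw [hΨdef]
      exact (hgrep B hB B h0B le_rfl).symm
    -- ===== differentiation in T under the double integral =====
    have hJc : Continuous fun p : ℝ × ℝ => ∫ s in (0:ℝ)..p.1, s * φ s p.1 p.2 := by
      apply continuous_parametric_intervalIntegral_of_continuous
        (f := fun (p : ℝ × ℝ) (s : ℝ) => s * φ s p.1 p.2) (μ := volume) ?_ continuous_fst
      have h : Continuous fun q : (ℝ × ℝ) × ℝ => q.2 * φ q.2 q.1.1 q.1.2 := by fun_prop
      exact h
    have hinner_c : Continuous fun p : ℝ × ℝ => ∫ s in (0:ℝ)..p.1, s * phT (s, p.1, p.2) := by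
      apply continuous_parametric_intervalIntegral_of_continuous
        (f := fun (p : ℝ × ℝ) (s : ℝ) => s * phT (s, p.1, p.2)) (μ := volume) ?_ continuous_fst
      have h : Continuous fun q : (ℝ × ℝ) × ℝ => q.2 * phT (q.2, q.1.1, q.1.2) :=
        continuous_snd.mul (hphT_cont.comp (continuous_snd.prodMk
          ((continuous_fst.comp continuous_fst).prodMk (continuous_snd.comp continuous_fst))))
      exact h
    have hJd : ∀ y τ : ℝ, HasDerivAt (fun τ' => ∫ s in (0:ℝ)..y, s * φ s y τ')
        (∫ s in (0:ℝ)..y, s * phT (s,y,τ)) τ := by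
      intro y τ
      apply aux_S1 (W := fun s τ' => s * φ s y τ') (dW := fun s τ' => s * phT (s,y,τ'))
      · have h : Continuous fun p : ℝ × ℝ => p.1 * φ p.1 y p.2 := by fun_prop
        exact h
      · exact continuous_fst.mul (hphT_cont.comp (continuous_fst.prodMk
          (continuous_const.prodMk continuous_snd)))
      · exact fun s b => (hdt s y b).const_mul s
    have hId : HasDerivAt (fun τ => ∫ y in S₀..B, ∫ s in (0:ℝ)..y, s * φ s y τ)
        (∫ y in S₀..B, ∫ s in (0:ℝ)..y, s * phT (s,y,T)) T :=
      aux_S1 (W := fun y τ => ∫ s in (0:ℝ)..y, s * φ s y τ)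
        (dW := fun y τ => ∫ s in (0:ℝ)..y, s * phT (s,y,τ)) hJc hinner_c
        (fun s b => hJd s b) S₀ B T
    -- derivatives of the discount factors
    have hq0 : HasDerivAt (fun T' => ∫ u in (0:ℝ)..T', q u) (q T) T :=
      intervalIntegral.integral_hasDerivAt_right (hq.intervalIntegrable 0 T)
        (hq.stronglyMeasurableAtFilter volume (𝓝 T)) hq.continuousAt
    have hr0 : HasDerivAt (fun T' => ∫ u in (0:ℝ)..T', r u) (r T) T :=
      intervalIntegral.integral_hasDerivAt_right (hr.intervalIntegrable 0 T)
        (hr.stronglyMeasurableAtFilter volume (𝓝 T)) hr.continuousAt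
    have hQd : HasDerivAt (capQ q) (capQ q T * q T) T := by
      have h := hq0.exp
      exact h
    have hDd : HasDerivAt (disc r) (disc r T * (-(r T))) T := by
      have h := hr0.neg.exp
      exact h
    set I0 : ℝ := ∫ y in S₀..B, ∫ s in (0:ℝ)..y, s * φ s y T with hI0def
    set It : ℝ := ∫ y in S₀..B, ∫ s in (0:ℝ)..y, s * phT (s,y,T) with hItdef
    have hFeq : (fun T' => upOutCallTilde S₀ r q φ 0 B T')
        = fun T' => capQ q T' * (disc r T' * ∫ y in S₀..B, ∫ s in (0:ℝ)..y, s * φ s y T') := by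
      funext T'
      simp only [upOutCallTilde, upOutCall, max_eq_right hS₀.le, sub_zero]
    have hTot : HasDerivAt (fun T' => upOutCallTilde S₀ r q φ 0 B T')
        (capQ q T * q T * (disc r T * I0)
          + capQ q T * (disc r T * (-(r T)) * I0 + disc r T * It)) T := by
      rw [hFeq]
      exact hQd.mul (hDd.mul hId)
    -- ===== pointwise reduction using integration by parts =====
    have hparts : ∀ y : ℝ, (∫ s in (0:ℝ)..y, s * (φ s y T + s * phX (s,y,T)))
        = y^2 * φ y y T - ∫ s in (0:ℝ)..y, s * φ s y T := by
      intro y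
      have hvc : Continuous fun s => s * φ s y T := by fun_prop
      have hv'c : Continuous fun s => φ s y T + s * phX (s,y,T) := by
        have h1 : Continuous fun s => φ s y T := by fun_prop
        have h2 : Continuous fun s : ℝ => phX (s,y,T) :=
          hphX_cont.comp (continuous_id'.prodMk continuous_const)
        exact h1.add (continuous_id'.mul h2)
      have h := intervalIntegral.integral_mul_deriv_eq_deriv_mul_of_hasDerivAt (a := (0:ℝ))
        (b := y) (u := fun s => s) (v := fun s => s * φ s y T) (u' := fun _ => (1:ℝ))
        (v' := fun s => φ s y T + s * phX (s,y,T))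
        continuousOn_id hvc.continuousOn
        (fun x _ => hasDerivAt_id x) (fun x _ => hxφ x y T)
        (continuous_const.intervalIntegrable 0 y) (hv'c.intervalIntegrable 0 y)
      simp only [one_mul, zero_mul, mul_zero, sub_zero] at h
      rw [h]
      have : ∫ s in (0:ℝ)..y, s * φ s y T = ∫ s in (0:ℝ)..y, s * φ s y T := rfl
      ring
    have hptwise : ∀ y : ℝ, (∫ s in (0:ℝ)..y, s * phT (s,y,T))
        = (1/2) * (∫ s in (0:ℝ)..y, s * R s y)
          - μ * (y^2 * φ y y T - ∫ s in (0:ℝ)..y, s * φ s y T) := by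
      intro y
      have hvc : Continuous fun s => s * φ s y T := by fun_prop
      have hic2 : Continuous fun s => s * (φ s y T + s * phX (s,y,T)) := by
        have h1 : Continuous fun s => φ s y T := by fun_prop
        have h2 : Continuous fun s : ℝ => phX (s,y,T) :=
          hphX_cont.comp (continuous_id'.prodMk continuous_const)
        exact continuous_id'.mul (h1.add (continuous_id'.mul h2))
      have hsplit : ∀ s ∈ uIcc (0:ℝ) y, s * phT (s,y,T)
          = (1/2) * (s * R s y) - μ * (s * (φ s y T + s * phX (s,y,T))) := by
        intro s _
        simp only [hRdef]; ring
      rw [intervalIntegral.integral_congr hsplit,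
        intervalIntegral.integral_sub
          ((continuous_const.fun_mul (continuous_id'.fun_mul (hRsc y))).intervalIntegrable 0 y)
          ((continuous_const.fun_mul hic2).intervalIntegrable 0 y),
        intervalIntegral.integral_const_mul, intervalIntegral.integral_const_mul, hparts y]
    -- ===== main integral identity =====
    have hIint1 : Continuous fun y : ℝ => ∫ s in (0:ℝ)..y, s * phT (s,y,T) := by
      have h := hinner_c.comp (f := fun y : ℝ => (y, T))
        (continuous_id.prodMk continuous_const)
      simpa [Function.comp_def] using h
    have hIint0 : Continuous fun y : ℝ => ∫ s in (0:ℝ)..y, s * φ s y T := by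
      have h := hJc.comp (f := fun y : ℝ => (y, T))
        (continuous_id.prodMk continuous_const)
      simpa [Function.comp_def] using h
    have hmain : It - μ * I0 = -(1/2) * (B * Ψ B) := by
      have h1 : It - μ * I0
          = ∫ y in S₀..B, ((∫ s in (0:ℝ)..y, s * phT (s,y,T))
              - μ * ∫ s in (0:ℝ)..y, s * φ s y T) := by
        rw [hItdef, hI0def, ← intervalIntegral.integral_const_mul,
          ← intervalIntegral.integral_sub (hIint1.intervalIntegrable S₀ B)
            ((continuous_const.fun_mul hIint0).intervalIntegrable S₀ B)]
      have h2 : ∀ y, y ∈ Set.uIoc S₀ B → ((∫ s in (0:ℝ)..y, s * phT (s,y,T))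
          - μ * ∫ s in (0:ℝ)..y, s * φ s y T)
          = -(1/2) * (Ψ y + y * (Af y + Bf y)) := by
        intro y hy
        rw [uIoc_of_le hB.le] at hy
        have hyS := hy.1
        have hΨlin : Ψ y = y * Af y - ∫ s in (0:ℝ)..y, s * R s y := by
          simp only [hΨdef, hAfdef]
          have hcg : ∀ s ∈ uIcc (0:ℝ) y, (y - s) * R s y = y * R s y - s * R s y :=
            fun s _ => by ring
          rw [intervalIntegral.integral_congr hcg, intervalIntegral.integral_sub
            ((continuous_const.fun_mul (hRsc y)).intervalIntegrable 0 y)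
            ((continuous_id'.fun_mul (hRsc y)).intervalIntegrable 0 y),
            intervalIntegral.integral_const_mul]
        have hdbc := hDBCy y hyS
        have hpt := hptwise y
        linear_combination hpt + (1/2) * hΨlin + y * hdbc
      have h3 : (∫ y in S₀..B, ((∫ s in (0:ℝ)..y, s * phT (s,y,T))
            - μ * ∫ s in (0:ℝ)..y, s * φ s y T))
          = ∫ y in S₀..B, -(1/2) * (Ψ y + y * (Af y + Bf y)) :=
        intervalIntegral.integral_congr_ae (Filter.Eventually.of_forall h2)
      rw [h1, h3, intervalIntegral.integral_const_mul, hFTCk, hΨS₀]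
      ring
    -- ===== conclusion =====
    rw [hTot.deriv]
    rw [hΨB] at hmain
    linear_combination (capQ q T * disc r T) * hmain + (capQ q T * disc r T * I0) * hμdef
  refine ⟨part1, ?_⟩
  -- ============ PART 2 ============
  -- inner integrand slices
  have hwcont : Continuous fun p : ℝ × ℝ => ∫ x in p.1..p.2, (x - p.1) * φ x p.2 T := by
    have h1 : Continuous fun p : ℝ × ℝ => ∫ x in (0:ℝ)..p.2, (x - p.1) * φ x p.2 T := by
      apply continuous_parametric_intervalIntegral_of_continuous
        (f := fun (p : ℝ × ℝ) (x : ℝ) => (x - p.1) * φ x p.2 T) (μ := volume)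
      · have : Continuous fun q : (ℝ × ℝ) × ℝ => (q.2 - q.1.1) * φ q.2 q.1.2 T := by fun_prop
        exact this
      · exact continuous_snd
    have h2 : Continuous fun p : ℝ × ℝ => ∫ x in (0:ℝ)..p.1, (x - p.1) * φ x p.2 T := by
      apply continuous_parametric_intervalIntegral_of_continuous
        (f := fun (p : ℝ × ℝ) (x : ℝ) => (x - p.1) * φ x p.2 T) (μ := volume)
      · have : Continuous fun q : (ℝ × ℝ) × ℝ => (q.2 - q.1.1) * φ q.2 q.1.2 T := by fun_prop
        exact this
      · exact continuous_fst
    have heq : ∀ p : ℝ × ℝ, (∫ x in p.1..p.2, (x - p.1) * φ x p.2 T)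
        = (∫ x in (0:ℝ)..p.2, (x - p.1) * φ x p.2 T)
          - ∫ x in (0:ℝ)..p.1, (x - p.1) * φ x p.2 T := by
      intro p; exact aux_isub (by fun_prop) _ _
    simpa only [heq] using h1.fun_sub h2
  have hvcont : Continuous fun p : ℝ × ℝ => ∫ x in p.1..p.2, φ x p.2 T := by
    have h1 : Continuous fun p : ℝ × ℝ => ∫ x in (0:ℝ)..p.2, φ x p.2 T := by
      apply continuous_parametric_intervalIntegral_of_continuous
        (f := fun (p : ℝ × ℝ) (x : ℝ) => φ x p.2 T) (μ := volume)
      · have : Continuous fun q : (ℝ × ℝ) × ℝ => φ q.2 q.1.2 T := by fun_prop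
        exact this
      · exact continuous_snd
    have h2 : Continuous fun p : ℝ × ℝ => ∫ x in (0:ℝ)..p.1, φ x p.2 T := by
      apply continuous_parametric_intervalIntegral_of_continuous
        (f := fun (p : ℝ × ℝ) (x : ℝ) => φ x p.2 T) (μ := volume)
      · have : Continuous fun q : (ℝ × ℝ) × ℝ => φ q.2 q.1.2 T := by fun_prop
        exact this
      · exact continuous_fst
    have heq : ∀ p : ℝ × ℝ, (∫ x in p.1..p.2, φ x p.2 T)
        = (∫ x in (0:ℝ)..p.2, φ x p.2 T) - ∫ x in (0:ℝ)..p.1, φ x p.2 T := by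
      intro p; exact aux_isub (by fun_prop) _ _
    simpa only [heq] using h1.fun_sub h2
  -- derivative of w in K
  have hwderiv : ∀ y K : ℝ, HasDerivAt (fun K' => ∫ x in K'..y, (x - K') * φ x y T)
      (-(∫ x in K..y, φ x y T)) K := by
    intro y K
    have hWc : Continuous fun p : ℝ × ℝ => (p.2 - p.1) * φ p.2 y T := by fun_prop
    have hdWc : Continuous fun p : ℝ × ℝ => -φ p.2 y T := by fun_prop
    have hd : ∀ s b : ℝ, HasDerivAt (fun b' => (s - b') * φ s y T) (-φ s y T) b := by
      intro s b
      simpa using ((hasDerivAt_id b).const_sub s).mul_const (φ s y T)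
    have h1 : HasDerivAt (fun K' => ∫ x in (0:ℝ)..y, (x - K') * φ x y T)
        (∫ x in (0:ℝ)..y, -φ x y T) K :=
      aux_S1' (W := fun b' s => (s - b') * φ s y T) (dW := fun b s => -φ s y T)
        hWc hdWc (fun s b => hd s b) 0 y K
    have h2 : HasDerivAt (fun K' => ∫ x in (0:ℝ)..K', (x - K') * φ x y T)
        ((∫ x in (0:ℝ)..K, -φ x y T) + (K - K) * φ K y T) K :=
      aux_diag' (W := fun b' s => (s - b') * φ s y T) (dW := fun b s => -φ s y T)
        hWc hdWc (fun s b => hd s b) 0 K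
    have h := h1.sub h2
    have heq : ∀ K' : ℝ, (∫ x in K'..y, (x - K') * φ x y T)
        = (∫ x in (0:ℝ)..y, (x - K') * φ x y T) - ∫ x in (0:ℝ)..K', (x - K') * φ x y T := by
      intro K'; exact aux_isub (by fun_prop) _ _
    have h' := h.congr_of_eventuallyEq (Filter.Eventually.of_forall fun K' => (heq K'))
    have hval : (∫ x in (0:ℝ)..y, -φ x y T) - ((∫ x in (0:ℝ)..K, -φ x y T) + (K - K) * φ K y T)
        = -(∫ x in K..y, φ x y T) := by
      simp only [sub_self, zero_mul, add_zero, intervalIntegral.integral_neg]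
      rw [aux_isub (f := fun x => φ x y T) (by fun_prop) K y]
      ring
    rwa [hval] at h'
  -- derivative of v in K
  have hvderiv : ∀ y K : ℝ, HasDerivAt (fun K' => ∫ x in K'..y, φ x y T) (-φ K y T) K := by
    intro y K
    have hc : Continuous fun x => φ x y T := by fun_prop
    have h2 : HasDerivAt (fun K' => ∫ x in (0:ℝ)..K', φ x y T) (φ K y T) K :=
      intervalIntegral.integral_hasDerivAt_right (hc.intervalIntegrable 0 K)
        (hc.stronglyMeasurableAtFilter volume (𝓝 K)) hc.continuousAt
    have h := (hasDerivAt_const K (∫ x in (0:ℝ)..y, φ x y T)).sub h2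
    have heq : ∀ K' : ℝ, (∫ x in K'..y, φ x y T)
        = (∫ x in (0:ℝ)..y, φ x y T) - ∫ x in (0:ℝ)..K', φ x y T := fun K' =>
      aux_isub hc _ _
    have h' := h.congr_of_eventuallyEq (Filter.Eventually.of_forall fun K' => (heq K'))
    simpa using h'
  -- derivative in K of Z(K) = ∫ y in K..B', w K y
  have hZderiv : ∀ B' K : ℝ, HasDerivAt
      (fun K' => ∫ y in K'..B', ∫ x in K'..y, (x - K') * φ x y T)
      (-(∫ y in K..B', ∫ x in K..y, φ x y T)) K := by
    intro B' K
    have hdWc : Continuous fun p : ℝ × ℝ => -(∫ x in p.1..p.2, φ x p.2 T) := hvcont.neg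
    have hd : ∀ s b : ℝ, HasDerivAt (fun b' => ∫ x in b'..s, (x - b') * φ x s T)
        (-(∫ x in b..s, φ x s T)) b := fun s b => hwderiv s b
    have h1 : HasDerivAt (fun K' => ∫ y in (0:ℝ)..B', ∫ x in K'..y, (x - K') * φ x y T)
        (∫ y in (0:ℝ)..B', -(∫ x in K..y, φ x y T)) K :=
      aux_S1' (W := fun b' s => ∫ x in b'..s, (x - b') * φ x s T)
        (dW := fun b s => -(∫ x in b..s, φ x s T)) hwcont hdWc hd 0 B' K
    have h2 : HasDerivAt (fun K' => ∫ y in (0:ℝ)..K', ∫ x in K'..y, (x - K') * φ x y T)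
        ((∫ y in (0:ℝ)..K, -(∫ x in K..y, φ x y T)) + ∫ x in K..K, (x - K) * φ x K T) K :=
      aux_diag' (W := fun b' s => ∫ x in b'..s, (x - b') * φ x s T)
        (dW := fun b s => -(∫ x in b..s, φ x s T)) hwcont hdWc hd 0 K
    have h := h1.sub h2
    have hwK : ∀ K' : ℝ, Continuous fun y => ∫ x in K'..y, (x - K') * φ x y T := by
      intro K'
      have h := hwcont.comp (f := fun y : ℝ => (K', y)) (continuous_const.prodMk continuous_id)
      simpa [Function.comp_def] using h
    have heq : ∀ K' : ℝ, (∫ y in K'..B', ∫ x in K'..y, (x - K') * φ x y T)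
        = (∫ y in (0:ℝ)..B', ∫ x in K'..y, (x - K') * φ x y T)
          - ∫ y in (0:ℝ)..K', ∫ x in K'..y, (x - K') * φ x y T := fun K' =>
      aux_isub (hwK K') _ _
    have h' := h.congr_of_eventuallyEq (Filter.Eventually.of_forall fun K' => (heq K'))
    have hvK : Continuous fun y => ∫ x in K..y, φ x y T := by
      have h := hvcont.comp (f := fun y : ℝ => (K, y)) (continuous_const.prodMk continuous_id)
      simpa [Function.comp_def] using h
    have hval : (∫ y in (0:ℝ)..B', -(∫ x in K..y, φ x y T))
          - ((∫ y in (0:ℝ)..K, -(∫ x in K..y, φ x y T)) + ∫ x in K..K, (x - K) * φ x K T)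
        = -(∫ y in K..B', ∫ x in K..y, φ x y T) := by
      rw [intervalIntegral.integral_same]
      rw [intervalIntegral.integral_neg, intervalIntegral.integral_neg]
      rw [aux_isub hvK K B']
      ring
    rwa [hval] at h'
  -- first strike-derivative of the price, for K > S₀
  have hcderiv : ∀ B' K : ℝ, S₀ < K →
      deriv (fun K' => upOutCallTilde S₀ r q φ K' B' T) K
        = capQ q T * (disc r T * (-(∫ y in K..B', ∫ x in K..y, φ x y T))) := by
    intro B' K hK
    have heq : (fun K' => upOutCallTilde S₀ r q φ K' B' T) =ᶠ[𝓝 K]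
        (fun K' => capQ q T * (disc r T * ∫ y in K'..B', ∫ x in K'..y, (x - K') * φ x y T)) := by
      filter_upwards [isOpen_Ioi.mem_nhds hK] with K' hK'
      simp only [upOutCallTilde, upOutCall, max_eq_left (le_of_lt (mem_Ioi.mp hK'))]
    rw [heq.deriv_eq]
    exact (((hZderiv B' K).const_mul (disc r T)).const_mul (capQ q T)).deriv
  -- second strike-derivative at K = B
  have hc2 : ∀ B' : ℝ, deriv (deriv (fun K' => upOutCallTilde S₀ r q φ K' B' T)) B
      = capQ q T * (disc r T * ∫ y in B..B', φ B y T) := by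
    intro B'
    have heq : (deriv (fun K' => upOutCallTilde S₀ r q φ K' B' T)) =ᶠ[𝓝 B]
        (fun K => capQ q T * (disc r T * (-(∫ y in K..B', ∫ x in K..y, φ x y T)))) := by
      filter_upwards [isOpen_Ioi.mem_nhds hB] with K hK
      exact hcderiv B' K hK
    rw [heq.deriv_eq]
    -- differentiate K ↦ -∫ y in K..B', v K y at B
    have hdWc : Continuous fun p : ℝ × ℝ => -φ p.1 p.2 T := by fun_prop
    have hd : ∀ s b : ℝ, HasDerivAt (fun b' => ∫ x in b'..s, φ x s T) (-φ b s T) b :=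
      fun s b => hvderiv s b
    have h1 : HasDerivAt (fun K => ∫ y in (0:ℝ)..B', ∫ x in K..y, φ x y T)
        (∫ y in (0:ℝ)..B', -φ B y T) B :=
      aux_S1' (W := fun b s => ∫ x in b..s, φ x s T)
        (dW := fun b s => -φ b s T) hvcont hdWc hd 0 B' B
    have h2 : HasDerivAt (fun K => ∫ y in (0:ℝ)..K, ∫ x in K..y, φ x y T)
        ((∫ y in (0:ℝ)..B, -φ B y T) + ∫ x in B..B, φ x B T) B :=
      aux_diag' (W := fun b s => ∫ x in b..s, φ x s T)
        (dW := fun b s => -φ b s T) hvcont hdWc hd 0 B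
    have h := (h1.sub h2).neg
    have hvK : ∀ K : ℝ, Continuous fun y => ∫ x in K..y, φ x y T := by
      intro K
      have h := hvcont.comp (f := fun y : ℝ => (K, y)) (continuous_const.prodMk continuous_id)
      simpa [Function.comp_def] using h
    have heq2 : ∀ K : ℝ, -(∫ y in K..B', ∫ x in K..y, φ x y T)
        = -((∫ y in (0:ℝ)..B', ∫ x in K..y, φ x y T)
            - ∫ y in (0:ℝ)..K, ∫ x in K..y, φ x y T) := fun K => by
      rw [aux_isub (hvK K) K B']
    have h' : HasDerivAt (fun K => -(∫ y in K..B', ∫ x in K..y, φ x y T))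
        (-((∫ y in (0:ℝ)..B', -φ B y T)
          - ((∫ y in (0:ℝ)..B, -φ B y T) + ∫ x in B..B, φ x B T))) B := by
      refine h.congr_of_eventuallyEq (Filter.Eventually.of_forall fun K => ?_)
      exact heq2 K
    have hval : -((∫ y in (0:ℝ)..B', -φ B y T)
          - ((∫ y in (0:ℝ)..B, -φ B y T) + ∫ x in B..B, φ x B T))
        = ∫ y in B..B', φ B y T := by
      rw [intervalIntegral.integral_same, intervalIntegral.integral_neg,
        intervalIntegral.integral_neg, aux_isub (f := fun y => φ B y T) (by fun_prop) B B']
      ring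
    rw [hval] at h'
    exact ((h'.const_mul (disc r T)).const_mul (capQ q T)).deriv
  -- outer barrier derivative
  have hX : deriv (fun B' => deriv (deriv (fun K' => upOutCallTilde S₀ r q φ K' B' T)) B) B
      = capQ q T * (disc r T * φ B B T) := by
    have heq : (fun B' => deriv (deriv (fun K' => upOutCallTilde S₀ r q φ K' B' T)) B)
        = fun B' => capQ q T * (disc r T * ∫ y in B..B', φ B y T) := funext fun B' => hc2 B'
    rw [heq]
    have hc : Continuous fun y => φ B y T := by fun_prop
    have hFTC : HasDerivAt (fun B' => ∫ y in B..B', φ B y T) (φ B B T) B :=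
      intervalIntegral.integral_hasDerivAt_right (hc.intervalIntegrable B B)
        (hc.stronglyMeasurableAtFilter volume (𝓝 B)) hc.continuousAt
    exact ((hFTC.const_mul (disc r T)).const_mul (capQ q T)).deriv
  rw [part1, hX]
  ring
end

section
/- For all 0 < K < B with B > S₀ and all T ≥ 0, the first-order derivatives of the up-and-out call price satisfy ∂C/∂K (K,B,T) = − D(T) ∫_{max(K,S₀)}^B ∫_K^y φ(x,y,T) dx dy and ∂C/∂B (K,B,T) = D(T) ∫_K^B (x−K) φ(x,B,T) dx. -/
open MeasureTheory Real Filter intervalIntegral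

/-- Continuity of a parametric interval integral with both endpoints varying. -/
lemma contPI {h : (ℝ × ℝ) → ℝ → ℝ} (hh : Continuous fun q : (ℝ × ℝ) × ℝ => h q.1 q.2) :
    Continuous fun p : ℝ × ℝ => ∫ x in p.1..p.2, h p x := by
  have hint : ∀ (p : ℝ × ℝ) (u v : ℝ), IntervalIntegrable (h p) volume u v := fun p u v =>
    (hh.comp (continuous_const.prodMk continuous_id)).intervalIntegrable u v
  have h1 : Continuous fun p : ℝ × ℝ => ∫ x in (0:ℝ)..p.2, h p x :=
    continuous_parametric_intervalIntegral_of_continuous hh continuous_snd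
  have h2 : Continuous fun p : ℝ × ℝ => ∫ x in (0:ℝ)..p.1, h p x :=
    continuous_parametric_intervalIntegral_of_continuous hh continuous_fst
  have : (fun p : ℝ × ℝ => ∫ x in p.1..p.2, h p x)
      = fun p : ℝ × ℝ => (∫ x in (0:ℝ)..p.2, h p x) - ∫ x in (0:ℝ)..p.1, h p x := by
    funext p
    rw [integral_interval_sub_left (hint p 0 p.2) (hint p 0 p.1)]
  rw [this]
  exact h1.sub h2


set_option maxHeartbeats 1000000 in
/-- For all `0 < K < B` with `B > S₀` and all `T ≥ 0`,
`∂C/∂K (K,B,T) = - D(T) ∫_{max(K,S₀)}^B ∫_K^y φ(x,y,T) dx dy` and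
`∂C/∂B (K,B,T) = D(T) ∫_K^B (x-K) φ(x,B,T) dx`. -/
theorem stmt_16 (S₀ : ℝ) (hS₀ : 0 < S₀) (r : ℝ → ℝ) (hr : Continuous r)
    (φ : ℝ → ℝ → ℝ → ℝ)
    (hφcont : ∀ t : ℝ, Continuous fun p : ℝ × ℝ => φ p.1 p.2 t)
    (hφbd : ∀ s : Set (ℝ × ℝ × ℝ), IsCompact s → ∃ M : ℝ, ∀ p ∈ s, |φ p.1 p.2.1 p.2.2| ≤ M) :
    ∀ K B T : ℝ, 0 < K → K < B → S₀ < B → 0 ≤ T →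
      (deriv (fun K' => upOutCall S₀ r φ K' B T) K
          = -(disc r T) * ∫ y in (max K S₀)..B, ∫ x in K..y, φ x y T) ∧
      (deriv (fun B' => upOutCall S₀ r φ K B' T) B
          = disc r T * ∫ x in K..B, (x - K) * φ x B T) := by
  intro K B T hK hKB hSB hT
  have hf : Continuous fun p : ℝ × ℝ => φ p.1 p.2 T := hφcont T
  have haB : max K S₀ < B := max_lt hKB hSB
  have haK : K ≤ max K S₀ := le_max_left _ _
  have hφxy : Continuous fun q : (ℝ × ℝ) × ℝ => φ q.2 q.1.2 T :=
    hf.comp (continuous_snd.prodMk continuous_fst.snd)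
  have hgcont : Continuous fun p : ℝ × ℝ => ∫ x in p.1..p.2, (x - p.1) * φ x p.2 T :=
    contPI ((continuous_snd.sub continuous_fst.fst).mul hφxy)
  have hg₂cont : Continuous fun p : ℝ × ℝ => ∫ x in p.1..p.2, φ x p.2 T := contPI hφxy
  have hgscont : ∀ s : ℝ, Continuous fun y => ∫ x in s..y, (x - s) * φ x y T := by
    intro s
    have h := hgcont.comp (continuous_const.prodMk continuous_id :
      Continuous fun y : ℝ => ((s, y) : ℝ × ℝ))
    simpa [Function.comp_def] using h
  have hg₂scont : ∀ s : ℝ, Continuous fun y => ∫ x in s..y, φ x y T := by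
    intro s
    have h := hg₂cont.comp (continuous_const.prodMk continuous_id :
      Continuous fun y : ℝ => ((s, y) : ℝ × ℝ))
    simpa [Function.comp_def] using h
  have hφx : ∀ y : ℝ, Continuous fun x => φ x y T := by
    intro y
    have h := hf.comp (continuous_id.prodMk continuous_const :
      Continuous fun x : ℝ => ((x, y) : ℝ × ℝ))
    simpa [Function.comp_def] using h
  constructor
  · -- K-derivative
    have hsplit : ∀ s : ℝ, (∫ y in (max s S₀)..B, ∫ x in s..y, (x - s) * φ x y T)
        = (∫ y in (max s S₀)..(max K S₀), ∫ x in s..y, (x - s) * φ x y T)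
          + ∫ y in (max K S₀)..B, ∫ x in s..y, (x - s) * φ x y T := fun s =>
      (integral_add_adjacent_intervals ((hgscont s).intervalIntegrable _ _)
        ((hgscont s).intervalIntegrable _ _)).symm
    -- the fixed-limits part, by differentiation under the integral sign
    have hFder : HasDerivAt (fun s => ∫ y in (max K S₀)..B, ∫ x in s..y, (x - s) * φ x y T)
        (∫ y in (max K S₀)..B, -(∫ x in K..y, φ x y T)) K := by
      obtain ⟨M, hM⟩ := IsCompact.exists_bound_of_continuousOn
        ((isCompact_Icc (a := K-1) (b := max (K+1) B)).prod
          (isCompact_Icc (a := K-1) (b := max (K+1) B))) hf.continuousOn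
      have hM0 : 0 ≤ M := le_trans (norm_nonneg _) (hM (K, K)
        ⟨⟨by linarith, le_trans (by linarith) (le_max_left (K+1) B)⟩,
         ⟨by linarith, le_trans (by linarith) (le_max_left (K+1) B)⟩⟩)
      have hdiff : ∀ y ∈ Set.uIoc (max K S₀) B, ∀ s ∈ Metric.ball K 1,
          HasDerivAt (fun s' => ∫ x in s'..y, (x - s') * φ x y T)
            (-(∫ x in s..y, φ x y T)) s := by
        intro y _ s _
        have h1 : HasDerivAt (fun s' => ∫ x in s'..y, x * φ x y T) (-(s * φ s y T)) s :=
          integral_hasDerivAt_left ((continuous_id.mul (hφx y)).intervalIntegrable _ _)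
            ((continuous_id.mul (hφx y)).stronglyMeasurableAtFilter _ _)
            (continuous_id.mul (hφx y)).continuousAt
        have h2 : HasDerivAt (fun s' => ∫ x in s'..y, φ x y T) (-(φ s y T)) s :=
          integral_hasDerivAt_left ((hφx y).intervalIntegrable _ _)
            ((hφx y).stronglyMeasurableAtFilter _ _) (hφx y).continuousAt
        have h3 : HasDerivAt (fun s' => s' * ∫ x in s'..y, φ x y T)
            (1 * (∫ x in s..y, φ x y T) + s * -(φ s y T)) s := (hasDerivAt_id s).mul h2
        have h4 := h1.fun_sub h3
        have hrw : (fun s' => (∫ x in s'..y, x * φ x y T) - s' * ∫ x in s'..y, φ x y T)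
            = fun s' => ∫ x in s'..y, (x - s') * φ x y T := by
          funext s'
          have hI1 : IntervalIntegrable (fun x => x * φ x y T) volume s' y :=
            (continuous_id.mul (hφx y)).intervalIntegrable _ _
          have hI2 : IntervalIntegrable (fun x => s' * φ x y T) volume s' y :=
            (continuous_const.mul (hφx y)).intervalIntegrable _ _
          rw [← intervalIntegral.integral_const_mul, ← integral_sub hI1 hI2]
          congr 1
          funext x
          ring
        rw [hrw] at h4
        refine h4.congr_deriv ?_
        ring
      have hbd : ∀ y ∈ Set.uIoc (max K S₀) B, ∀ s ∈ Metric.ball K 1,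
          ‖-(∫ x in s..y, φ x y T)‖ ≤ M * ((max (K+1) B) - (K - 1)) := by
        intro y hy s hs
        rw [norm_neg]
        have hy' : y ∈ Set.Ioc (max K S₀) B := by rwa [Set.uIoc_of_le haB.le] at hy
        have hs' : |s - K| < 1 := by simpa [Real.dist_eq] using hs
        obtain ⟨hs1, hs2⟩ := abs_lt.mp hs'
        have hsmem : s ∈ Set.Icc (K-1) (max (K+1) B) :=
          ⟨by linarith, le_trans (by linarith) (le_max_left _ _)⟩
        have hymem : y ∈ Set.Icc (K-1) (max (K+1) B) :=
          ⟨by linarith [le_trans haK hy'.1.le], le_trans hy'.2 (le_max_right _ _)⟩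
        have hbound : ∀ x ∈ Set.uIoc s y, ‖φ x y T‖ ≤ M := by
          intro x hx
          have hxm : x ∈ Set.Icc (K-1) (max (K+1) B) :=
            Set.uIcc_subset_Icc hsmem hymem (Set.uIoc_subset_uIcc hx)
          exact hM (x, y) ⟨hxm, hymem⟩
        calc ‖∫ x in s..y, φ x y T‖ ≤ M * |y - s| := norm_integral_le_of_norm_le_const hbound
          _ ≤ M * ((max (K+1) B) - (K - 1)) := by
              apply mul_le_mul_of_nonneg_left _ hM0
              rw [abs_sub_le_iff]
              exact ⟨by linarith [hymem.1, hymem.2, hsmem.1, hsmem.2],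
                by linarith [hymem.1, hymem.2, hsmem.1, hsmem.2]⟩
      exact (intervalIntegral.hasDerivAt_integral_of_dominated_loc_of_deriv_le
        (F := fun s y => ∫ x in s..y, (x - s) * φ x y T)
        (F' := fun s y => -(∫ x in s..y, φ x y T))
        (bound := fun _ => M * ((max (K+1) B) - (K - 1)))
        (Metric.ball_mem_nhds K zero_lt_one)
        (Eventually.of_forall fun s => ((hgscont s).aestronglyMeasurable).restrict)
        ((hgscont K).intervalIntegrable _ _)
        (((hg₂scont K).neg.aestronglyMeasurable).restrict)
        (Eventually.of_forall hbd)
        intervalIntegrable_const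
        (Eventually.of_forall hdiff)).2
    -- the moving-boundary part has derivative 0
    have hEder : HasDerivAt
        (fun s => ∫ y in (max s S₀)..(max K S₀), ∫ x in s..y, (x - s) * φ x y T) 0 K := by
      rcases lt_or_ge K S₀ with hKS | hSK
      · have hev : (fun s => ∫ y in (max s S₀)..(max K S₀), ∫ x in s..y, (x - s) * φ x y T)
            =ᶠ[nhds K] fun _ => (0:ℝ) := by
          have hev' : ∀ᶠ s in nhds K, s < S₀ :=
            Filter.Tendsto.eventually_lt_const hKS Filter.tendsto_id
          filter_upwards [hev'] with s hs
          rw [max_eq_right hs.le, max_eq_right hKS.le, integral_same]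
        exact (hasDerivAt_const K (0:ℝ)).congr_of_eventuallyEq hev
      · have haK' : max K S₀ = K := max_eq_left hSK
        rw [hasDerivAt_iff_isLittleO]
        have hEK : (∫ y in (max K S₀)..(max K S₀), ∫ x in K..y, (x - K) * φ x y T) = 0 :=
          integral_same
        rw [Asymptotics.isLittleO_iff]
        intro ε hε
        have hcont : ContinuousAt (fun p : ℝ × ℝ => ∫ x in p.1..p.2, (x - p.1) * φ x p.2 T)
            (K, K) := hgcont.continuousAt
        have hgKK : (∫ x in K..K, (x - K) * φ x K T) = 0 := integral_same
        rw [Metric.continuousAt_iff] at hcont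
        obtain ⟨δ, hδ, hδ'⟩ := hcont ε hε
        rw [Metric.eventually_nhds_iff]
        refine ⟨δ, hδ, fun s hsδ => ?_⟩
        have hsK : |s - K| < δ := by simpa [Real.dist_eq] using hsδ
        have hmax : |max s S₀ - K| ≤ |s - K| := by
          have h := abs_max_sub_max_le_abs s K S₀
          rwa [haK'] at h
        have hgsmall : ∀ y ∈ Set.uIoc (max s S₀) (max K S₀),
            ‖∫ x in s..y, (x - s) * φ x y T‖ ≤ ε := by
          intro y hy
          have hy' : y ∈ Set.uIcc (max s S₀) K := by
            rw [← haK']; exact Set.uIoc_subset_uIcc hy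
          have hyK : |K - y| ≤ |K - max s S₀| := Set.abs_sub_right_of_mem_uIcc hy'
          have hdist : dist ((s, y) : ℝ × ℝ) ((K, K) : ℝ × ℝ) < δ := by
            rw [Prod.dist_eq]
            apply max_lt
            · simpa [Real.dist_eq] using hsK
            · rw [Real.dist_eq, abs_sub_comm]
              calc |K - y| ≤ |K - max s S₀| := hyK
                _ = |max s S₀ - K| := abs_sub_comm _ _
                _ ≤ |s - K| := hmax
                _ < δ := hsK
          have h := hδ' hdist
          rw [hgKK, dist_zero_right] at h
          exact h.le
        have hbnd := norm_integral_le_of_norm_le_const hgsmall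
        simp only [hEK, smul_zero, sub_zero, zero_smul]
        calc ‖∫ y in (max s S₀)..(max K S₀), ∫ x in s..y, (x - s) * φ x y T‖
            ≤ ε * |max K S₀ - max s S₀| := hbnd
          _ ≤ ε * ‖s - K‖ := by
              apply mul_le_mul_of_nonneg_left _ hε.le
              rw [Real.norm_eq_abs, abs_sub_comm (max K S₀) _, haK']
              exact hmax
    -- combine
    have hcomb := (hEder.fun_add hFder).const_mul (disc r T)
    have hfun : (fun K' => upOutCall S₀ r φ K' B T)
        = fun s => disc r T * ((∫ y in (max s S₀)..(max K S₀), ∫ x in s..y, (x - s) * φ x y T)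
          + ∫ y in (max K S₀)..B, ∫ x in s..y, (x - s) * φ x y T) := by
      funext s
      rw [upOutCall, hsplit s]
    rw [hfun, hcomb.deriv, intervalIntegral.integral_neg]
    ring
  · -- B-derivative
    have hder : HasDerivAt (fun u => ∫ y in (max K S₀)..u, ∫ x in K..y, (x - K) * φ x y T)
        (∫ x in K..B, (x - K) * φ x B T) B :=
      integral_hasDerivAt_right ((hgscont K).intervalIntegrable _ _)
        ((hgscont K).stronglyMeasurableAtFilter _ _) (hgscont K).continuousAt
    have hfun : (fun B' => upOutCall S₀ r φ K B' T)
        = fun u => disc r T * ∫ y in (max K S₀)..u, ∫ x in K..y, (x - K) * φ x y T := by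
      funext u; rw [upOutCall]
    rw [hfun, (hder.const_mul (disc r T)).deriv]
end
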